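/- arXiv:1301.0237 — 5 statements merged into one kernel-verified Lean document; each statement's English description precedes it below -/
import Mathlib

section
/- For every λ > 0 and every integer j ≥ 0, one has 2 ∫_0^1 r J_j(λr)² dr = (4/λ²) Σ_{p=0}^∞ (j + 1 + 2p) J_{j+1+2p}(λ)². Equivalently, the squared norm of the Fourier-Bessel function b_{λ,j} on the closed unit disk Ω with respect to the normalized uniform measure ν_0 = dx/π satisfies ‖b_{λ,j}‖²_{L²(ν_0)} = (4/λ²) Σ_{p=0}^∞ (j + 1 + 2p) J_{j+1+2p}(λ)². -/
open MeasureTheory Metric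

/-- Bessel function of the first kind of nonnegative integer order. -/
noncomputable def besselJnat (n : ℕ) (x : ℝ) : ℝ :=
  ∑' k : ℕ, ((-1 : ℝ) ^ k / ((Nat.factorial k : ℝ) * (Nat.factorial (n + k) : ℝ))) *
    (x / 2) ^ (n + 2 * k)

/-- Bessel function of the first kind of integer order, with `J_{-n} = (-1)^n J_n`. -/
noncomputable def besselJ (n : ℤ) (x : ℝ) : ℝ :=
  if 0 ≤ n then besselJnat n.toNat x else (-1 : ℝ) ^ n.natAbs * besselJnat n.natAbs x

/-- The Fourier-Bessel function `b_{λ,j}(x) = e^{ijθ} J_j(λ r)` on `ℝ² ≃ ℂ`. -/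
noncomputable def fourierBessel (lam : ℝ) (j : ℤ) (z : ℂ) : ℂ :=
  Complex.exp (Complex.I * j * z.arg) * besselJ j (lam * ‖z‖)

/-- Normalized uniform measure `dx/π` on the closed unit disk. -/
noncomputable def unifDisk : Measure ℂ :=
  (ENNReal.ofReal Real.pi)⁻¹ • (volume.restrict (closedBall (0 : ℂ) 1))

/-- Normalized arc-length measure `dσ/(2π)` on the unit circle. -/
noncomputable def circleUnif : Measure ℂ :=
  (ENNReal.ofReal (2 * Real.pi))⁻¹ •
    Measure.map (fun θ : ℝ => Complex.exp (θ * Complex.I))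
      (volume.restrict (Set.Ioc (0 : ℝ) (2 * Real.pi)))

/-- The mixed measure `ν_α = (1-α) dx/π + α dσ/(2π)`. -/
noncomputable def nuAlpha (a : ℝ) : Measure ℂ :=
  ENNReal.ofReal (1 - a) • unifDisk + ENNReal.ofReal a • circleUnif

/-- Squared `L²(ν)` norm of a function. -/
noncomputable def l2normSq (ν : Measure ℂ) (f : ℂ → ℂ) : ℝ :=
  ∫ z, ‖f z‖ ^ 2 ∂ν

/-- A measure on `ℂ` invariant under every rotation about the origin. -/
def RotationInvariant (ν : Measure ℂ) : Prop :=
  ∀ θ : ℝ, Measure.map (fun z : ℂ => Complex.exp (θ * Complex.I) * z) ν = ν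

/-- Plane wave `e^{i k·x}` with wave vector `k = λ(cos φ, sin φ)`. -/
noncomputable def planeWaveFn (lam phi : ℝ) (z : ℂ) : ℂ :=
  Complex.exp (Complex.I * ((lam * (Real.cos phi * z.re + Real.sin phi * z.im) : ℝ) : ℂ))

/-- Angle `φ_l = 2πl/(2m+1)`. -/
noncomputable def phiAngle (m : ℕ) (l : ℤ) : ℝ := 2 * Real.pi * l / (2 * m + 1)

/-- Discretized plane-wave combination
`b_j^m = (1/((2m+1) i^j)) Σ_{l=-m}^m e^{ijφ_l} e_{k_l}`. -/
noncomputable def pwave (lam : ℝ) (m : ℕ) (j : ℤ) (z : ℂ) : ℂ :=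
  (1 / (((2 * m + 1 : ℕ) : ℂ) * Complex.I ^ j)) *
    ∑ l ∈ Finset.Icc (-(m : ℤ)) (m : ℤ),
      Complex.exp (Complex.I * j * ((phiAngle m l : ℝ) : ℂ)) * planeWaveFn lam (phiAngle m l) z

/-- The quantity `K(V_m^b, ν)` for the Fourier-Bessel space on the unit disk. -/
noncomputable def Kb (lam : ℝ) (ν : Measure ℂ) (m : ℕ) : ℝ :=
  ⨆ z : closedBall (0 : ℂ) 1,
    ∑ j ∈ Finset.Icc (-(m : ℤ)) (m : ℤ),
      ‖fourierBessel lam j ↑z‖ ^ 2 / l2normSq ν (fourierBessel lam j)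

/-- The quantity `K(V_m^e, ν)` for the plane-wave space on the unit disk. -/
noncomputable def Ke (lam : ℝ) (ν : Measure ℂ) (m : ℕ) : ℝ :=
  ⨆ z : closedBall (0 : ℂ) 1,
    ∑ j ∈ Finset.Icc (-(m : ℤ)) (m : ℤ),
      ‖pwave lam m j ↑z‖ ^ 2 / l2normSq ν (pwave lam m j)

/-- Laplacian of a function on `ℝ² ≃ ℂ`. -/
noncomputable def laplacian2 (u : ℂ → ℂ) (z : ℂ) : ℂ :=
  fderiv ℝ (fun w => fderiv ℝ u w 1) z 1 + fderiv ℝ (fun w => fderiv ℝ u w Complex.I) z Complex.I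

namespace BesselAux

noncomputable def Jterm (n k : ℕ) (x : ℝ) : ℝ :=
  ((-1 : ℝ) ^ k / ((Nat.factorial k : ℝ) * (Nat.factorial (n + k) : ℝ))) * (x / 2) ^ (n + 2 * k)

lemma besselJnat_eq (n : ℕ) (x : ℝ) : besselJnat n x = ∑' k, Jterm n k x := rfl

lemma fact_pos (k : ℕ) : (0:ℝ) < (Nat.factorial k : ℝ) := by
  exact_mod_cast k.factorial_pos

lemma abs_Jterm_le (n k : ℕ) {x R : ℝ} (hx : |x| ≤ R) :
    |Jterm n k x| ≤ (R/2)^n / n.factorial * (((R/2)^2)^k / k.factorial) := by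
  have hR : 0 ≤ R := le_trans (abs_nonneg x) hx
  have h1 : |Jterm n k x| = (|x|/2)^(n+2*k) / (k.factorial * (n+k).factorial) := by
    rw [Jterm, abs_mul, abs_div, abs_pow, abs_neg, abs_one, one_pow, abs_mul,
      abs_of_nonneg (fact_pos k).le, abs_of_nonneg (fact_pos (n+k)).le]
    rw [show |(x/2)^(n+2*k)| = (|x|/2)^(n+2*k) by
      rw [abs_pow, abs_div, abs_of_nonneg (by norm_num : (0:ℝ) ≤ 2)]]
    ring
  rw [h1]
  have h2 : (|x|/2)^(n+2*k) ≤ (R/2)^(n+2*k) := by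
    gcongr
  have h3 : (R/2)^(n+2*k) = (R/2)^n * ((R/2)^2)^k := by
    rw [← pow_mul, ← pow_add]
  have h4 : (n.factorial : ℝ) * k.factorial ≤ (k.factorial : ℝ) * (n+k).factorial := by
    rw [mul_comm]
    gcongr
    exact Nat.le_add_right n k
  calc (|x|/2)^(n+2*k) / (k.factorial * (n+k).factorial)
      ≤ (R/2)^(n+2*k) / (n.factorial * k.factorial) := by
        apply div_le_div₀ (by positivity) h2 (by positivity)
        linarith [h4]
    _ = (R/2)^n / n.factorial * (((R/2)^2)^k / k.factorial) := by
        rw [h3]; ring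

end BesselAux

namespace B2
open BesselAux

lemma summable_expser (c q : ℝ) : Summable (fun k : ℕ => c * (q ^ k / k.factorial)) :=
  (Real.summable_pow_div_factorial q).mul_left c

lemma summable_Jterm (n : ℕ) (x : ℝ) : Summable (fun k => Jterm n k x) := by
  apply Summable.of_norm_bounded (summable_expser ((|x|/2)^n / n.factorial) ((|x|/2)^2))
  intro k
  simpa [Real.norm_eq_abs, mul_div_assoc] using abs_Jterm_le n k (le_refl |x|)

lemma hasSum_Jterm (n : ℕ) (x : ℝ) : HasSum (fun k => Jterm n k x) (besselJnat n x) :=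
  (summable_Jterm n x).hasSum

noncomputable def ER (R : ℝ) : ℝ := ∑' k : ℕ, ((R/2)^2)^k / k.factorial

lemma ER_nonneg (R : ℝ) : 0 ≤ ER R := tsum_nonneg fun k => by positivity

noncomputable def JB (n : ℕ) (R : ℝ) : ℝ := (R/2)^n / n.factorial * ER R

lemma abs_besselJnat_le (n : ℕ) {x R : ℝ} (hx : |x| ≤ R) :
    |besselJnat n x| ≤ JB n R := by
  have h1 : |besselJnat n x| ≤ ∑' k, |Jterm n k x| := by
    rw [besselJnat_eq]
    simpa [Real.norm_eq_abs] using norm_tsum_le_tsum_norm (f := fun k => Jterm n k x)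
      (by simpa [Real.norm_eq_abs] using (summable_Jterm n x).abs)
  refine h1.trans ?_
  have h2 : ∑' k, |Jterm n k x| ≤ ∑' k, (R/2)^n / n.factorial * (((R/2)^2)^k / k.factorial) := by
    apply Summable.tsum_le_tsum (fun k => abs_Jterm_le n k hx) ((summable_Jterm n x).abs)
    exact summable_expser _ _
  refine h2.trans_eq ?_
  rw [tsum_mul_left]; rfl

end B2

namespace B3
open BesselAux B2

lemma summable_linear_pow (c q : ℝ) (hc : 0 ≤ c) (hq : 0 ≤ q) :
    Summable (fun k : ℕ => (c + 2 * k) * q ^ k / k.factorial) := by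
  refine Summable.of_nonneg_of_le (fun k => by positivity) (fun k => ?_)
    (summable_expser (c+2) (2*q))
  have hk : (k : ℝ) + 1 ≤ 2 ^ k := by exact_mod_cast Nat.lt_two_pow_self (n := k)
  have h1 : c + 2 * k ≤ (c + 2) * 2 ^ k := by
    have h2 : (1:ℝ) ≤ 2 ^ k := one_le_pow₀ (by norm_num)
    nlinarith [Nat.cast_nonneg (α := ℝ) k]
  rw [mul_pow, show (c + 2) * ((2:ℝ)^k * q^k / k.factorial) = (c+2)*((2:ℝ)^k*q^k) / k.factorial
    by ring]
  apply div_le_div₀ (by positivity) ?_ (fact_pos k) le_rfl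
  nlinarith [pow_nonneg hq k, pow_nonneg (show (0:ℝ) ≤ 2 by norm_num) k]

noncomputable def JDterm (n k : ℕ) (x : ℝ) : ℝ :=
  ((-1:ℝ)^k / (k.factorial * (n+k).factorial)) * ((n + 2*k) * (x/2)^(n+2*k-1) / 2)

noncomputable def JD (n : ℕ) (x : ℝ) : ℝ := ∑' k : ℕ, JDterm n k x

lemma Jterm_hasDerivAt (n k : ℕ) (x : ℝ) :
    HasDerivAt (fun x => Jterm n k x) (JDterm n k x) x := by
  have h := ((hasDerivAt_id x).div_const 2).pow (n + 2*k)
  have h2 := h.const_mul ((-1:ℝ)^k / (k.factorial * (n+k).factorial))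
  refine h2.congr_deriv ?_
  simp only [id]
  rw [JDterm]
  push_cast
  ring

lemma abs_JDterm_le (n k : ℕ) {x R : ℝ} (hx : |x| ≤ R) (hR : 2 ≤ R) :
    |JDterm n k x| ≤ (R/2)^n / n.factorial / 2 * (((n:ℝ) + 2*k) * ((R/2)^2)^k / k.factorial) := by
  have hR0 : (0:ℝ) ≤ R := by linarith
  have h1 : |JDterm n k x| = ((n:ℝ) + 2*k) * (|x|/2)^(n+2*k-1) / (2 * (k.factorial * (n+k).factorial)) := by
    have e1 : JDterm n k x = ((-1:ℝ)^k) *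
        (((n:ℝ) + 2*k) * (x/2)^(n+2*k-1) / (2 * ((k.factorial:ℝ) * (n+k).factorial))) := by
      rw [JDterm]; ring
    rw [e1, abs_mul, abs_pow, abs_neg, abs_one, one_pow, one_mul, abs_div, abs_mul,
      abs_of_nonneg (show (0:ℝ) ≤ (n:ℝ)+2*(k:ℝ) by positivity),
      abs_of_nonneg (show (0:ℝ) ≤ 2*((k.factorial:ℝ)*(n+k).factorial) by positivity),
      show |(x/2)^(n+2*k-1)| = (|x|/2)^(n+2*k-1) by
        rw [abs_pow, abs_div, abs_of_nonneg (by norm_num : (0:ℝ) ≤ 2)]]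
  have p1 : (|x|/2)^(n+2*k-1) ≤ (R/2)^n * ((R/2)^2)^k := by
    calc (|x|/2)^(n+2*k-1) ≤ (R/2)^(n+2*k-1) := by gcongr
    _ ≤ (R/2)^(n+2*k) := pow_le_pow_right₀ (by linarith) (Nat.sub_le _ _)
    _ = _ := by rw [← pow_mul, ← pow_add]
  have p2 : (n.factorial : ℝ) * k.factorial ≤ (k.factorial : ℝ) * (n+k).factorial := by
    rw [mul_comm]
    gcongr
    exact Nat.le_add_right n k
  rw [h1, show (R/2)^n / n.factorial / 2 * (((n:ℝ) + 2*k) * ((R/2)^2)^k / k.factorial)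
      = ((n:ℝ)+2*k) * ((R/2)^n * ((R/2)^2)^k) / (2*((n.factorial:ℝ)*k.factorial)) by ring]
  apply div_le_div₀ (by positivity) ?_ (by positivity) (by linarith)
  exact mul_le_mul_of_nonneg_left p1 (by positivity)

end B3

namespace B4
open BesselAux B2 B3

lemma summable_JDbound (n : ℕ) (R : ℝ) (hR : 0 ≤ R) :
    Summable (fun k : ℕ =>
      (R/2)^n / n.factorial / 2 * (((n:ℝ) + 2*k) * ((R/2)^2)^k / k.factorial)) := by
  apply Summable.mul_left
  exact summable_linear_pow n ((R/2)^2) (by positivity) (by positivity)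

lemma besselJnat_hasDerivAt (n : ℕ) (x : ℝ) : HasDerivAt (besselJnat n) (JD n x) x := by
  set R := |x| + 2 with hRdef
  have hR2 : (2:ℝ) ≤ R := by
    have := abs_nonneg x
    simp only [hRdef]
    linarith
  have hR0 : (0:ℝ) ≤ R := by linarith
  have hx : x ∈ ball (0:ℝ) R := by
    simp only [mem_ball_zero_iff, Real.norm_eq_abs]
    linarith
  have key : HasDerivAt (fun y => ∑' k, Jterm n k y) (∑' k, JDterm n k x) x := by
    apply hasDerivAt_tsum_of_isPreconnected (summable_JDbound n R hR0) isOpen_ball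
      (convex_ball (0:ℝ) R).isPreconnected
      (fun k y _ => Jterm_hasDerivAt n k y) ?_ hx (summable_Jterm n x) hx
    intro k y hy
    rw [Real.norm_eq_abs]
    apply abs_JDterm_le n k ?_ hR2
    simp only [mem_ball_zero_iff, Real.norm_eq_abs] at hy
    linarith
  have : besselJnat n = fun y => ∑' k, Jterm n k y := funext fun y => besselJnat_eq n y
  rw [this, JD]
  exact key

lemma besselJnat_continuous (n : ℕ) : Continuous (besselJnat n) :=
  continuous_iff_continuousAt.mpr fun x => (besselJnat_hasDerivAt n x).continuousAt

lemma besselJnat_succ_zero (n : ℕ) : besselJnat (n+1) 0 = 0 := by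
  rw [besselJnat_eq]
  convert tsum_zero with k
  rw [Jterm]
  simp

lemma hasSum_shift {f : ℕ → ℝ} {a : ℝ} (h : HasSum f a) :
    HasSum (fun k : ℕ => if k = 0 then 0 else f (k-1)) a := by
  refine (Function.Injective.hasSum_iff (g := Nat.succ) Nat.succ_injective ?_).mp ?_
  · intro x hx
    cases x with
    | zero => simp
    | succ m => exact absurd ⟨m, rfl⟩ hx
  · have : ((fun k : ℕ => if k = 0 then 0 else f (k-1)) ∘ Nat.succ) = f := by
      funext k
      simp
    rw [this]
    exact h

end B4

namespace B5
open BesselAux B2 B3 B4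

lemma term_deriv_eq (n k : ℕ) (x : ℝ) :
    (Jterm n k x - (if k = 0 then 0 else Jterm (n+2) (k-1) x)) / 2 = JDterm (n+1) k x := by
  obtain ⟨y, rfl⟩ : ∃ y, x = 2*y := ⟨x/2, by ring⟩
  have hy : (2*y)/2 = y := by ring
  cases k with
  | zero =>
    simp only [reduceIte, Jterm, JDterm, hy, sub_zero]
    have h1 : (((n+1)+0).factorial : ℝ) = (n+1) * n.factorial := by
      rw [show (n+1)+0 = n+1 by ring, Nat.factorial_succ]; push_cast; ring
    have h2 : (n + 2*0 : ℕ) = n := by ring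
    have h3 : ((n+1) + 2*0 - 1 : ℕ) = n := by omega
    have h4 : (n + 0 : ℕ) = n := by ring
    rw [h1, h2, h3]
    have hf := fact_pos n
    norm_num
    field_simp
  | succ k =>
    simp only [Nat.succ_ne_zero, if_false, Nat.succ_sub_one, Jterm, JDterm]
    have e1 : (n + 2*(k+1) : ℕ) = n + 2*k + 2 := by ring
    have e2 : ((n+2) + 2*k : ℕ) = n + 2*k + 2 := by ring
    have e3 : ((n+1) + 2*(k+1) - 1 : ℕ) = n + 2*k + 2 := by omega
    rw [e1, e2, e3]
    have f1 : ((k+1).factorial : ℝ) = (k+1) * k.factorial := by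
      rw [Nat.factorial_succ]; push_cast; ring
    have f2 : ((n + (k+1)).factorial : ℝ) = (n+k+1) * (n+k).factorial := by
      rw [show n + (k+1) = (n+k)+1 by ring, Nat.factorial_succ]; push_cast; ring
    have f3 : (((n+2) + k).factorial : ℝ) = (n+k+2) * ((n+k+1) * (n+k).factorial) := by
      rw [show (n+2) + k = ((n+k)+1)+1 by ring, Nat.factorial_succ, Nat.factorial_succ]
      push_cast; ring
    have f4 : (((n+1) + (k+1)).factorial : ℝ) = (n+k+2) * ((n+k+1) * (n+k).factorial) := by
      rw [show (n+1) + (k+1) = ((n+k)+1)+1 by ring, Nat.factorial_succ, Nat.factorial_succ]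
      push_cast; ring
    rw [f1, f2, f3, f4, hy]
    have hf1 := fact_pos k
    have hf2 := fact_pos (n+k)
    have hk1 : (0:ℝ) < (k:ℝ) + 1 := by positivity
    have hn1 : (0:ℝ) < (n:ℝ) + k + 1 := by positivity
    have hn2 : (0:ℝ) < (n:ℝ) + k + 2 := by positivity
    rw [pow_succ]
    push_cast
    field_simp
    ring

lemma JD_succ (n : ℕ) (x : ℝ) :
    JD (n+1) x = (besselJnat n x - besselJnat (n+2) x) / 2 := by
  have h1 := hasSum_Jterm n x
  have h2 := hasSum_shift (hasSum_Jterm (n+2) x)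
  have h3 := (h1.sub h2).div_const 2
  have h4 : HasSum (fun k => JDterm (n+1) k x) ((besselJnat n x - besselJnat (n+2) x) / 2) := by
    have := funext (fun k => term_deriv_eq n k x)
    rw [← this]
    exact h3
  rw [JD]
  exact h4.tsum_eq

lemma hasDerivAt_besselJnat_succ (n : ℕ) (x : ℝ) :
    HasDerivAt (besselJnat (n+1)) ((besselJnat n x - besselJnat (n+2) x) / 2) x :=
  JD_succ n x ▸ besselJnat_hasDerivAt (n+1) x

lemma term_rec_eq (n k : ℕ) (x : ℝ) :
    x * (Jterm n k x + (if k = 0 then 0 else Jterm (n+2) (k-1) x))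
      = 2*((n:ℝ)+1) * Jterm (n+1) k x := by
  obtain ⟨y, rfl⟩ : ∃ y, x = 2*y := ⟨x/2, by ring⟩
  have hy : (2*y)/2 = y := by ring
  cases k with
  | zero =>
    simp only [reduceIte, Jterm, hy, add_zero]
    have h1 : (((n+1)+0).factorial : ℝ) = (n+1) * n.factorial := by
      rw [show (n+1)+0 = n+1 by ring, Nat.factorial_succ]; push_cast; ring
    have h2 : (n + 2*0 : ℕ) = n := by ring
    have h3 : ((n+1) + 2*0 : ℕ) = n + 1 := by ring
    have h4 : (n + 0 : ℕ) = n := by ring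
    rw [h1, h2, h3, pow_succ]
    have hf := fact_pos n
    norm_num
    field_simp
  | succ k =>
    simp only [Nat.succ_ne_zero, if_false, Nat.succ_sub_one, Jterm]
    have e1 : (n + 2*(k+1) : ℕ) = n + 2*k + 2 := by ring
    have e2 : ((n+2) + 2*k : ℕ) = n + 2*k + 2 := by ring
    have e3 : ((n+1) + 2*(k+1) : ℕ) = (n + 2*k + 2) + 1 := by ring
    rw [e1, e2, e3]
    have f1 : ((k+1).factorial : ℝ) = (k+1) * k.factorial := by
      rw [Nat.factorial_succ]; push_cast; ring
    have f2 : ((n + (k+1)).factorial : ℝ) = (n+k+1) * (n+k).factorial := by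
      rw [show n + (k+1) = (n+k)+1 by ring, Nat.factorial_succ]; push_cast; ring
    have f3 : (((n+2) + k).factorial : ℝ) = (n+k+2) * ((n+k+1) * (n+k).factorial) := by
      rw [show (n+2) + k = ((n+k)+1)+1 by ring, Nat.factorial_succ, Nat.factorial_succ]
      push_cast; ring
    have f4 : (((n+1) + (k+1)).factorial : ℝ) = (n+k+2) * ((n+k+1) * (n+k).factorial) := by
      rw [show (n+1) + (k+1) = ((n+k)+1)+1 by ring, Nat.factorial_succ, Nat.factorial_succ]
      push_cast; ring
    rw [f1, f2, f3, f4, hy, pow_succ]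
    have hf1 := fact_pos k
    have hf2 := fact_pos (n+k)
    have hk1 : (0:ℝ) < (k:ℝ) + 1 := by positivity
    have hn1 : (0:ℝ) < (n:ℝ) + k + 1 := by positivity
    have hn2 : (0:ℝ) < (n:ℝ) + k + 2 := by positivity
    push_cast
    field_simp
    ring

lemma bessel_rec (n : ℕ) (x : ℝ) :
    2*((n:ℝ)+1) * besselJnat (n+1) x = x * (besselJnat n x + besselJnat (n+2) x) := by
  have h1 := hasSum_Jterm n x
  have h2 := hasSum_shift (hasSum_Jterm (n+2) x)
  have h3 := (h1.add h2).mul_left x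
  have h4 := (hasSum_Jterm (n+1) x).mul_left (2*((n:ℝ)+1))
  have h5 : HasSum (fun k => 2*((n:ℝ)+1) * Jterm (n+1) k x)
      (x * (besselJnat n x + besselJnat (n+2) x)) := by
    have := funext (fun k => term_rec_eq n k x)
    rw [← this]
    exact h3
  exact h4.unique h5

end B5

namespace B6
open BesselAux B2 B3 B4 B5 Filter

variable (n : ℕ)

noncomputable def g (p : ℕ) (x : ℝ) : ℝ := ((n:ℝ)+1+2*p) * besselJnat (n+1+2*p) x ^ 2

noncomputable def g' (p : ℕ) (x : ℝ) : ℝ :=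
  x/2 * (besselJnat (n+2*p) x ^ 2 - besselJnat (n+2*p+2) x ^ 2)

lemma g_hasDerivAt (p : ℕ) (x : ℝ) : HasDerivAt (g n p) (g' n p x) x := by
  have hidx : n+1+2*p = (n+2*p)+1 := by ring
  have hJ := hasDerivAt_besselJnat_succ (n+2*p) x
  have h := (hJ.pow 2).const_mul ((n:ℝ)+1+2*p)
  have hrec := bessel_rec (n+2*p) x
  rw [g']
  unfold g
  rw [hidx]
  refine h.congr_deriv ?_
  push_cast at hrec ⊢
  set A := besselJnat (n+2*p) x
  set B := besselJnat (n+2*p+2) x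
  set C := besselJnat (n+2*p+1) x
  linear_combination ((A - B)/2) * hrec

lemma summable_JBsq (R : ℝ) (hR : 0 ≤ R) :
    Summable (fun p : ℕ => JB (n+2*p) R ^ 2) := by
  refine Summable.of_nonneg_of_le (fun p => sq_nonneg _) (fun p => ?_)
    (((Real.summable_pow_div_factorial ((R/2)^4)).mul_left ((ER R)^2 * ((R/2)^2)^n)))
  have h1 : JB (n+2*p) R ^ 2 = ((R/2)^(n+2*p))^2 / ((((n+2*p).factorial : ℝ))^2) * (ER R)^2 := by
    rw [JB]; ring
  rw [h1]
  have h2 : (((n+2*p).factorial : ℝ))^2 ≥ (p.factorial : ℝ) := by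
    have hp : (p.factorial : ℝ) ≤ ((n+2*p).factorial : ℝ) := by
      exact_mod_cast Nat.factorial_le (by omega)
    have h11 : (1:ℝ) ≤ ((n+2*p).factorial : ℝ) := by
      exact_mod_cast Nat.one_le_iff_ne_zero.mpr (n+2*p).factorial_pos.ne'
    nlinarith [hp, h11]
  have h3 : ((R/2)^(n+2*p) : ℝ)^2 = ((R/2)^2)^n * ((R/2)^4)^p := by
    rw [← pow_mul, ← pow_mul, ← pow_mul, ← pow_add]
    ring_nf
  rw [h3]
  rw [show (ER R)^2 * ((R/2)^2)^n * (((R/2)^4)^p / p.factorial)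
      = ((R/2)^2)^n * ((R/2)^4)^p / (p.factorial) * (ER R)^2 by ring]
  apply mul_le_mul_of_nonneg_right ?_ (sq_nonneg _)
  apply div_le_div₀ (by positivity) le_rfl (fact_pos p) h2

lemma abs_g'_le (p : ℕ) {y R : ℝ} (hy : |y| ≤ R) :
    |g' n p y| ≤ R/2 * (JB (n+2*p) R ^2 + JB (n+2*p+2) R ^2) := by
  have hR : 0 ≤ R := le_trans (abs_nonneg y) hy
  have b1 := abs_besselJnat_le (n+2*p) hy
  have b2 := abs_besselJnat_le (n+2*p+2) hy
  have n1 := abs_nonneg (besselJnat (n+2*p) y)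
  have n2 := abs_nonneg (besselJnat (n+2*p+2) y)
  have j1 : 0 ≤ JB (n+2*p) R := le_trans n1 b1
  have j2 : 0 ≤ JB (n+2*p+2) R := le_trans n2 b2
  rw [g', abs_mul, abs_div, abs_two]
  have h1 : |besselJnat (n+2*p) y ^2 - besselJnat (n+2*p+2) y ^2|
      ≤ JB (n+2*p) R ^2 + JB (n+2*p+2) R ^2 := by
    refine (abs_sub _ _).trans ?_
    rw [abs_pow, abs_pow]
    have := sq_abs (besselJnat (n+2*p) y)
    gcongr <;> assumption
  have h2 : |y|/2 ≤ R/2 := by linarith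
  apply mul_le_mul h2 h1 (abs_nonneg _) (by linarith)

lemma summable_g'_bound (R : ℝ) (hR : 0 ≤ R) :
    Summable (fun p : ℕ => R/2 * (JB (n+2*p) R ^2 + JB (n+2*p+2) R ^2)) := by
  apply Summable.mul_left
  apply Summable.add (summable_JBsq n R hR)
  have : ∀ p : ℕ, n+2*p+2 = (n+2)+2*p := fun p => by ring
  simp_rw [this]
  exact summable_JBsq (n+2) R hR

lemma g_zero (p : ℕ) : g n p 0 = 0 := by
  rw [g, show n+1+2*p = (n+2*p)+1 by ring, besselJnat_succ_zero]
  ring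

lemma S_hasDerivAt (x : ℝ) :
    HasDerivAt (fun y => ∑' p, g n p y) (∑' p, g' n p x) x := by
  set R := |x| + 2 with hRdef
  have hR0 : (0:ℝ) ≤ R := by positivity
  have hx : x ∈ ball (0:ℝ) R := by
    simp only [mem_ball_zero_iff, Real.norm_eq_abs]; linarith [abs_nonneg x]
  have h0 : (0:ℝ) ∈ ball (0:ℝ) R := by
    simp only [mem_ball_zero_iff, Real.norm_eq_abs, abs_zero]
    linarith [abs_nonneg x]
  apply hasDerivAt_tsum_of_isPreconnected (summable_g'_bound n R hR0) isOpen_ball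
    (convex_ball (0:ℝ) R).isPreconnected (fun p y _ => g_hasDerivAt n p y) ?_ h0 ?_ hx
  · intro p y hy
    rw [Real.norm_eq_abs]
    apply abs_g'_le
    simp only [mem_ball_zero_iff, Real.norm_eq_abs] at hy
    linarith
  · apply Summable.congr summable_zero
    intro p
    exact (g_zero n p).symm

lemma summable_g' (x : ℝ) : Summable (fun p => g' n p x) := by
  set R := |x| + 2 with hRdef
  have hR0 : (0:ℝ) ≤ R := by positivity
  refine Summable.of_norm_bounded (summable_g'_bound n R hR0) (fun p => ?_)
  rw [Real.norm_eq_abs]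
  exact abs_g'_le n p (by linarith [abs_nonneg x] : |x| ≤ R)

lemma tsum_g' (x : ℝ) : ∑' p, g' n p x = x/2 * besselJnat n x ^ 2 := by
  set f : ℕ → ℝ := fun p => x/2 * besselJnat (n+2*p) x ^ 2 with hf
  have hterm : ∀ p, g' n p x = f p - f (p+1) := by
    intro p
    rw [g', hf]
    simp only
    rw [show n+2*(p+1) = n+2*p+2 by ring]
    ring
  have hf0 : Tendsto f atTop (nhds 0) := by
    set R := |x| + 2 with hRdef
    have hR0 : (0:ℝ) ≤ R := by positivity
    have hb : ∀ p, |f p| ≤ R/2 * JB (n+2*p) R ^2 := by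
      intro p
      rw [hf]
      simp only
      rw [abs_mul, abs_pow, abs_div, abs_two]
      have b1 := abs_besselJnat_le (n+2*p) (show |x| ≤ R by linarith [abs_nonneg x])
      have hj : 0 ≤ JB (n+2*p) R := le_trans (abs_nonneg _) b1
      apply mul_le_mul ?_ ?_ (by positivity) (by positivity)
      · rw [div_le_div_iff_of_pos_right]; linarith [abs_nonneg x]; norm_num
      · exact pow_le_pow_left₀ (abs_nonneg _) b1 2
    have htends : Tendsto (fun p => R/2 * JB (n+2*p) R ^2) atTop (nhds 0) := by
      have := ((summable_JBsq n R hR0).mul_left (R/2)).tendsto_atTop_zero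
      exact this
    apply squeeze_zero_norm ?_ htends
    intro p
    rw [Real.norm_eq_abs]
    exact hb p
  have hsum : HasSum (fun p => g' n p x) (f 0) := by
    have hS : Summable (fun p => g' n p x) := summable_g' n x
    rw [hS.hasSum_iff_tendsto_nat]
    have hps : ∀ N, ∑ i ∈ Finset.range N, g' n i x = f 0 - f N := by
      intro N
      rw [Finset.sum_congr rfl (fun i _ => hterm i)]
      exact Finset.sum_range_sub' f N
    simp_rw [hps]
    simpa using tendsto_const_nhds.sub hf0
  rw [hsum.tsum_eq, hf]
  simp only
  rw [show n+2*0 = n by ring]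

end B6

namespace B7
open BesselAux B2 B3 B4 B5 B6 intervalIntegral

lemma F_hasDerivAt (n : ℕ) (x : ℝ) :
    HasDerivAt (fun y => ∫ t in (0:ℝ)..y, t * besselJnat n t ^ 2) (x * besselJnat n x ^2) x := by
  have hc : Continuous (fun t : ℝ => t * besselJnat n t ^ 2) :=
    continuous_id.mul ((besselJnat_continuous n).pow 2)
  exact (hc.integral_hasStrictDerivAt 0 x).hasDerivAt

lemma key_eq (n : ℕ) (x : ℝ) :
    ∫ t in (0:ℝ)..x, t * besselJnat n t ^ 2 = 2 * ∑' p, g n p x := by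
  set H : ℝ → ℝ := fun y => (∫ t in (0:ℝ)..y, t * besselJnat n t ^ 2) - 2 * ∑' p, g n p y
    with hH
  have hder : ∀ y, HasDerivAt H 0 y := by
    intro y
    have h1 := F_hasDerivAt n y
    have h2 := (S_hasDerivAt n y).const_mul 2
    have h3 := h1.sub h2
    refine h3.congr_deriv ?_
    rw [tsum_g']
    ring
  have hconst : ∀ y z : ℝ, H y = H z := by
    intro y z
    apply is_const_of_deriv_eq_zero (fun w => (hder w).differentiableAt)
    intro w
    exact (hder w).deriv
  have h0 : H 0 = 0 := by
    rw [hH]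
    simp only
    rw [intervalIntegral.integral_same]
    have : ∑' p, g n p 0 = 0 := by
      rw [tsum_congr (fun p => g_zero n p)]
      exact tsum_zero
    rw [this]
    ring
  have := hconst x 0
  rw [h0, hH] at this
  simp only at this
  linarith [this]

lemma integral_scaled (n : ℕ) {lam : ℝ} (hlam : 0 < lam) :
    ∫ r in (0:ℝ)..1, r * besselJnat n (lam * r) ^ 2
      = lam⁻¹ * lam⁻¹ * ∫ t in (0:ℝ)..lam, t * besselJnat n t ^ 2 := by
  have h := intervalIntegral.integral_comp_mul_left (a := (0:ℝ)) (b := 1)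
    (fun t => t * besselJnat n t ^ 2) hlam.ne'
  rw [mul_zero, mul_one] at h
  have h2 : ∀ r : ℝ, r * besselJnat n (lam * r) ^ 2
      = lam⁻¹ * ((lam * r) * besselJnat n (lam * r) ^ 2) := by
    intro r
    field_simp
  rw [intervalIntegral.integral_congr (g := fun r =>
    lam⁻¹ * ((lam * r) * besselJnat n (lam * r) ^ 2)) (fun r _ => h2 r)]
  rw [intervalIntegral.integral_const_mul, h, smul_eq_mul]
  ring

lemma main_integral (n : ℕ) {lam : ℝ} (hlam : 0 < lam) :
    2 * ∫ r in (0:ℝ)..1, r * besselJnat n (lam * r) ^ 2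
      = (4 / lam ^ 2) * ∑' p, g n p lam := by
  rw [integral_scaled n hlam, key_eq n lam]
  field_simp
  ring

end B7

namespace B8
open BesselAux B2 B3 B4 B5 B6 B7

lemma besselJ_natCast (m : ℕ) (x : ℝ) : besselJ (m : ℤ) x = besselJnat m x := by
  rw [besselJ, if_pos (Int.natCast_nonneg m), Int.toNat_natCast]

lemma abs_fourierBessel (lam : ℝ) (j : ℕ) (z : ℂ) :
    ‖fourierBessel lam (j:ℤ) z‖ = |besselJnat j (lam * ‖z‖)| := by
  rw [fourierBessel, norm_mul]
  have h1 : Complex.I * ((j:ℤ):ℂ) * (z.arg : ℂ) = (((j:ℤ) * z.arg : ℝ) : ℂ) * Complex.I := by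
    push_cast
    ring
  rw [h1, Complex.norm_exp_ofReal_mul_I, one_mul, besselJ_natCast, Complex.norm_real, Real.norm_eq_abs]

lemma l2normSq_fourierBessel (lam : ℝ) (j : ℕ) :
    l2normSq unifDisk (fourierBessel lam (j:ℤ))
      = 2 * ∫ r in (0:ℝ)..1, r * besselJnat j (lam * r) ^ 2 := by
  have hπ : (0:ℝ) < Real.pi := Real.pi_pos
  rw [l2normSq, unifDisk, integral_smul_measure]
  have htoReal : ((ENNReal.ofReal Real.pi)⁻¹).toReal = Real.pi⁻¹ := by
    rw [ENNReal.toReal_inv, ENNReal.toReal_ofReal hπ.le]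
  rw [htoReal]
  have hp : ∀ z : ℂ, ‖fourierBessel lam (j:ℤ) z‖ ^ 2
      = besselJnat j (lam * ‖z‖) ^ 2 := by
    intro z
    rw [abs_fourierBessel, sq_abs]
  simp_rw [hp]
  set h : ℝ → ℝ := fun r => besselJnat j (lam * r) ^ 2 with hh
  have hind : ∀ z : ℂ, Set.indicator (closedBall (0:ℂ) 1) (fun z => h ‖z‖) z
      = Set.indicator (Set.Icc (0:ℝ) 1) h ‖z‖ := by
    intro z
    by_cases hz : z ∈ closedBall (0:ℂ) 1
    · rw [Set.indicator_of_mem hz, Set.indicator_of_mem]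
      exact ⟨norm_nonneg z, mem_closedBall_zero_iff.mp hz⟩
    · rw [Set.indicator_of_notMem hz, Set.indicator_of_notMem]
      intro hmem
      exact hz (mem_closedBall_zero_iff.mpr hmem.2)
  have hrad : ∫ z in closedBall (0:ℂ) 1, besselJnat j (lam * ‖z‖) ^ 2
      = 2 * (Real.pi * ∫ y in Set.Ioi (0:ℝ), y • Set.indicator (Set.Icc (0:ℝ) 1) h y) := by
    rw [← MeasureTheory.integral_indicator measurableSet_closedBall]
    calc ∫ z : ℂ, Set.indicator (closedBall (0:ℂ) 1) (fun z => h ‖z‖) z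
        = ∫ z : ℂ, Set.indicator (Set.Icc (0:ℝ) 1) h ‖z‖ :=
          integral_congr_ae (Filter.Eventually.of_forall hind)
      _ = 2 * (Real.pi * ∫ y in Set.Ioi (0:ℝ), y • Set.indicator (Set.Icc (0:ℝ) 1) h y) := by
          rw [MeasureTheory.integral_fun_norm_addHaar (volume : Measure ℂ)
            (Set.indicator (Set.Icc (0:ℝ) 1) h), Complex.finrank_real_complex]
          have hvol : ((volume : Measure ℂ) (ball 0 1)).toReal = Real.pi := by
            rw [Complex.volume_ball]
            simp [ENNReal.toReal_mul]
          rw [measureReal_def, hvol]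
          norm_num
  rw [hrad]
  have hIoi : ∫ y in Set.Ioi (0:ℝ), y • Set.indicator (Set.Icc (0:ℝ) 1) h y
      = ∫ r in (0:ℝ)..1, r * h r := by
    have hpt : ∀ y : ℝ, y • Set.indicator (Set.Icc (0:ℝ) 1) h y
        = Set.indicator (Set.Icc (0:ℝ) 1) (fun y => y * h y) y := by
      intro y
      by_cases hy : y ∈ Set.Icc (0:ℝ) 1
      · rw [Set.indicator_of_mem hy, Set.indicator_of_mem hy, smul_eq_mul]
      · rw [Set.indicator_of_notMem hy, Set.indicator_of_notMem hy, smul_zero]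
    simp_rw [hpt]
    rw [MeasureTheory.setIntegral_indicator measurableSet_Icc]
    have hset : Set.Ioi (0:ℝ) ∩ Set.Icc (0:ℝ) 1 = Set.Ioc (0:ℝ) 1 := by
      ext y
      simp only [Set.mem_inter_iff, Set.mem_Ioi, Set.mem_Icc, Set.mem_Ioc]
      exact ⟨fun ⟨a, _, c⟩ => ⟨a, c⟩, fun ⟨a, c⟩ => ⟨a, a.le, c⟩⟩
    rw [hset, intervalIntegral.integral_of_le zero_le_one]
  rw [hIoi, hh]
  field_simp
  simp only [smul_eq_mul, mul_comm lam]
  field_simp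
  simp only [mul_comm lam]

end B8


/-- `2 ∫_0^1 r J_j(λr)² dr = (4/λ²) Σ_{p≥0} (j+1+2p) J_{j+1+2p}(λ)²`,
i.e. the squared `L²(ν₀)`-norm of `b_{λ,j}` on the unit disk equals this series. -/
theorem stmt_4 (lam : ℝ) (hlam : 0 < lam) (j : ℕ) :
    (2 * ∫ r in (0:ℝ)..1, r * (besselJ (j : ℤ) (lam * r)) ^ 2 =
      (4 / lam ^ 2) * ∑' p : ℕ, ((j : ℝ) + 1 + 2 * p) *
        (besselJ ((j : ℤ) + 1 + 2 * (p : ℤ)) lam) ^ 2) ∧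
    l2normSq unifDisk (fourierBessel lam (j : ℤ)) =
      (4 / lam ^ 2) * ∑' p : ℕ, ((j : ℝ) + 1 + 2 * p) *
        (besselJ ((j : ℤ) + 1 + 2 * (p : ℤ)) lam) ^ 2 := by
  have hcast : ∀ p : ℕ, ((j : ℝ) + 1 + 2 * p) *
      (besselJ ((j : ℤ) + 1 + 2 * (p : ℤ)) lam) ^ 2 = B6.g j p lam := by
    intro p
    rw [show ((j:ℤ) + 1 + 2*(p:ℤ)) = ((j+1+2*p : ℕ) : ℤ) by push_cast; ring,
      B8.besselJ_natCast, B6.g]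
  have hts : (∑' p : ℕ, ((j : ℝ) + 1 + 2 * p) *
      (besselJ ((j : ℤ) + 1 + 2 * (p : ℤ)) lam) ^ 2) = ∑' p, B6.g j p lam := tsum_congr hcast
  have hint : (∫ r in (0:ℝ)..1, r * (besselJ (j : ℤ) (lam * r)) ^ 2)
      = ∫ r in (0:ℝ)..1, r * besselJnat j (lam * r) ^ 2 := by
    simp_rw [B8.besselJ_natCast]
  have h1 : (2 * ∫ r in (0:ℝ)..1, r * (besselJ (j : ℤ) (lam * r)) ^ 2)
      = (4 / lam ^ 2) * ∑' p, B6.g j p lam := by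
    rw [hint]
    exact B7.main_integral j hlam
  constructor
  · rw [h1, hts]
  · rw [B8.l2normSq_fourierBessel, hts, ← B7.main_integral j hlam]
end

section
/- Let λ > 0 and let j be an integer with j > ⌈λ⌉. Then the squared L²(ν_0)-norm of the Fourier-Bessel function b_{λ,j} on the closed unit disk satisfies ‖b_{λ,j}‖²_{L²(ν_0)} ≤ 4 ((j+1)/j²) · ( 1/(1 − (λ/j)⁴) + (2/(j+1)) · (λ/j)⁴/(1 − (λ/j)⁴)² ) · J_j(λ)². -/
open MeasureTheory Metric

namespace BJ
/-- the k-th term of the Bessel series -/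
noncomputable def term (n k : ℕ) (x : ℝ) : ℝ :=
  ((-1 : ℝ) ^ k / ((Nat.factorial k : ℝ) * (Nat.factorial (n + k) : ℝ))) * (x / 2) ^ (n + 2 * k)

lemma besselJnat_eq (n : ℕ) (x : ℝ) : besselJnat n x = ∑' k, term n k x := rfl

lemma abs_term (n k : ℕ) (x : ℝ) :
    |term n k x| = (|x| / 2) ^ (n + 2 * k) / ((Nat.factorial k : ℝ) * (Nat.factorial (n + k))) := by
  have h1 : (0:ℝ) < (Nat.factorial k : ℝ) * (Nat.factorial (n + k)) := by positivity
  rw [term, abs_mul, abs_div, abs_pow, abs_neg, abs_one, one_pow, abs_of_pos h1, abs_pow,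
    abs_div, abs_two]
  ring

lemma abs_term_le (n k : ℕ) (x : ℝ) :
    |term n k x| ≤ (|x| / 2) ^ n / (Nat.factorial n) * ((x ^ 2 / 4) ^ k / Nat.factorial k) := by
  rw [abs_term]
  have h2 : (|x| / 2) ^ (n + 2 * k) = (|x| / 2) ^ n * (x ^ 2 / 4) ^ k := by
    rw [pow_add, pow_mul]
    congr 1
    rw [div_pow, sq_abs]
    norm_num
  rw [h2]
  have h3 : (Nat.factorial n : ℝ) * Nat.factorial k ≤ (Nat.factorial k : ℝ) * Nat.factorial (n + k) := by
    rw [mul_comm]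
    have : (Nat.factorial n : ℝ) ≤ Nat.factorial (n + k) := by
      exact_mod_cast Nat.factorial_le (Nat.le_add_right n k)
    exact mul_le_mul_of_nonneg_left this (by positivity)
  have h4 : (0:ℝ) < (Nat.factorial k : ℝ) * Nat.factorial (n + k) := by positivity
  have h5 : (0:ℝ) < (Nat.factorial n : ℝ) * Nat.factorial k := by positivity
  calc (|x| / 2) ^ n * (x ^ 2 / 4) ^ k / ((Nat.factorial k : ℝ) * Nat.factorial (n + k))
      ≤ (|x| / 2) ^ n * (x ^ 2 / 4) ^ k / ((Nat.factorial n : ℝ) * Nat.factorial k) := by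
        exact div_le_div_of_nonneg_left (by positivity) h5 h3
    _ = (|x| / 2) ^ n / (Nat.factorial n) * ((x ^ 2 / 4) ^ k / Nat.factorial k) := by ring

lemma summable_term (n : ℕ) (x : ℝ) : Summable fun k => term n k x := by
  apply Summable.of_norm_bounded (((Real.summable_pow_div_factorial (x ^ 2 / 4))).mul_left
    ((|x| / 2) ^ n / (Nat.factorial n))) (fun k => abs_term_le n k x)

lemma summable_abs_term (n : ℕ) (x : ℝ) : Summable fun k => |term n k x| := by
  apply Summable.of_norm_bounded (((Real.summable_pow_div_factorial (x ^ 2 / 4))).mul_left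
    ((|x| / 2) ^ n / (Nat.factorial n))) (fun k => by rw [Real.norm_eq_abs, abs_abs]; exact abs_term_le n k x)




noncomputable def dterm (n k : ℕ) (x : ℝ) : ℝ :=
  ((-1 : ℝ) ^ k / ((Nat.factorial k : ℝ) * (Nat.factorial (n + k) : ℝ))) *
    (((n + 2 * k : ℕ) : ℝ) * (x / 2) ^ (n + 2 * k - 1) * (1 / 2))

lemma hasDerivAt_term (n k : ℕ) (x : ℝ) :
    HasDerivAt (fun y => term n k y) (dterm n k x) x := by
  have h : HasDerivAt (fun y : ℝ => (y / 2) ^ (n + 2 * k))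
      (((n + 2 * k : ℕ) : ℝ) * (x / 2) ^ (n + 2 * k - 1) * (1 / 2)) x := by
    have h0 : HasDerivAt (fun y : ℝ => y / 2) (1 / 2) x := (hasDerivAt_id x).div_const 2
    simpa using h0.fun_pow (n + 2 * k)
  exact h.const_mul _

lemma summable_nat_mul_pow_div_factorial (a : ℝ) :
    Summable (fun k : ℕ => (k : ℝ) * a ^ k / Nat.factorial k) := by
  rw [← summable_nat_add_iff 1]
  have h : (fun k : ℕ => ((k + 1 : ℕ) : ℝ) * a ^ (k + 1) / Nat.factorial (k + 1)) =
      fun k : ℕ => a * (a ^ k / Nat.factorial k) := by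
    funext k
    have hk : (Nat.factorial k : ℝ) ≠ 0 := by positivity
    rw [Nat.factorial_succ]
    push_cast
    field_simp
    ring
  exact h ▸ ((Real.summable_pow_div_factorial a).mul_left a)

lemma summable_linear_pow_div_factorial (c b a : ℝ) :
    Summable (fun k : ℕ => (c + b * k) * a ^ k / Nat.factorial k) := by
  have h1 := (Real.summable_pow_div_factorial a).mul_left c
  have h2 := (summable_nat_mul_pow_div_factorial a).mul_left b
  have h3 := h1.add h2
  apply h3.congr
  intro k
  field_simp

lemma norm_dterm_le (n k : ℕ) (hn : 1 ≤ n) {R x : ℝ} (hR : 0 < R) (hx : |x| ≤ R) :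
    ‖dterm n k x‖ ≤ (R / 2) ^ (n - 1) *
      ((((n : ℝ) + 2 * k) * (R ^ 2 / 4) ^ k / Nat.factorial k) / 2) := by
  have hfac : (1 : ℝ) ≤ Nat.factorial (n + k) := by exact_mod_cast (Nat.factorial_pos (n + k))
  have hkfac : (0 : ℝ) < Nat.factorial k := by positivity
  have he : n + 2 * k - 1 = (n - 1) + 2 * k := by omega
  have habs : ‖dterm n k x‖ =
      (((n : ℝ) + 2 * k) / ((Nat.factorial k : ℝ) * Nat.factorial (n + k))) *
        (|x| / 2) ^ (n + 2 * k - 1) * (1 / 2) := by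
    rw [dterm, Real.norm_eq_abs]
    rw [abs_mul, abs_mul, abs_mul, abs_div, abs_pow, abs_neg, abs_one, one_pow, abs_div, abs_two,
      abs_pow]
    have : |((n + 2 * k : ℕ) : ℝ)| = (n : ℝ) + 2 * k := by
      rw [abs_of_nonneg (by positivity)]; push_cast; ring
    have h2 : |x / 2| = |x| / 2 := by rw [abs_div, abs_two]
    rw [this, abs_of_pos (by positivity : (0:ℝ) < (Nat.factorial k : ℝ) * Nat.factorial (n + k)),
      h2, div_eq_mul_inv, mul_inv]
    simp only [abs_one]
    ring
  rw [habs, he]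
  have hpow : (|x| / 2) ^ ((n - 1) + 2 * k) ≤ (R / 2) ^ (n - 1) * (R ^ 2 / 4) ^ k := by
    have h1 : (|x| / 2) ^ ((n - 1) + 2 * k) ≤ (R / 2) ^ ((n - 1) + 2 * k) := by
      apply pow_le_pow_left₀ (by positivity)
      linarith
    refine h1.trans_eq ?_
    rw [pow_add, pow_mul]
    congr 1
    rw [div_pow]
    norm_num
  have hcoef : (((n : ℝ) + 2 * k) / ((Nat.factorial k : ℝ) * Nat.factorial (n + k))) ≤
      ((n : ℝ) + 2 * k) / Nat.factorial k := by
    apply div_le_div_of_nonneg_left (by positivity) hkfac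
    nlinarith [hkfac]
  calc (((n : ℝ) + 2 * k) / ((Nat.factorial k : ℝ) * Nat.factorial (n + k))) *
        (|x| / 2) ^ ((n - 1) + 2 * k) * (1 / 2)
      ≤ (((n : ℝ) + 2 * k) / Nat.factorial k) * ((R / 2) ^ (n - 1) * (R ^ 2 / 4) ^ k) * (1 / 2) := by
        apply mul_le_mul_of_nonneg_right _ (by norm_num)
        apply mul_le_mul hcoef hpow (by positivity) (by positivity)
    _ = (R / 2) ^ (n - 1) * ((((n : ℝ) + 2 * k) * (R ^ 2 / 4) ^ k / Nat.factorial k) / 2) := by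
        ring

lemma summable_dterm (n : ℕ) (hn : 1 ≤ n) (x : ℝ) : Summable fun k => dterm n k x := by
  set R := |x| + 1 with hR
  have hR0 : 0 < R := by positivity
  have hxR : |x| ≤ R := by simp [hR]
  apply Summable.of_norm_bounded ?_ (fun k => norm_dterm_le n k hn hR0 hxR)
  have := (summable_linear_pow_div_factorial (n : ℝ) 2 (R ^ 2 / 4)).div_const 2
  have h2 := this.mul_left ((R / 2) ^ (n - 1))
  apply h2.congr
  intro k
  ring

lemma hasDerivAt_besselJnat (n : ℕ) (hn : 1 ≤ n) (x : ℝ) :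
    HasDerivAt (besselJnat n) (∑' k, dterm n k x) x := by
  set R := |x| + 1 with hR
  have hR0 : 0 < R := by positivity
  have hsum : Summable fun k : ℕ =>
      (R / 2) ^ (n - 1) * ((((n : ℝ) + 2 * k) * (R ^ 2 / 4) ^ k / Nat.factorial k) / 2) := by
    have := (summable_linear_pow_div_factorial (n : ℝ) 2 (R ^ 2 / 4)).div_const 2
    have h2 := this.mul_left ((R / 2) ^ (n - 1))
    apply h2.congr
    intro k
    ring
  have := hasDerivAt_tsum_of_isPreconnected hsum (isOpen_ball (x := x) (ε := 1))
    (convex_ball x 1).isPreconnected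
    (fun k y _ => hasDerivAt_term n k y)
    (fun k y hy => by
      apply norm_dterm_le n k hn hR0
      have : |y - x| < 1 := by simpa [Real.dist_eq] using hy
      have h2 := abs_sub_abs_le_abs_sub y x
      simp only [hR]
      linarith)
    (mem_ball_self one_pos)
    (summable_term n x)
    (mem_ball_self one_pos)
  exact this





lemma term_zero (n : ℕ) (x : ℝ) : term n 0 x = (x / 2) ^ n / Nat.factorial n := by
  simp [term]; ring

lemma g_zero (n : ℕ) (x : ℝ) : 2 * ((n : ℝ) + 1) * term (n + 1) 0 x - x * term n 0 x = 0 := by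
  have h1 : term (n+1) 0 x = (x/2)^(n+1) / Nat.factorial (n+1) := term_zero _ _
  have h2 : term n 0 x = (x/2)^n / Nat.factorial n := term_zero _ _
  rw [h1, h2, Nat.factorial_succ, pow_succ]
  have hf : (Nat.factorial n : ℝ) ≠ 0 := by positivity
  push_cast
  field_simp
  ring

lemma g_succ (n k : ℕ) (x : ℝ) :
    2 * ((n : ℝ) + 1) * term (n + 1) (k + 1) x - x * term n (k + 1) x = x * term (n + 2) k x := by
  have e1 : n + 1 + 2 * (k + 1) = (n + 2 * k + 2) + 1 := by omega
  have e2 : n + 2 * (k + 1) = (n + 2 * k + 1) + 1 := by omega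
  have e3 : n + 2 + 2 * k = (n + 2 * k + 1) + 1 := by omega
  have f1 : n + 1 + (k + 1) = (n + k + 1) + 1 := by omega
  have f2 : n + (k + 1) = n + k + 1 := by omega
  have f3 : n + 2 + k = (n + k + 1) + 1 := by omega
  simp only [term, e1, e2, e3, f1, f2, f3, Nat.factorial_succ, pow_succ]
  have hk : (Nat.factorial k : ℝ) ≠ 0 := by positivity
  have hnk : (Nat.factorial (n + k + 1) : ℝ) ≠ 0 := by positivity
  push_cast
  field_simp
  ring

lemma h_zero (n : ℕ) (hn : 1 ≤ n) (x : ℝ) : x * dterm n 0 x - n * term n 0 x = 0 := by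
  obtain ⟨m, rfl⟩ := Nat.exists_eq_add_of_le hn
  simp only [term, dterm, Nat.mul_zero, Nat.add_zero, pow_zero]
  have e1 : 1 + m - 1 = m := by omega
  have e2 : 1 + m = m + 1 := by omega
  rw [e1, e2, pow_succ]
  push_cast
  field_simp
  ring

lemma h_succ (n k : ℕ) (x : ℝ) :
    x * dterm n (k + 1) x - n * term n (k + 1) x = -(x * term (n + 1) k x) := by
  have e1 : n + 2 * (k + 1) - 1 = (n + 2 * k) + 1 := by omega
  have e2 : n + 2 * (k + 1) = ((n + 2 * k) + 1) + 1 := by omega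
  have e3 : n + 1 + 2 * k = (n + 2 * k) + 1 := by omega
  have f1 : n + (k + 1) = n + k + 1 := by omega
  have f2 : n + 1 + k = n + k + 1 := by omega
  simp only [term, dterm, e1, e2, e3, f1, f2, Nat.factorial_succ, pow_succ]
  have hk : (Nat.factorial k : ℝ) ≠ 0 := by positivity
  have hnk : (Nat.factorial (n + k) : ℝ) ≠ 0 := by positivity
  have hnk1 : (Nat.factorial (n + k + 1) : ℝ) ≠ 0 := by positivity
  push_cast
  field_simp
  ring



lemma besselJnat_eq' (n : ℕ) (x : ℝ) : besselJnat n x = ∑' k, term n k x := rfl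

lemma recur (n : ℕ) (x : ℝ) :
    2 * ((n : ℝ) + 1) * besselJnat (n + 1) x - x * besselJnat n x = x * besselJnat (n + 2) x := by
  have s1 := (summable_term (n + 1) x).mul_left (2 * ((n : ℝ) + 1))
  have s2 := (summable_term n x).mul_left x
  have hg : Summable (fun k => 2 * ((n : ℝ) + 1) * term (n + 1) k x - x * term n k x) := s1.sub s2
  have h1 : ∑' k, (2 * ((n : ℝ) + 1) * term (n + 1) k x - x * term n k x)
      = 2 * ((n : ℝ) + 1) * besselJnat (n + 1) x - x * besselJnat n x := by
    rw [Summable.tsum_sub s1 s2, tsum_mul_left, tsum_mul_left, besselJnat_eq', besselJnat_eq']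
  have h2 : ∑' k, (2 * ((n : ℝ) + 1) * term (n + 1) k x - x * term n k x)
      = x * besselJnat (n + 2) x := by
    rw [Summable.tsum_eq_zero_add hg, g_zero, zero_add]
    calc ∑' k, (2 * ((n : ℝ) + 1) * term (n + 1) (k + 1) x - x * term n (k + 1) x)
        = ∑' k, x * term (n + 2) k x := by
          apply tsum_congr; intro k; exact g_succ n k x
      _ = x * besselJnat (n + 2) x := by rw [tsum_mul_left, besselJnat_eq']
  rw [← h1, h2]

lemma xderiv (n : ℕ) (hn : 1 ≤ n) (x : ℝ) :
    x * (∑' k, dterm n k x) = (n : ℝ) * besselJnat n x - x * besselJnat (n + 1) x := by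
  have s1 := (summable_dterm n hn x).mul_left x
  have s2 := (summable_term n x).mul_left (n : ℝ)
  have hg : Summable (fun k => x * dterm n k x - (n : ℝ) * term n k x) := s1.sub s2
  have h1 : ∑' k, (x * dterm n k x - (n : ℝ) * term n k x)
      = x * (∑' k, dterm n k x) - (n : ℝ) * besselJnat n x := by
    rw [Summable.tsum_sub s1 s2, tsum_mul_left, tsum_mul_left, besselJnat_eq']
  have h2 : ∑' k, (x * dterm n k x - (n : ℝ) * term n k x) = -(x * besselJnat (n + 1) x) := by
    rw [Summable.tsum_eq_zero_add hg, h_zero n hn, zero_add]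
    calc ∑' k, (x * dterm n (k + 1) x - (n : ℝ) * term n (k + 1) x)
        = ∑' k, -(x * term (n + 1) k x) := by
          apply tsum_congr; intro k; exact h_succ n k x
      _ = -(x * besselJnat (n + 1) x) := by
          rw [tsum_neg, tsum_mul_left, besselJnat_eq']
  have := h1.symm.trans h2
  linarith

lemma abs_term_succ (n k : ℕ) (x : ℝ) :
    |term n (k + 1) x| = |term n k x| * ((x ^ 2 / 4) / (((k : ℝ) + 1) * ((n : ℝ) + k + 1))) := by
  rw [abs_term, abs_term]
  have e1 : n + 2 * (k + 1) = (n + 2 * k) + 2 := by omega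
  have f1 : n + (k + 1) = (n + k) + 1 := by omega
  rw [e1, f1, Nat.factorial_succ, Nat.factorial_succ, pow_add]
  have h2 : (|x| / 2) ^ 2 = x ^ 2 / 4 := by
    rw [div_pow, sq_abs]; norm_num
  rw [h2]
  have hk : (Nat.factorial k : ℝ) ≠ 0 := by positivity
  have hnk : (Nat.factorial (n + k) : ℝ) ≠ 0 := by positivity
  push_cast
  field_simp

lemma term_decay (n : ℕ) {x : ℝ} (h : 2 * x ^ 2 ≤ (n : ℝ) + 1) :
    ∀ k, |term n k x| ≤ |term n 0 x| * (1 / 8) ^ k := by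
  intro k
  induction k with
  | zero => simp
  | succ k ih =>
    rw [abs_term_succ]
    have hratio : (x ^ 2 / 4) / (((k : ℝ) + 1) * ((n : ℝ) + k + 1)) ≤ 1 / 8 := by
      have h1 : ((n : ℝ) + 1) ≤ ((k : ℝ) + 1) * ((n : ℝ) + k + 1) := by nlinarith [k.cast_nonneg (α := ℝ)]
      have h2 : x ^ 2 / 4 ≤ ((n : ℝ) + 1) / 8 := by linarith
      have h3 : (0:ℝ) < ((k : ℝ) + 1) * ((n : ℝ) + k + 1) := by positivity
      rw [div_le_div_iff₀ h3 (by norm_num)]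
      nlinarith [sq_nonneg x]
    calc |term n k x| * ((x ^ 2 / 4) / (((k : ℝ) + 1) * ((n : ℝ) + k + 1)))
        ≤ (|term n 0 x| * (1 / 8) ^ k) * (1 / 8) := by
          apply mul_le_mul ih hratio (by positivity) (by positivity)
      _ = |term n 0 x| * (1 / 8) ^ (k + 1) := by ring

lemma tail_bound (n : ℕ) {x : ℝ} (h : 2 * x ^ 2 ≤ (n : ℝ) + 1) :
    |besselJnat n x - term n 0 x| ≤ |term n 0 x| / 7 := by
  have hsum := summable_term n x
  have htail : besselJnat n x - term n 0 x = ∑' k, term n (k + 1) x := by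
    rw [besselJnat_eq', Summable.tsum_eq_zero_add hsum]; ring
  rw [htail]
  have habs := summable_abs_term n x
  have habs' : Summable fun k => |term n (k + 1) x| := (summable_nat_add_iff 1).mpr habs
  have hnorm : Summable fun k => ‖term n (k + 1) x‖ := by
    simpa [Real.norm_eq_abs] using habs'
  have hgeo0 : Summable fun k : ℕ => (1 / 8 : ℝ) ^ k :=
    summable_geometric_of_lt_one (by norm_num) (by norm_num)
  have hgeo1 : Summable fun k : ℕ => (1 / 8 : ℝ) ^ (k + 1) := (summable_nat_add_iff 1).mpr hgeo0
  have hgeo : Summable fun k : ℕ => |term n 0 x| * (1 / 8 : ℝ) ^ (k + 1) := hgeo1.mul_left _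
  have step1 : |∑' k, term n (k + 1) x| ≤ ∑' k, |term n (k + 1) x| := by
    simpa [Real.norm_eq_abs] using norm_tsum_le_tsum_norm hnorm
  have step2 : ∑' k, |term n (k + 1) x| ≤ ∑' k, |term n 0 x| * (1 / 8 : ℝ) ^ (k + 1) :=
    habs'.tsum_le_tsum (fun k => term_decay n h (k + 1)) hgeo
  have step3 : ∑' k : ℕ, |term n 0 x| * (1 / 8 : ℝ) ^ (k + 1) = |term n 0 x| / 7 := by
    rw [tsum_mul_left]
    have h8 : ∑' k : ℕ, (1 / 8 : ℝ) ^ k = 8 / 7 := by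
      rw [tsum_geometric_of_lt_one (by norm_num) (by norm_num)]; norm_num
    rw [Summable.tsum_eq_zero_add hgeo0] at h8
    simp only [pow_zero] at h8
    have h7 : ∑' k : ℕ, (1 / 8 : ℝ) ^ (k + 1) = 1 / 7 := by linarith
    rw [h7]; ring
  linarith

lemma J_lower (n : ℕ) {x : ℝ} (hx : 0 < x) (h : 2 * x ^ 2 ≤ (n : ℝ) + 1) :
    6 / 7 * ((x / 2) ^ n / Nat.factorial n) ≤ besselJnat n x := by
  have ht := tail_bound n h
  have ht0 : term n 0 x = (x / 2) ^ n / Nat.factorial n := term_zero n x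
  have hpos : 0 < (x / 2) ^ n / Nat.factorial n := by positivity
  rw [ht0, abs_of_pos hpos] at ht
  have := abs_le.mp ht
  linarith [this.1]

lemma J_upper (n : ℕ) {x : ℝ} (hx : 0 < x) (h : 2 * x ^ 2 ≤ (n : ℝ) + 1) :
    besselJnat n x ≤ 8 / 7 * ((x / 2) ^ n / Nat.factorial n) := by
  have ht := tail_bound n h
  have ht0 : term n 0 x = (x / 2) ^ n / Nat.factorial n := term_zero n x
  have hpos : 0 < (x / 2) ^ n / Nat.factorial n := by positivity
  rw [ht0, abs_of_pos hpos] at ht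
  have := abs_le.mp ht
  linarith [this.2]

lemma base (n : ℕ) {x : ℝ} (hx : 0 < x) (h : 2 * x ^ 2 ≤ (n : ℝ) + 1) :
    0 < besselJnat n x ∧ ((n : ℝ) + 1) * besselJnat (n + 1) x ≤ x * besselJnat n x := by
  have hlow := J_lower n hx h
  have hpos : 0 < (x / 2) ^ n / Nat.factorial n := by positivity
  have hJ : 0 < besselJnat n x := lt_of_lt_of_le (by positivity) hlow
  refine ⟨hJ, ?_⟩
  have h1 : 2 * x ^ 2 ≤ ((n + 1 : ℕ) : ℝ) + 1 := by push_cast; linarith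
  have hup := J_upper (n + 1) hx h1
  have hfac : (Nat.factorial (n + 1) : ℝ) = ((n : ℝ) + 1) * Nat.factorial n := by
    rw [Nat.factorial_succ]; push_cast; ring
  have key : ((n : ℝ) + 1) * (8 / 7 * ((x / 2) ^ (n + 1) / Nat.factorial (n + 1)))
      ≤ x * (6 / 7 * ((x / 2) ^ n / Nat.factorial n)) := by
    rw [hfac, pow_succ]
    have hfn : (0:ℝ) < Nat.factorial n := by positivity
    have hn1 : (0:ℝ) < (n : ℝ) + 1 := by positivity
    have hp : (0:ℝ) ≤ (x / 2) ^ n := by positivity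
    have heq : ((n : ℝ) + 1) * (8 / 7 * ((x / 2) ^ n * (x / 2) / (((n : ℝ) + 1) * Nat.factorial n)))
        = 4 / 7 * (x * (x / 2) ^ n / Nat.factorial n) := by
      field_simp
      ring
    have heq2 : x * (6 / 7 * ((x / 2) ^ n / Nat.factorial n))
        = 6 / 7 * (x * (x / 2) ^ n / Nat.factorial n) := by ring
    rw [heq, heq2]
    have hc : (0:ℝ) ≤ x * (x / 2) ^ n / Nat.factorial n := by positivity
    linarith
  calc ((n : ℝ) + 1) * besselJnat (n + 1) x
      ≤ ((n : ℝ) + 1) * (8 / 7 * ((x / 2) ^ (n + 1) / Nat.factorial (n + 1))) := by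
        apply mul_le_mul_of_nonneg_left hup (by positivity)
    _ ≤ x * (6 / 7 * ((x / 2) ^ n / Nat.factorial n)) := key
    _ ≤ x * besselJnat n x := by apply mul_le_mul_of_nonneg_left hlow hx.le

lemma step (n : ℕ) {x : ℝ} (hx : 0 < x) (hxn : x ≤ (n : ℝ))
    (ih : 0 < besselJnat (n + 1) x ∧
      (((n + 1 : ℕ) : ℝ) + 1) * besselJnat (n + 1 + 1) x ≤ x * besselJnat (n + 1) x) :
    0 < besselJnat n x ∧ ((n : ℝ) + 1) * besselJnat (n + 1) x ≤ x * besselJnat n x := by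
  obtain ⟨hpos1, hratio1⟩ := ih
  push_cast at hratio1
  have hrec := recur n x
  -- x * J n = 2(n+1) J(n+1) - x * J(n+2)
  have hJ2 : x * besselJnat (n + 2) x ≤ x ^ 2 * besselJnat (n + 1) x / ((n : ℝ) + 2) := by
    have h1 : besselJnat (n + 2) x ≤ x * besselJnat (n + 1) x / ((n : ℝ) + 2) := by
      rw [le_div_iff₀ (by positivity)]
      have : besselJnat (n + 1 + 1) x = besselJnat (n + 2) x := by norm_num
      nlinarith [hratio1]
    calc x * besselJnat (n + 2) x ≤ x * (x * besselJnat (n + 1) x / ((n : ℝ) + 2)) := by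
          apply mul_le_mul_of_nonneg_left h1 hx.le
      _ = x ^ 2 * besselJnat (n + 1) x / ((n : ℝ) + 2) := by ring
  have hxJ : ((n : ℝ) + 1) * besselJnat (n + 1) x ≤ x * besselJnat n x := by
    have hx2 : x ^ 2 ≤ ((n : ℝ) + 1) * ((n : ℝ) + 2) := by nlinarith
    have hbig : x ^ 2 * besselJnat (n + 1) x / ((n : ℝ) + 2) ≤ ((n : ℝ) + 1) * besselJnat (n + 1) x := by
      rw [div_le_iff₀ (by positivity)]
      nlinarith [hpos1]
    nlinarith [hJ2, hrec, hbig]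
  have hJpos : 0 < besselJnat n x := by
    have h0 : 0 < ((n : ℝ) + 1) * besselJnat (n + 1) x :=
      mul_pos (by positivity) hpos1
    have hxJn : 0 < x * besselJnat n x := lt_of_lt_of_le h0 hxJ
    rcases mul_pos_iff.mp hxJn with ⟨_, h⟩ | ⟨h, _⟩
    · exact h
    · linarith
  exact ⟨hJpos, hxJ⟩

lemma pos_ratio (n : ℕ) {x : ℝ} (hx : 0 < x) (hxn : x ≤ (n : ℝ)) :
    0 < besselJnat n x ∧ ((n : ℝ) + 1) * besselJnat (n + 1) x ≤ x * besselJnat n x := by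
  set N := max n (Nat.ceil (2 * x ^ 2)) with hN
  have hnN : n ≤ N := le_max_left _ _
  have hbase : 2 * x ^ 2 ≤ (N : ℝ) + 1 := by
    have h1 : 2 * x ^ 2 ≤ (Nat.ceil (2 * x ^ 2) : ℝ) := Nat.le_ceil _
    have h2 : (Nat.ceil (2 * x ^ 2) : ℝ) ≤ (N : ℝ) := by exact_mod_cast Nat.cast_le.mpr (le_max_right _ _)
    linarith
  have key : ∀ d : ℕ, ∀ m : ℕ, x ≤ (m : ℝ) → m + d = N →
      0 < besselJnat m x ∧ ((m : ℝ) + 1) * besselJnat (m + 1) x ≤ x * besselJnat m x := by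
    intro d
    induction d with
    | zero =>
      intro m hm hmN
      have : m = N := by omega
      subst this
      exact base N hx hbase
    | succ d ihd =>
      intro m hm hmN
      have hm1 : x ≤ ((m + 1 : ℕ) : ℝ) := by push_cast; linarith
      have : (m + 1) + d = N := by omega
      exact step m hx hm (ihd (m + 1) hm1 this)
  exact key (N - n) n hxn (by omega)

lemma continuous_besselJnat (n : ℕ) (hn : 1 ≤ n) : Continuous (besselJnat n) := by
  rw [continuous_iff_continuousAt]
  intro x
  exact (hasDerivAt_besselJnat n hn x).continuousAt

lemma pointwise_bound (n : ℕ) (hn : 1 ≤ n) {lam x : ℝ} (hlam : 0 < lam)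
    (hle : lam ≤ (n : ℝ) - 1) (hx : 0 < x) (hxlam : x ≤ lam) :
    besselJnat n x ≤ (x / lam) ^ (((n : ℝ) - lam ^ 2 / ((n : ℝ) + 1))) * besselJnat n lam := by
  set a : ℝ := (n : ℝ) - lam ^ 2 / ((n : ℝ) + 1) with ha
  have hn1 : (0:ℝ) < (n : ℝ) + 1 := by positivity
  have hnR : (1:ℝ) ≤ (n : ℝ) := by exact_mod_cast hn
  have hapos : 0 < a := by
    have : lam ^ 2 / ((n : ℝ) + 1) < (n : ℝ) := by
      rw [div_lt_iff₀ hn1]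
      nlinarith
    simpa [ha] using sub_pos.mpr this
  -- the auxiliary function
  set h : ℝ → ℝ := fun y => besselJnat n y * y ^ (-a) with hh
  have hmono : MonotoneOn h (Set.Icc x lam) := by
    apply monotoneOn_of_deriv_nonneg (convex_Icc x lam)
    · -- continuity
      apply ContinuousOn.mul ((continuous_besselJnat n hn).continuousOn)
      intro y hy
      have hy0 : y ≠ 0 := by
        have := hy.1
        intro h0; rw [h0] at this; linarith
      exact (Real.continuousAt_rpow_const y (-a) (Or.inl hy0)).continuousWithinAt
    · -- differentiability on interior
      rw [interior_Icc]
      intro y hy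
      have hy0 : 0 < y := lt_trans hx hy.1
      exact ((hasDerivAt_besselJnat n hn y).mul
        (Real.hasDerivAt_rpow_const (Or.inl hy0.ne'))).differentiableAt.differentiableWithinAt
    · rw [interior_Icc]
      intro y hy
      have hy0 : 0 < y := lt_trans hx hy.1
      have hylam : y ≤ lam := le_of_lt hy.2
      have hD := (hasDerivAt_besselJnat n hn y).mul
        (Real.hasDerivAt_rpow_const (Or.inl hy0.ne' : y ≠ 0 ∨ 1 ≤ -a))
      rw [show deriv h y = _ from hD.deriv]
      -- deriv = D y * y^(-a) + J y * (-a * y^(-a-1))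
      set D : ℝ := ∑' k, dterm n k y with hDy
      have hxd : y * D = (n : ℝ) * besselJnat n y - y * besselJnat (n + 1) y := xderiv n hn y
      have hyn : y ≤ (n : ℝ) := by linarith
      obtain ⟨hJpos, hJratio⟩ := pos_ratio n hy0 hyn
      -- key : a * J y ≤ y * D
      have key : a * besselJnat n y ≤ y * D := by
        rw [hxd]
        have h1 : y * besselJnat (n + 1) y ≤ y ^ 2 * besselJnat n y / ((n : ℝ) + 1) := by
          have h2 : besselJnat (n + 1) y ≤ y * besselJnat n y / ((n : ℝ) + 1) := by
            rw [le_div_iff₀ hn1]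
            nlinarith
          calc y * besselJnat (n + 1) y ≤ y * (y * besselJnat n y / ((n : ℝ) + 1)) :=
                mul_le_mul_of_nonneg_left h2 hy0.le
            _ = y ^ 2 * besselJnat n y / ((n : ℝ) + 1) := by ring
        have h3 : y ^ 2 * besselJnat n y / ((n : ℝ) + 1) ≤ lam ^ 2 * besselJnat n y / ((n : ℝ) + 1) := by
          rw [div_le_div_iff₀ hn1 hn1]
          have hy2 : y ^ 2 ≤ lam ^ 2 := by nlinarith
          nlinarith [mul_nonneg (mul_nonneg (sub_nonneg.mpr hy2) hJpos.le) hn1.le]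
        have ha' : a = (n : ℝ) - lam ^ 2 / ((n : ℝ) + 1) := ha
        rw [ha']
        have : lam ^ 2 / ((n : ℝ) + 1) * besselJnat n y = lam ^ 2 * besselJnat n y / ((n : ℝ) + 1) := by
          ring
        nlinarith [h1, h3]
      -- conclude nonnegativity
      have hpow : (0:ℝ) < y ^ (-a - 1) := Real.rpow_pos_of_pos hy0 _
      have hsplit : y ^ (-a) = y ^ (-a - 1) * y := by
        rw [← Real.rpow_add_one hy0.ne' (-a - 1)]
        norm_num
      have : D * y ^ (-a) + besselJnat n y * (-a * y ^ (-a - 1))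
          = y ^ (-a - 1) * (y * D - a * besselJnat n y) := by
        rw [hsplit]; ring
      rw [this]
      have := sub_nonneg.mpr key
      positivity
  -- apply monotonicity
  have hx_mem : x ∈ Set.Icc x lam := ⟨le_refl x, hxlam⟩
  have hlam_mem : lam ∈ Set.Icc x lam := ⟨hxlam, le_refl lam⟩
  have := hmono hx_mem hlam_mem hxlam
  -- this : J x * x^(-a) ≤ J lam * lam^(-a)
  have hxa : (0:ℝ) < x ^ a := Real.rpow_pos_of_pos hx _
  have hxna : x ^ (-a) = (x ^ a)⁻¹ := Real.rpow_neg hx.le a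
  have hlna : lam ^ (-a) = (lam ^ a)⁻¹ := Real.rpow_neg hlam.le a
  have hdiv : (x / lam) ^ a = x ^ a / lam ^ a := Real.div_rpow hx.le hlam.le a
  rw [hh] at this
  simp only [hxna, hlna] at this
  rw [hdiv]
  have hla : (0:ℝ) < lam ^ a := Real.rpow_pos_of_pos hlam _
  rw [div_mul_eq_mul_div, le_div_iff₀ hla]
  calc besselJnat n x * lam ^ a = (besselJnat n x * (x ^ a)⁻¹) * (x ^ a * lam ^ a) := by
        field_simp
    _ ≤ (besselJnat n lam * (lam ^ a)⁻¹) * (x ^ a * lam ^ a) := by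
        apply mul_le_mul_of_nonneg_right this (by positivity)
    _ = x ^ a * besselJnat n lam := by
        field_simp

lemma sq_pointwise (n : ℕ) (hn : 1 ≤ n) {lam r : ℝ} (hlam : 0 < lam)
    (hle : lam ≤ (n : ℝ) - 1) (hr : 0 < r) (hr1 : r ≤ 1) :
    besselJnat n (lam * r) ^ 2 ≤
      r ^ (2 * ((n : ℝ) - lam ^ 2 / ((n : ℝ) + 1))) * besselJnat n lam ^ 2 := by
  set a : ℝ := (n : ℝ) - lam ^ 2 / ((n : ℝ) + 1) with ha
  have hx : 0 < lam * r := by positivity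
  have hxlam : lam * r ≤ lam := by nlinarith
  have hpb := pointwise_bound n hn hlam hle hx hxlam
  have hquot : lam * r / lam = r := by field_simp
  rw [hquot] at hpb
  have hxn : lam * r ≤ (n : ℝ) := by
    have h1 : (1:ℝ) ≤ (n:ℝ) := by exact_mod_cast hn
    nlinarith
  have hJpos : 0 < besselJnat n (lam * r) := (pos_ratio n hx hxn).1
  have h2 : besselJnat n (lam * r) ^ 2 ≤ (r ^ a * besselJnat n lam) ^ 2 := by
    apply pow_le_pow_left₀ hJpos.le hpb
  refine h2.trans_eq ?_
  rw [mul_pow]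
  congr 1
  rw [← Real.rpow_natCast (r ^ a) 2, ← Real.rpow_mul hr.le]
  norm_num
  ring_nf

lemma integral_bound (n : ℕ) (hn : 1 ≤ n) {lam : ℝ} (hlam : 0 < lam)
    (hle : lam ≤ (n : ℝ) - 1) :
    ∫ r in Set.Ioc (0:ℝ) 1, 2 * r * besselJnat n (lam * r) ^ 2 ≤
      ((n : ℝ) + 1) / (((n : ℝ) + 1) ^ 2 - lam ^ 2) * besselJnat n lam ^ 2 := by
  set a : ℝ := (n : ℝ) - lam ^ 2 / ((n : ℝ) + 1) with ha
  have hnR : (1:ℝ) ≤ (n : ℝ) := by exact_mod_cast hn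
  have hn1 : (0:ℝ) < (n : ℝ) + 1 := by positivity
  have hapos : 0 < a := by
    have : lam ^ 2 / ((n : ℝ) + 1) < (n : ℝ) := by
      rw [div_lt_iff₀ hn1]; nlinarith
    simp only [ha]; linarith
  set J : ℝ := besselJnat n lam with hJ
  have hcont : Continuous fun r : ℝ => 2 * r * besselJnat n (lam * r) ^ 2 := by
    apply Continuous.mul
    · exact (continuous_const.mul continuous_id)
    · exact ((continuous_besselJnat n hn).comp (continuous_const.mul continuous_id)).pow 2
  have hf_int : IntervalIntegrable (fun r : ℝ => 2 * r * besselJnat n (lam * r) ^ 2)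
      volume 0 1 := hcont.intervalIntegrable 0 1
  have hg_int : IntervalIntegrable (fun r : ℝ => (2 * J ^ 2) * r ^ (2 * a + 1)) volume 0 1 :=
    (intervalIntegral.intervalIntegrable_rpow (Or.inl (by positivity))).const_mul _
  have hpt : ∀ x ∈ Set.Icc (0:ℝ) 1, 2 * x * besselJnat n (lam * x) ^ 2
      ≤ (2 * J ^ 2) * x ^ (2 * a + 1) := by
    intro x hx
    rcases eq_or_lt_of_le hx.1 with h0 | h0
    · rw [← h0]
      rw [Real.zero_rpow (by positivity : (0:ℝ) < 2 * a + 1).ne']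
      norm_num
    · have hb := sq_pointwise n hn hlam hle h0 hx.2
      have hxa : x * x ^ (2 * a) = x ^ (2 * a + 1) := by
        rw [Real.rpow_add_one h0.ne' (2 * a)]
        ring
      calc 2 * x * besselJnat n (lam * x) ^ 2 ≤ 2 * x * (x ^ (2 * a) * J ^ 2) := by
            apply mul_le_mul_of_nonneg_left hb (by positivity)
        _ = (2 * J ^ 2) * (x * x ^ (2 * a)) := by ring
        _ = (2 * J ^ 2) * x ^ (2 * a + 1) := by rw [hxa]
  have hmono := intervalIntegral.integral_mono_on zero_le_one hf_int hg_int hpt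
  have hval : ∫ x in (0:ℝ)..1, (2 * J ^ 2) * x ^ (2 * a + 1) = 2 * J ^ 2 / (2 * a + 2) := by
    rw [intervalIntegral.integral_const_mul, integral_rpow (Or.inl (by linarith : (-1:ℝ) < 2 * a + 1))]
    rw [Real.one_rpow, Real.zero_rpow (by positivity : (0:ℝ) < 2 * a + 1 + 1).ne']
    ring
  rw [← intervalIntegral.integral_of_le zero_le_one]
  refine hmono.trans ?_
  rw [hval]
  have hd : ((n : ℝ) + 1) ^ 2 - lam ^ 2 > 0 := by nlinarith
  have heq : 2 * a + 2 = 2 * ((((n : ℝ) + 1) ^ 2 - lam ^ 2) / ((n : ℝ) + 1)) := by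
    simp only [ha]
    field_simp
    ring
  rw [heq]
  rw [div_le_iff₀ (by positivity)]
  have : ((n : ℝ) + 1) / (((n : ℝ) + 1) ^ 2 - lam ^ 2) * J ^ 2 *
      (2 * ((((n : ℝ) + 1) ^ 2 - lam ^ 2) / ((n : ℝ) + 1))) = 2 * J ^ 2 := by
    field_simp
  rw [this]
end BJ

lemma l2norm_reduce (lam : ℝ) (j : ℤ) (hj0 : 0 ≤ j) (hn1 : 1 ≤ j.toNat) :
    l2normSq unifDisk (fourierBessel lam j) =
      ∫ r in Set.Ioc (0:ℝ) 1, 2 * r * besselJnat j.toNat (lam * r) ^ 2 := by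
  classical
  set n : ℕ := j.toNat with hn
  have hpi : (0:ℝ) < Real.pi := Real.pi_pos
  have habs : ∀ z : ℂ, (‖fourierBessel lam j z‖) ^ 2
      = besselJnat n (lam * ‖z‖) ^ 2 := by
    intro z
    rw [fourierBessel, norm_mul, Complex.norm_exp]
    have hre : (Complex.I * (j:ℂ) * ((z.arg : ℝ) : ℂ)).re = 0 := by
      simp [Complex.mul_re, Complex.mul_im]
    rw [hre, Real.exp_zero, one_mul, besselJ, if_pos hj0, Complex.norm_real, Real.norm_eq_abs, sq_abs]
  set F : ℝ → ℝ := Set.indicator (Set.Icc (-1:ℝ) 1) (fun t => besselJnat n (lam * t) ^ 2) with hF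
  have step1 : l2normSq unifDisk (fourierBessel lam j)
      = Real.pi⁻¹ * ∫ z in closedBall (0:ℂ) 1, besselJnat n (lam * ‖z‖) ^ 2 := by
    rw [l2normSq, unifDisk, integral_smul_measure]
    rw [ENNReal.toReal_inv, ENNReal.toReal_ofReal hpi.le]
    rw [smul_eq_mul]
    congr 1
    exact integral_congr_ae (Filter.Eventually.of_forall fun z => habs z)
  have step2 : ∫ z in closedBall (0:ℂ) 1, besselJnat n (lam * ‖z‖) ^ 2
      = ∫ z : ℂ, F ‖z‖ := by
    rw [← integral_indicator measurableSet_closedBall]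
    congr 1
    funext z
    by_cases hz : z ∈ closedBall (0:ℂ) 1
    · have hz1 : ‖z‖ ≤ 1 := by rwa [mem_closedBall_zero_iff] at hz
      have hmem : ‖z‖ ∈ Set.Icc (-1:ℝ) 1 := ⟨by linarith [norm_nonneg z], hz1⟩
      rw [Set.indicator_of_mem hz, hF, Set.indicator_of_mem hmem]
    · have hz1 : ¬ (‖z‖ ∈ Set.Icc (-1:ℝ) 1) := by
        rw [mem_closedBall_zero_iff] at hz
        intro hmem
        exact hz hmem.2
      rw [Set.indicator_of_notMem hz, hF, Set.indicator_of_notMem hz1]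
  have step3 : ∫ z : ℂ, F ‖z‖
      = 2 • (volume (ball (0:ℂ) 1)).toReal • ∫ y in Set.Ioi (0:ℝ), y ^ (2 - 1) • F y := by
    have := integral_fun_norm_addHaar (volume : Measure ℂ) F
    rwa [Complex.finrank_real_complex] at this
  have hvol : (volume (ball (0:ℂ) 1)).toReal = Real.pi := by
    rw [Complex.volume_ball]
    simp
  have step4 : ∫ y in Set.Ioi (0:ℝ), y ^ (2 - 1) • F y
      = ∫ r in Set.Ioc (0:ℝ) 1, r * besselJnat n (lam * r) ^ 2 := by
    have hpt : ∀ y : ℝ, y ^ (2 - 1) • F y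
        = Set.indicator (Set.Icc (-1:ℝ) 1) (fun t => t * besselJnat n (lam * t) ^ 2) y := by
      intro y
      by_cases hy : y ∈ Set.Icc (-1:ℝ) 1
      · rw [hF, Set.indicator_of_mem hy, Set.indicator_of_mem hy]
        simp
      · rw [hF, Set.indicator_of_notMem hy, Set.indicator_of_notMem hy]
        simp
    rw [integral_congr_ae (Filter.Eventually.of_forall fun y => hpt y)]
    rw [integral_indicator measurableSet_Icc, Measure.restrict_restrict measurableSet_Icc]
    have hset : Set.Icc (-1:ℝ) 1 ∩ Set.Ioi 0 = Set.Ioc (0:ℝ) 1 := by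
      ext t
      simp only [Set.mem_inter_iff, Set.mem_Icc, Set.mem_Ioi, Set.mem_Ioc]
      constructor
      · rintro ⟨⟨_, h2⟩, h3⟩; exact ⟨h3, h2⟩
      · rintro ⟨h1, h2⟩; exact ⟨⟨by linarith, h2⟩, h1⟩
    rw [hset]
  rw [step1, step2, step3, hvol, step4]
  rw [smul_eq_mul, nsmul_eq_mul]
  rw [show (∫ r in Set.Ioc (0:ℝ) 1, 2 * r * besselJnat n (lam * r) ^ 2)
      = 2 * ∫ r in Set.Ioc (0:ℝ) 1, r * besselJnat n (lam * r) ^ 2 by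
    rw [← integral_const_mul]
    congr 1
    funext r
    ring]
  field_simp
  rw [show (fun r : ℝ => r * besselJnat n (r * lam) ^ 2) = fun r => r * besselJnat n (lam * r) ^ 2 from by
    funext r; rw [mul_comm r lam]]
  norm_num

/-- For `j > ⌈λ⌉`,
`‖b_{λ,j}‖²_{L²(ν₀)} ≤ 4 ((j+1)/j²) (1/(1-(λ/j)⁴) + (2/(j+1)) (λ/j)⁴/(1-(λ/j)⁴)²) J_j(λ)²`. -/
theorem stmt_5 (lam : ℝ) (hlam : 0 < lam) (j : ℤ) (hj : ⌈lam⌉ < j) :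
    l2normSq unifDisk (fourierBessel lam j) ≤
      4 * (((j : ℝ) + 1) / (j : ℝ) ^ 2) *
        (1 / (1 - (lam / (j : ℝ)) ^ 4) +
          (2 / ((j : ℝ) + 1)) * ((lam / (j : ℝ)) ^ 4 / (1 - (lam / (j : ℝ)) ^ 4) ^ 2)) *
        (besselJ j lam) ^ 2 := by
  classical
  set n : ℕ := j.toNat with hn
  have hjc : 0 < ⌈lam⌉ := Int.ceil_pos.mpr hlam
  have hj2 : (2:ℤ) ≤ j := by omega
  have hj0 : (0:ℤ) ≤ j := by omega
  have hn2 : 2 ≤ n := by omega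
  have hn1 : 1 ≤ n := by omega
  have hjn : (j:ℝ) = (n:ℝ) := by
    have := Int.toNat_of_nonneg hj0
    exact_mod_cast this.symm
  have hceil : (⌈lam⌉ : ℝ) ≤ (j:ℝ) - 1 := by
    have h1 : ⌈lam⌉ ≤ j - 1 := by omega
    have h2 : ((⌈lam⌉ : ℤ) : ℝ) ≤ ((j - 1 : ℤ) : ℝ) := by exact_mod_cast h1
    push_cast at h2
    linarith
  have hle : lam ≤ (n:ℝ) - 1 := by
    have h2 := Int.le_ceil lam
    rw [← hjn]
    linarith
  have hbj : besselJ j lam = besselJnat n lam := by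
    rw [besselJ, if_pos hj0]
  have hred := l2norm_reduce lam j hj0 hn1
  have hib := BJ.integral_bound n hn1 hlam hle
  rw [hred, hbj, hjn]
  set N : ℝ := (n:ℝ) with hN
  set L : ℝ := lam with hL
  set J : ℝ := besselJnat n lam with hJdef
  clear_value J
  have hNR : (2:ℝ) ≤ N := by rw [hN]; exact_mod_cast hn2
  have hN0 : (0:ℝ) < N := by linarith
  have hd1 : (0:ℝ) < (N + 1)^2 - L^2 := by nlinarith
  have hd2 : (0:ℝ) < N^4 - L^4 := by
    have hLN : L < N := by linarith
    have h4 : L^4 < N^4 := by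
      apply pow_lt_pow_left₀ hLN hlam.le
      norm_num
    linarith
  have hq4 : (L/N)^4 = L^4/N^4 := by rw [div_pow]
  have h1q : 1 - (L/N)^4 = (N^4 - L^4)/N^4 := by
    rw [hq4]
    field_simp
  have h1qpos : (0:ℝ) < 1 - (L/N)^4 := by
    rw [h1q]
    positivity
  have hJ2 : (0:ℝ) ≤ J^2 := sq_nonneg _
  have heqT : 4*((N+1)/N^2)*(1/(1-(L/N)^4)) = 4*(N+1)*N^2/(N^4-L^4) := by
    rw [h1q]
    field_simp
  have hbase : N^4 - L^4 ≤ 4*N^2*((N+1)^2 - L^2) := by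
    have e1 : (0:ℝ) ≤ N^2 - L^2 := by nlinarith
    have e2 : (0:ℝ) ≤ 3*N^2 - L^2 := by nlinarith
    nlinarith [mul_nonneg e1 e2]
  have hkey : (N+1)/((N+1)^2 - L^2) ≤ 4*((N+1)/N^2)*(1/(1-(L/N)^4)) := by
    rw [heqT, div_le_div_iff₀ hd1 hd2]
    have h6 := mul_le_mul_of_nonneg_left hbase (show (0:ℝ) ≤ N+1 by linarith)
    calc (N+1)*(N^4 - L^4) ≤ (N+1)*(4*N^2*((N+1)^2 - L^2)) := h6
      _ = 4*(N+1)*N^2*((N+1)^2 - L^2) := by ring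
  have hscal : (0:ℝ) ≤ 4*((N+1)/N^2)*((2/(N+1))*((L/N)^4/(1-(L/N)^4)^2)) := by
    have h1 : (0:ℝ) ≤ (L/N)^4 := by positivity
    have h2 : (0:ℝ) ≤ (1-(L/N)^4)^2 := sq_nonneg _
    have h3 : (0:ℝ) ≤ (L/N)^4/(1-(L/N)^4)^2 := div_nonneg h1 h2
    have h4 : (0:ℝ) ≤ 2/(N+1) := by positivity
    have h5 : (0:ℝ) ≤ 4*((N+1)/N^2) := by positivity
    exact mul_nonneg h5 (mul_nonneg h4 h3)
  have hextra : (0:ℝ) ≤ 4*((N+1)/N^2)*((2/(N+1))*((L/N)^4/(1-(L/N)^4)^2))*J^2 :=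
    mul_nonneg hscal hJ2
  have hsplit : 4*((N+1)/N^2)*(1/(1-(L/N)^4) + (2/(N+1))*((L/N)^4/(1-(L/N)^4)^2))*J^2
      = 4*((N+1)/N^2)*(1/(1-(L/N)^4))*J^2
        + 4*((N+1)/N^2)*((2/(N+1))*((L/N)^4/(1-(L/N)^4)^2))*J^2 := by ring
  have hstep1 : (N+1)/((N+1)^2 - L^2)*J^2 ≤ 4*((N+1)/N^2)*(1/(1-(L/N)^4))*J^2 :=
    mul_le_mul_of_nonneg_right hkey hJ2
  calc ∫ r in Set.Ioc (0:ℝ) 1, 2 * r * besselJnat n (lam * r) ^ 2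
      ≤ (N+1)/((N+1)^2 - L^2)*J^2 := hib
    _ ≤ 4*((N+1)/N^2)*(1/(1-(L/N)^4) + (2/(N+1))*((L/N)^4/(1-(L/N)^4)^2))*J^2 := by
        rw [hsplit]
        linarith
end

section
/- Let λ > 0. For every constant c < 1 there exists an integer j₀ (depending on c and λ) such that for every integer j > j₀, J_j(λ)² / ‖b_{λ,j}‖²_{L²(ν_0)} ≥ c · j/4, where ‖b_{λ,j}‖²_{L²(ν_0)} = 2 ∫_0^1 r J_j(λr)² dr is the squared norm of the Fourier-Bessel function on the closed unit disk with respect to the normalized uniform measure. In other words, J_j(λ)² / ‖b_{λ,j}‖²_{L²(ν_0)} ∼ j/4 as j → ∞. -/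
set_option maxHeartbeats 1000000


open MeasureTheory Metric

lemma tsum_exp (z : ℝ) : ∑' k : ℕ, z ^ k / (Nat.factorial k : ℝ) = Real.exp z := by
  rw [Real.exp_eq_exp_ℝ, NormedSpace.exp_eq_tsum ℝ]
  exact tsum_congr fun k => by rw [smul_eq_mul, div_eq_inv_mul]

lemma bessel_term_bound (n k : ℕ) {x : ℝ} (hx : 0 ≤ x) :
    |((-1 : ℝ) ^ k / ((Nat.factorial k : ℝ) * (Nat.factorial (n + k) : ℝ))) *
      (x / 2) ^ (n + 2 * k)|
      ≤ ((x / 2) ^ n / (Nat.factorial n : ℝ)) *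
        (((x / 2) ^ 2 / ((n : ℝ) + 1)) ^ k / (Nat.factorial k : ℝ)) := by
  have hx2 : (0:ℝ) ≤ x / 2 := by linarith
  have hnum : (0:ℝ) ≤ (x/2)^n * ((x/2)^2)^k := by positivity
  have key : ((Nat.factorial k : ℝ)) * ((Nat.factorial n : ℝ) * ((n:ℝ)+1)^k)
      ≤ (Nat.factorial k : ℝ) * (Nat.factorial (n+k) : ℝ) := by
    have h := Nat.factorial_mul_pow_le_factorial (m := n) (n := k)
    have h' : ((Nat.factorial n * (n+1)^k : ℕ) : ℝ) ≤ ((Nat.factorial (n+k) : ℕ) : ℝ) := by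
      exact_mod_cast h
    push_cast at h'
    have : (0:ℝ) < (Nat.factorial k : ℝ) := by positivity
    nlinarith [this]
  have hb : (0:ℝ) < (Nat.factorial k : ℝ) * ((Nat.factorial n : ℝ) * ((n:ℝ)+1)^k) := by
    positivity
  calc |((-1 : ℝ) ^ k / ((Nat.factorial k : ℝ) * (Nat.factorial (n + k) : ℝ))) *
      (x / 2) ^ (n + 2 * k)|
      = ((x/2)^n * ((x/2)^2)^k) / ((Nat.factorial k : ℝ) * (Nat.factorial (n + k) : ℝ)) := by
        rw [abs_mul, abs_div, abs_pow, abs_neg, abs_one, one_pow,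
          abs_of_nonneg (by positivity : (0:ℝ) ≤ (Nat.factorial k : ℝ) * (Nat.factorial (n+k) : ℝ)),
          abs_of_nonneg (pow_nonneg hx2 _), pow_add, pow_mul]
        ring
    _ ≤ ((x/2)^n * ((x/2)^2)^k) / ((Nat.factorial k : ℝ) * ((Nat.factorial n : ℝ) * ((n:ℝ)+1)^k)) :=
        div_le_div_of_nonneg_left hnum hb key
    _ = ((x / 2) ^ n / (Nat.factorial n : ℝ)) *
        (((x / 2) ^ 2 / ((n : ℝ) + 1)) ^ k / (Nat.factorial k : ℝ)) := by
        rw [div_pow]; ring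

lemma besselJnat_sub_bound (n : ℕ) {x : ℝ} (hx : 0 ≤ x) :
    |besselJnat n x - (x / 2) ^ n / (Nat.factorial n : ℝ)|
      ≤ ((x / 2) ^ n / (Nat.factorial n : ℝ)) *
        (Real.exp ((x / 2) ^ 2 / ((n : ℝ) + 1)) - 1) := by
  set T : ℝ := (x / 2) ^ n / (Nat.factorial n : ℝ) with hTdef
  set z : ℝ := (x / 2) ^ 2 / ((n : ℝ) + 1) with hzdef
  set a : ℕ → ℝ := fun k =>
    ((-1 : ℝ) ^ k / ((Nat.factorial k : ℝ) * (Nat.factorial (n + k) : ℝ))) *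
      (x / 2) ^ (n + 2 * k) with hadef
  set d : ℕ → ℝ := fun k => T * (z ^ k / (Nat.factorial k : ℝ)) with hddef
  have hd : Summable d := (Real.summable_pow_div_factorial z).mul_left T
  have hbd : ∀ k, ‖a k‖ ≤ d k := fun k => by
    simp only [hadef, hddef, hTdef, hzdef, Real.norm_eq_abs]
    exact bessel_term_bound n k hx
  have hsa : Summable a := Summable.of_norm_bounded hd hbd
  have ha0 : a 0 = T := by simp [hadef, hTdef]; ring
  have hd0 : d 0 = T := by simp [hddef]
  have hsplit : besselJnat n x = a 0 + ∑' k, a (k + 1) := by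
    rw [besselJnat]; exact Summable.tsum_eq_zero_add hsa
  have hsumd : ∑' k, d k = T * Real.exp z := by
    rw [hddef, tsum_mul_left, tsum_exp]
  have hdshift : Summable (fun k => d (k + 1)) := (summable_nat_add_iff 1).mpr hd
  have hdsplit : ∑' k, d (k + 1) = T * Real.exp z - T := by
    have h := Summable.tsum_eq_zero_add hd
    rw [hsumd, hd0] at h
    linarith
  have hnshift : Summable (fun k => ‖a (k + 1)‖) :=
    Summable.of_nonneg_of_le (fun k => norm_nonneg _) (fun k => hbd (k + 1)) hdshift
  calc |besselJnat n x - T| = |∑' k, a (k + 1)| := by rw [hsplit, ha0, add_sub_cancel_left]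
    _ ≤ ∑' k, ‖a (k + 1)‖ := norm_tsum_le_tsum_norm hnshift
    _ ≤ ∑' k, d (k + 1) := Summable.tsum_le_tsum (fun k => hbd (k + 1)) hnshift hdshift
    _ = T * Real.exp z - T := hdsplit
    _ = T * (Real.exp z - 1) := by ring

lemma besselJnat_le (n : ℕ) {x : ℝ} (hx : 0 ≤ x) :
    besselJnat n x ≤ ((x / 2) ^ n / (Nat.factorial n : ℝ)) *
      Real.exp ((x / 2) ^ 2 / ((n : ℝ) + 1)) := by
  have h := abs_le.mp (besselJnat_sub_bound n hx)
  have : ((x / 2) ^ n / (Nat.factorial n : ℝ)) * (Real.exp ((x / 2) ^ 2 / ((n:ℝ) + 1)) - 1)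
      = ((x / 2) ^ n / (Nat.factorial n : ℝ)) * Real.exp ((x / 2) ^ 2 / ((n:ℝ) + 1))
        - (x / 2) ^ n / (Nat.factorial n : ℝ) := by ring
  linarith [h.2]

lemma besselJnat_ge (n : ℕ) {x : ℝ} (hx : 0 ≤ x) :
    ((x / 2) ^ n / (Nat.factorial n : ℝ)) *
      (2 - Real.exp ((x / 2) ^ 2 / ((n : ℝ) + 1))) ≤ besselJnat n x := by
  have h := abs_le.mp (besselJnat_sub_bound n hx)
  have : ((x / 2) ^ n / (Nat.factorial n : ℝ)) * (Real.exp ((x / 2) ^ 2 / ((n:ℝ) + 1)) - 1)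
      = ((x / 2) ^ n / (Nat.factorial n : ℝ)) * Real.exp ((x / 2) ^ 2 / ((n:ℝ) + 1))
        - (x / 2) ^ n / (Nat.factorial n : ℝ) := by ring
  have h2 : ((x / 2) ^ n / (Nat.factorial n : ℝ)) *
      (2 - Real.exp ((x / 2) ^ 2 / ((n:ℝ) + 1)))
      = 2 * ((x / 2) ^ n / (Nat.factorial n : ℝ))
        - ((x / 2) ^ n / (Nat.factorial n : ℝ)) * Real.exp ((x / 2) ^ 2 / ((n:ℝ) + 1)) := by ring
  linarith [h.1]

lemma clamp_nonneg (lam : ℝ) (hl : 0 ≤ lam) (z : ℂ) :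
    0 ≤ lam * min (‖z‖) 1 :=
  mul_nonneg hl (le_min (norm_nonneg z) zero_le_one)

lemma clamp_le (lam : ℝ) (hl : 0 ≤ lam) (z : ℂ) : lam * min (‖z‖) 1 ≤ lam :=
  mul_le_of_le_one_right hl (min_le_right _ _)

lemma besselJnat_clamped_cont (n : ℕ) (lam : ℝ) (hl : 0 ≤ lam) :
    Continuous fun z : ℂ => besselJnat n (lam * min (‖z‖) 1) := by
  unfold besselJnat
  apply continuous_tsum
      (u := fun k => ((lam / 2) ^ n / (Nat.factorial n : ℝ)) *
        (((lam / 2) ^ 2 / ((n : ℝ) + 1)) ^ k / (Nat.factorial k : ℝ)))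
  · intro k
    have hc : Continuous fun z : ℂ => lam * min (‖z‖) 1 :=
      continuous_const.mul (continuous_norm.min continuous_const)
    exact continuous_const.mul ((hc.div_const 2).pow _)
  · exact ((Real.summable_pow_div_factorial _).mul_left _)
  · intro k z
    set x := lam * min (‖z‖) 1 with hxdef
    have hx0 : 0 ≤ x := clamp_nonneg lam hl z
    have hxl : x ≤ lam := clamp_le lam hl z
    have h1 : ‖((-1 : ℝ) ^ k / ((Nat.factorial k : ℝ) * (Nat.factorial (n + k) : ℝ))) *
        (x / 2) ^ (n + 2 * k)‖
        ≤ |((-1 : ℝ) ^ k / ((Nat.factorial k : ℝ) * (Nat.factorial (n + k) : ℝ))) *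
          (lam / 2) ^ (n + 2 * k)| := by
      rw [Real.norm_eq_abs, abs_mul, abs_mul]
      apply mul_le_mul_of_nonneg_left _ (abs_nonneg _)
      rw [abs_of_nonneg (pow_nonneg (by linarith) _), abs_of_nonneg (pow_nonneg (by linarith) _)]
      exact pow_le_pow_left₀ (by linarith) (by linarith) _
    exact h1.trans (bessel_term_bound n k hl)

lemma integral_norm_pow (n : ℕ) :
    ∫ z in closedBall (0 : ℂ) 1, ‖z‖ ^ (2 * n) = Real.pi / ((n : ℝ) + 1) := by
  have h1 : ∫ z in closedBall (0 : ℂ) 1, ‖z‖ ^ (2 * n)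
      = ∫ z : ℂ, (if ‖z‖ ≤ 1 then ‖z‖ ^ (2 * n) else 0) := by
    rw [← integral_indicator (measurableSet_closedBall)]
    congr 1
    funext z
    classical
    rw [Set.indicator_apply]
    simp [mem_closedBall_zero_iff]
  rw [h1]
  rw [integral_fun_norm_addHaar volume (fun r : ℝ => if r ≤ 1 then r ^ (2 * n) else 0)]
  have hdim : Module.finrank ℝ ℂ = 2 := Complex.finrank_real_complex
  rw [hdim]
  have hball : volume.real (ball (0:ℂ) 1) = Real.pi := by
    simp [Complex.volume_ball, Measure.real]
  rw [hball]
  have h2 : ∫ y in Set.Ioi (0:ℝ), y ^ (2 - 1) • (if y ≤ 1 then y ^ (2 * n) else 0)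
      = ∫ y in Set.Ioc (0:ℝ) 1, y ^ (2 * n + 1) := by
    rw [← integral_indicator measurableSet_Ioi, ← integral_indicator measurableSet_Ioc]
    congr 1
    funext y
    classical
    rw [Set.indicator_apply, Set.indicator_apply]
    by_cases hy : y ∈ Set.Ioi (0:ℝ)
    · by_cases hy1 : y ≤ 1
      · have hmem : y ∈ Set.Ioc (0:ℝ) 1 := ⟨hy, hy1⟩
        simp [hy, hy1, hmem, pow_succ, smul_eq_mul, mul_comm]
      · have hmem : y ∉ Set.Ioc (0:ℝ) 1 := fun h => hy1 h.2
        simp [hy, hy1, hmem]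
    · have hmem : y ∉ Set.Ioc (0:ℝ) 1 := fun h => hy (Set.mem_Ioi.mpr h.1)
      simp [hy, hmem]
  rw [h2]
  have h3 : ∫ y in Set.Ioc (0:ℝ) 1, y ^ (2 * n + 1) = 1 / (2 * (n:ℝ) + 2) := by
    rw [← intervalIntegral.integral_of_le zero_le_one, integral_pow]
    push_cast
    ring
  rw [h3]
  simp only [smul_eq_mul, nsmul_eq_mul]
  push_cast
  field_simp

lemma besselJ_natCast (n : ℕ) (x : ℝ) : besselJ (n : ℤ) x = besselJnat n x := by
  simp [besselJ]

lemma abs_fourierBessel (lam : ℝ) (j : ℤ) (z : ℂ) :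
    ‖fourierBessel lam j z‖ = |besselJ j (lam * ‖z‖)| := by
  unfold fourierBessel
  rw [norm_mul, Complex.norm_exp, Complex.norm_real, Real.norm_eq_abs]
  have : (Complex.I * (j : ℂ) * ((z.arg : ℝ) : ℂ)).re = 0 := by
    simp [Complex.mul_re, Complex.mul_im]
  rw [this, Real.exp_zero, one_mul]

lemma l2normSq_fourierBessel (lam : ℝ) (j : ℤ) :
    l2normSq unifDisk (fourierBessel lam j) =
      Real.pi⁻¹ * ∫ z in closedBall (0 : ℂ) 1, (besselJ j (lam * ‖z‖)) ^ 2 := by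
  unfold l2normSq unifDisk
  rw [integral_smul_measure]
  have hc : ((ENNReal.ofReal Real.pi)⁻¹).toReal = Real.pi⁻¹ := by
    rw [ENNReal.toReal_inv, ENNReal.toReal_ofReal Real.pi_pos.le]
  rw [hc, smul_eq_mul]
  congr 1
  apply integral_congr_ae
  filter_upwards with z
  rw [abs_fourierBessel, sq_abs]

/-- For every `c < 1` there exists `j₀` such that for all integers `j > j₀`,
`J_j(λ)² / ‖b_{λ,j}‖²_{L²(ν₀)} ≥ c · j/4`. -/
theorem stmt_6 (lam : ℝ) (hlam : 0 < lam) :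
    ∀ c : ℝ, c < 1 → ∃ j₀ : ℕ, ∀ j : ℕ, j₀ < j →
      c * (j : ℝ) / 4 ≤
        (besselJ (j : ℤ) lam) ^ 2 / l2normSq unifDisk (fourierBessel lam (j : ℤ)) := by
  intro c hc
  refine ⟨⌈lam ^ 2 / (4 * Real.log (4 / 3))⌉₊, ?_⟩
  intro n hn
  have hlog : 0 < Real.log (4 / 3) := Real.log_pos (by norm_num)
  have hn1 : (0 : ℝ) < (n : ℝ) + 1 := by positivity
  set u : ℝ := lam ^ 2 / (4 * ((n : ℝ) + 1)) with hu
  have hu_le : u ≤ Real.log (4 / 3) := by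
    have h1 : lam ^ 2 / (4 * Real.log (4 / 3)) ≤ (n : ℝ) :=
      le_trans (Nat.le_ceil _) (by exact_mod_cast hn.le)
    rw [div_le_iff₀ (by positivity)] at h1
    rw [hu, div_le_iff₀ (by positivity)]
    nlinarith
  set E : ℝ := Real.exp u with hE'
  have hE1 : 1 ≤ E := Real.one_le_exp (by positivity)
  have hE : E ≤ 4 / 3 := by
    calc E ≤ Real.exp (Real.log (4 / 3)) := Real.exp_le_exp.mpr hu_le
      _ = 4 / 3 := Real.exp_log (by norm_num)
  set T : ℝ := (lam / 2) ^ n / (Nat.factorial n : ℝ) with hT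
  have hTpos : 0 < T := by positivity
  -- pointwise bounds on the disk
  have hpt : ∀ z ∈ closedBall (0 : ℂ) 1,
      (T * (2 - E)) ^ 2 * ‖z‖ ^ (2 * n)
        ≤ (besselJ (n : ℤ) (lam * ‖z‖)) ^ 2 ∧
      (besselJ (n : ℤ) (lam * ‖z‖)) ^ 2
        ≤ (T * E) ^ 2 * ‖z‖ ^ (2 * n) := by
    intro z hz
    set r : ℝ := ‖z‖ with hr
    have hr0 : 0 ≤ r := norm_nonneg z
    have hr1 : r ≤ 1 := by rwa [mem_closedBall_zero_iff] at hz
    set x : ℝ := lam * r with hx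
    have hx0 : 0 ≤ x := mul_nonneg hlam.le hr0
    have hxT : (x / 2) ^ n / (Nat.factorial n : ℝ) = T * r ^ n := by
      rw [hT, hx]
      rw [show lam * r / 2 = lam / 2 * r by ring, mul_pow]
      ring
    have hxu : (x / 2) ^ 2 / ((n : ℝ) + 1) ≤ u := by
      have hr2 : r ^ 2 ≤ 1 := by nlinarith
      rw [hu, hx, div_le_div_iff₀ (by positivity) (by positivity)]
      nlinarith [mul_nonneg (mul_nonneg (sub_nonneg.mpr hr2) (sq_nonneg lam)) hn1.le]
    have hexp_le : Real.exp ((x / 2) ^ 2 / ((n : ℝ) + 1)) ≤ E :=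
      Real.exp_le_exp.mpr hxu
    have hcoef : 0 ≤ T * r ^ n := by positivity
    have hup : besselJ (n : ℤ) x ≤ T * r ^ n * E := by
      rw [besselJ_natCast]
      calc besselJnat n x ≤ ((x / 2) ^ n / (Nat.factorial n : ℝ)) *
            Real.exp ((x / 2) ^ 2 / ((n : ℝ) + 1)) := besselJnat_le n hx0
        _ ≤ T * r ^ n * E := by
            rw [hxT]
            exact mul_le_mul_of_nonneg_left hexp_le hcoef
    have hlo : T * r ^ n * (2 - E) ≤ besselJ (n : ℤ) x := by
      rw [besselJ_natCast]
      calc T * r ^ n * (2 - E)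
          ≤ ((x / 2) ^ n / (Nat.factorial n : ℝ)) *
            (2 - Real.exp ((x / 2) ^ 2 / ((n : ℝ) + 1))) := by
            rw [hxT]
            exact mul_le_mul_of_nonneg_left (by linarith) hcoef
        _ ≤ besselJnat n x := besselJnat_ge n hx0
    have hlo0 : 0 ≤ T * r ^ n * (2 - E) := by
      apply mul_nonneg hcoef; linarith
    have hB0 : 0 ≤ besselJ (n : ℤ) x := le_trans hlo0 hlo
    have hr2n : r ^ (2 * n) = (r ^ n) ^ 2 := by rw [mul_comm, pow_mul]
    constructor
    · have := pow_le_pow_left₀ hlo0 hlo 2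
      calc (T * (2 - E)) ^ 2 * r ^ (2 * n) = (T * r ^ n * (2 - E)) ^ 2 := by
            rw [hr2n]; ring
        _ ≤ (besselJ (n : ℤ) x) ^ 2 := this
    · have := pow_le_pow_left₀ hB0 hup 2
      calc (besselJ (n : ℤ) x) ^ 2 ≤ (T * r ^ n * E) ^ 2 := this
        _ = (T * E) ^ 2 * r ^ (2 * n) := by rw [hr2n]; ring
  -- integrability
  have hmeas : MeasurableSet (closedBall (0 : ℂ) 1) := measurableSet_closedBall
  have hcomp : IsCompact (closedBall (0 : ℂ) 1) := isCompact_closedBall _ _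
  have hint_f : IntegrableOn (fun z : ℂ => (besselJ (n : ℤ) (lam * ‖z‖)) ^ 2)
      (closedBall (0 : ℂ) 1) volume := by
    have hcont : Continuous fun z : ℂ =>
        (besselJnat n (lam * min (‖z‖) 1)) ^ 2 :=
      (besselJnat_clamped_cont n lam hlam.le).pow 2
    refine (hcont.continuousOn.integrableOn_compact hcomp).congr_fun ?_ hmeas
    intro z hz
    have hr1 : ‖z‖ ≤ 1 := by
      rwa [mem_closedBall_zero_iff] at hz
    simp only [min_eq_left hr1, besselJ_natCast]
  have hint_lo : IntegrableOn
      (fun z : ℂ => (T * (2 - E)) ^ 2 * ‖z‖ ^ (2 * n))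
      (closedBall (0 : ℂ) 1) volume :=
    (Continuous.continuousOn (by
      exact continuous_const.mul (continuous_norm.pow _))).integrableOn_compact hcomp
  have hint_hi : IntegrableOn
      (fun z : ℂ => (T * E) ^ 2 * ‖z‖ ^ (2 * n))
      (closedBall (0 : ℂ) 1) volume :=
    (Continuous.continuousOn (by
      exact continuous_const.mul (continuous_norm.pow _))).integrableOn_compact hcomp
  -- integral bounds
  have hIconst_lo : ∫ z in closedBall (0 : ℂ) 1,
      (T * (2 - E)) ^ 2 * ‖z‖ ^ (2 * n)
      = (T * (2 - E)) ^ 2 * (Real.pi / ((n : ℝ) + 1)) := by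
    rw [integral_const_mul, integral_norm_pow]
  have hIconst_hi : ∫ z in closedBall (0 : ℂ) 1,
      (T * E) ^ 2 * ‖z‖ ^ (2 * n)
      = (T * E) ^ 2 * (Real.pi / ((n : ℝ) + 1)) := by
    rw [integral_const_mul, integral_norm_pow]
  have hI_lo : (T * (2 - E)) ^ 2 * (Real.pi / ((n : ℝ) + 1))
      ≤ ∫ z in closedBall (0 : ℂ) 1, (besselJ (n : ℤ) (lam * ‖z‖)) ^ 2 := by
    rw [← hIconst_lo]
    exact setIntegral_mono_on hint_lo hint_f hmeas (fun z hz => (hpt z hz).1)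
  have hI_hi : (∫ z in closedBall (0 : ℂ) 1, (besselJ (n : ℤ) (lam * ‖z‖)) ^ 2)
      ≤ (T * E) ^ 2 * (Real.pi / ((n : ℝ) + 1)) := by
    rw [← hIconst_hi]
    exact setIntegral_mono_on hint_f hint_hi hmeas (fun z hz => (hpt z hz).2)
  -- norm bounds
  set N : ℝ := l2normSq unifDisk (fourierBessel lam (n : ℤ)) with hN
  have hNeq : N = Real.pi⁻¹ *
      ∫ z in closedBall (0 : ℂ) 1, (besselJ (n : ℤ) (lam * ‖z‖)) ^ 2 :=
    l2normSq_fourierBessel lam (n : ℤ)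
  have hpi : (0 : ℝ) < Real.pi := Real.pi_pos
  have hN_lo : (T * (2 - E)) ^ 2 / ((n : ℝ) + 1) ≤ N := by
    rw [hNeq]
    calc (T * (2 - E)) ^ 2 / ((n : ℝ) + 1)
        = Real.pi⁻¹ * ((T * (2 - E)) ^ 2 * (Real.pi / ((n : ℝ) + 1))) := by
          field_simp
      _ ≤ _ := by
          apply mul_le_mul_of_nonneg_left hI_lo (by positivity)
  have hN_hi : N ≤ (T * E) ^ 2 / ((n : ℝ) + 1) := by
    rw [hNeq]
    calc Real.pi⁻¹ * ∫ z in closedBall (0 : ℂ) 1,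
          (besselJ (n : ℤ) (lam * ‖z‖)) ^ 2
        ≤ Real.pi⁻¹ * ((T * E) ^ 2 * (Real.pi / ((n : ℝ) + 1))) :=
          mul_le_mul_of_nonneg_left hI_hi (by positivity)
      _ = (T * E) ^ 2 / ((n : ℝ) + 1) := by field_simp
  have h2E : (0 : ℝ) < 2 - E := by linarith
  have hNpos : 0 < N := lt_of_lt_of_le (by positivity) hN_lo
  -- bound on J at lam
  have hJ : T * (2 - E) ≤ besselJ (n : ℤ) lam := by
    rw [besselJ_natCast]
    have hequ : (lam / 2) ^ 2 / ((n : ℝ) + 1) = u := by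
      rw [hu, div_pow, div_div]; norm_num
    have := besselJnat_ge n hlam.le
    rw [hequ, ← hT] at this
    exact this
  have hJsq : (T * (2 - E)) ^ 2 ≤ (besselJ (n : ℤ) lam) ^ 2 :=
    pow_le_pow_left₀ (by positivity) hJ 2
  -- final chain
  have hstep : (T * (2 - E)) ^ 2 / ((T * E) ^ 2 / ((n : ℝ) + 1))
      ≤ (besselJ (n : ℤ) lam) ^ 2 / N :=
    div_le_div₀ (sq_nonneg _) hJsq hNpos hN_hi
  refine le_trans ?_ hstep
  rw [le_div_iff₀ (by positivity)]
  have hcn : c * (n : ℝ) ≤ (n : ℝ) + 1 := by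
    nlinarith [Nat.cast_nonneg (α := ℝ) n]
  calc c * (n : ℝ) / 4 * ((T * E) ^ 2 / ((n : ℝ) + 1))
      ≤ (((n : ℝ) + 1) / 4) * ((T * E) ^ 2 / ((n : ℝ) + 1)) := by
        apply mul_le_mul_of_nonneg_right (by linarith) (by positivity)
    _ = (T * E) ^ 2 / 4 := by field_simp
    _ ≤ (T * (2 - E)) ^ 2 := by
        have h43 : (0:ℝ) ≤ (4 - 3 * E) * (4 - E) :=
          mul_nonneg (by linarith) (by linarith)
        nlinarith [mul_nonneg (sq_nonneg T) h43]
end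

section
/- Let λ > 0 and let j be an integer with j > λ. Then the function r ↦ J_j(λr) is monotone increasing on [0, 1]; consequently the Fourier-Bessel function b_{λ,j} satisfies sup_{x ∈ Ω} |b_{λ,j}(x)| = J_j(λ), where Ω is the closed unit disk in ℝ². -/
set_option maxHeartbeats 1000000


open MeasureTheory Metric

namespace S8


noncomputable def wf (n : ℕ) (v : ℝ) (k : ℕ) : ℝ :=
  ((n + 2*k : ℕ) : ℝ)^2 * v^k / (k.factorial : ℝ)

noncomputable def Jt (n k : ℕ) (x : ℝ) : ℝ :=
  ((-1 : ℝ) ^ k / ((Nat.factorial k : ℝ) * (Nat.factorial (n + k) : ℝ))) * (x / 2) ^ (n + 2 * k)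

noncomputable def Jd (n k : ℕ) (x : ℝ) : ℝ :=
  ((-1 : ℝ) ^ k / ((Nat.factorial k : ℝ) * (Nat.factorial (n + k) : ℝ))) *
    (((n + 2*k : ℕ) : ℝ) * (x / 2) ^ (n + 2 * k - 1) * (1/2))

noncomputable def Ht (n k : ℕ) (x : ℝ) : ℝ :=
  ((-1 : ℝ) ^ k * ((n + 2*k : ℕ) : ℝ) / ((Nat.factorial k : ℝ) * (Nat.factorial (n + k) : ℝ))) *
    (x / 2) ^ (n + 2 * k)

noncomputable def Hd (n k : ℕ) (x : ℝ) : ℝ :=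
  ((-1 : ℝ) ^ k * ((n + 2*k : ℕ) : ℝ) / ((Nat.factorial k : ℝ) * (Nat.factorial (n + k) : ℝ))) *
    (((n + 2*k : ℕ) : ℝ) * (x / 2) ^ (n + 2 * k - 1) * (1/2))

noncomputable def gf (n : ℕ) (x : ℝ) : ℝ := ∑' k, Jd n k x
noncomputable def hf (n : ℕ) (x : ℝ) : ℝ := ∑' k, Ht n k x
noncomputable def pf (n : ℕ) (x : ℝ) : ℝ := ∑' k, Hd n k x

lemma besselJnat_eq (n : ℕ) (x : ℝ) : besselJnat n x = ∑' k, Jt n k x := rfl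

lemma term_bounds (n k : ℕ) (hn : 1 ≤ n) {x R : ℝ} (hR : 1 ≤ R) (hx : |x| ≤ R) :
    |Jt n k x| ≤ R^n * wf n (R^2) k ∧ |Jd n k x| ≤ R^(n-1) * wf n (R^2) k ∧
    |Ht n k x| ≤ R^n * wf n (R^2) k ∧ |Hd n k x| ≤ R^(n-1) * wf n (R^2) k := by
  have hR0 : (0:ℝ) < R := by linarith
  have hc : (1:ℝ) ≤ ((n + 2*k : ℕ) : ℝ) := by
    exact_mod_cast le_trans hn (Nat.le_add_right _ _)
  have hfk : (1:ℝ) ≤ (k.factorial : ℝ) := by exact_mod_cast k.factorial_pos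
  have hfnk : (1:ℝ) ≤ ((n+k).factorial : ℝ) := by exact_mod_cast (n+k).factorial_pos
  have hx2 : |x/2| ≤ R := by
    rw [abs_div, abs_two]; linarith [abs_nonneg x, div_le_self (abs_nonneg x) (by norm_num : (1:ℝ) ≤ 2)]
  have hA1 : |x/2|^(n+2*k) ≤ R^n * (R^2)^k := by
    calc |x/2|^(n+2*k) ≤ R^(n+2*k) := pow_le_pow_left₀ (abs_nonneg _) hx2 _
      _ = R^n * (R^2)^k := by rw [pow_add, pow_mul]
  have hA2 : |x/2|^(n+2*k-1) ≤ R^(n-1) * (R^2)^k := by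
    have he : n + 2*k - 1 = (n-1) + 2*k := by omega
    calc |x/2|^(n+2*k-1) ≤ R^(n+2*k-1) := pow_le_pow_left₀ (abs_nonneg _) hx2 _
      _ = R^(n-1) * (R^2)^k := by rw [he, pow_add, pow_mul]
  have hF : (1:ℝ) ≤ (k.factorial : ℝ) * ((n+k).factorial : ℝ) := one_le_mul_of_one_le_of_one_le hfk hfnk
  have hcoef : |((-1 : ℝ) ^ k / ((k.factorial : ℝ) * ((n+k).factorial : ℝ)))| =
      1 / ((k.factorial : ℝ) * ((n+k).factorial : ℝ)) := by
    rw [abs_div, abs_pow, abs_neg, abs_one, one_pow, abs_of_pos (by linarith)]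
  have hcoef_le : (1:ℝ) / ((k.factorial : ℝ) * ((n+k).factorial : ℝ)) ≤ 1 / (k.factorial : ℝ) := by
    apply div_le_div_of_nonneg_left (by norm_num) (by linarith)
    nlinarith
  have hwf : wf n (R^2) k = ((n + 2*k : ℕ) : ℝ)^2 * (R^2)^k / (k.factorial : ℝ) := rfl
  have hpos1 : (0:ℝ) ≤ (R^2)^k / (k.factorial : ℝ) := by positivity
  set c : ℝ := ((n + 2*k : ℕ) : ℝ) with hcc
  refine ⟨?_, ?_, ?_, ?_⟩
  · calc |Jt n k x| = |((-1 : ℝ) ^ k / ((k.factorial : ℝ) * ((n+k).factorial : ℝ)))| * |x/2|^(n+2*k) := by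
          rw [Jt, abs_mul, abs_pow]
      _ ≤ (1/(k.factorial : ℝ)) * (R^n * (R^2)^k) := by
          rw [hcoef]
          exact mul_le_mul hcoef_le hA1 (by positivity) (by positivity)
      _ ≤ R^n * wf n (R^2) k := by
          rw [hwf]
          have : (1:ℝ) ≤ c^2 := by nlinarith
          rw [div_mul_eq_mul_div, mul_div_assoc, one_mul]
          rw [mul_div_assoc]
          apply mul_le_mul_of_nonneg_left _ (by positivity)
          calc (R^2)^k / (k.factorial : ℝ) = 1 * ((R^2)^k / (k.factorial : ℝ)) := by ring
            _ ≤ c^2 * ((R^2)^k / (k.factorial : ℝ)) := mul_le_mul_of_nonneg_right this hpos1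
            _ = c^2 * (R^2)^k / (k.factorial : ℝ) := by ring
  · calc |Jd n k x| = |((-1 : ℝ) ^ k / ((k.factorial : ℝ) * ((n+k).factorial : ℝ)))| *
          (c * |x/2|^(n+2*k-1) * (1/2)) := by
          rw [Jd, abs_mul, abs_mul, abs_mul, abs_pow]
          congr 2
          · congr 1; rw [abs_of_pos (by linarith)]
          · norm_num
      _ ≤ (1/(k.factorial : ℝ)) * (c * (R^(n-1) * (R^2)^k) * (1/2)) := by
          rw [hcoef]
          apply mul_le_mul hcoef_le _ (by positivity) (by positivity)
          apply mul_le_mul_of_nonneg_right _ (by norm_num)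
          exact mul_le_mul_of_nonneg_left hA2 (by linarith)
      _ ≤ R^(n-1) * wf n (R^2) k := by
          rw [hwf]
          have h1 : c * (1/2) ≤ c^2 := by nlinarith
          have : (1/(k.factorial : ℝ)) * (c * (R^(n-1) * (R^2)^k) * (1/2)) =
              R^(n-1) * ((c * (1/2)) * ((R^2)^k / (k.factorial : ℝ))) := by ring
          rw [this]
          apply mul_le_mul_of_nonneg_left _ (by positivity)
          calc (c * (1/2)) * ((R^2)^k / (k.factorial : ℝ)) ≤ c^2 * ((R^2)^k / (k.factorial : ℝ)) :=
                mul_le_mul_of_nonneg_right h1 hpos1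
            _ = c^2 * (R^2)^k / (k.factorial : ℝ) := by ring
  · calc |Ht n k x| = |(-1 : ℝ) ^ k * c / ((k.factorial : ℝ) * ((n+k).factorial : ℝ))| * |x/2|^(n+2*k) := by
          rw [Ht, abs_mul, abs_pow]
      _ = (c / ((k.factorial : ℝ) * ((n+k).factorial : ℝ))) * |x/2|^(n+2*k) := by
          congr 1
          rw [abs_div, abs_mul, abs_pow, abs_neg, abs_one, one_pow, one_mul,
            abs_of_pos (by linarith : (0:ℝ) < c), abs_of_pos (by linarith)]
      _ ≤ (c/(k.factorial : ℝ)) * (R^n * (R^2)^k) := by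
          apply mul_le_mul _ hA1 (by positivity) (by positivity)
          apply div_le_div_of_nonneg_left (by linarith) (by linarith)
          nlinarith
      _ ≤ R^n * wf n (R^2) k := by
          rw [hwf]
          have h1 : c ≤ c^2 := by nlinarith
          have : (c/(k.factorial : ℝ)) * (R^n * (R^2)^k) =
              R^n * (c * ((R^2)^k / (k.factorial : ℝ))) := by ring
          rw [this]
          apply mul_le_mul_of_nonneg_left _ (by positivity)
          calc c * ((R^2)^k / (k.factorial : ℝ)) ≤ c^2 * ((R^2)^k / (k.factorial : ℝ)) :=
                mul_le_mul_of_nonneg_right h1 hpos1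
            _ = c^2 * (R^2)^k / (k.factorial : ℝ) := by ring
  · calc |Hd n k x| = |(-1 : ℝ) ^ k * c / ((k.factorial : ℝ) * ((n+k).factorial : ℝ))| *
          (c * |x/2|^(n+2*k-1) * (1/2)) := by
          rw [Hd, abs_mul, abs_mul, abs_mul, abs_pow]
          congr 2
          · congr 1; rw [abs_of_pos (by linarith)]
          · norm_num
      _ = (c / ((k.factorial : ℝ) * ((n+k).factorial : ℝ))) * (c * |x/2|^(n+2*k-1) * (1/2)) := by
          congr 1
          rw [abs_div, abs_mul, abs_pow, abs_neg, abs_one, one_pow, one_mul,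
            abs_of_pos (by linarith : (0:ℝ) < c), abs_of_pos (by linarith)]
      _ ≤ (c/(k.factorial : ℝ)) * (c * (R^(n-1) * (R^2)^k) * (1/2)) := by
          apply mul_le_mul _ _ (by positivity) (by positivity)
          · apply div_le_div_of_nonneg_left (by linarith) (by linarith)
            nlinarith
          · apply mul_le_mul_of_nonneg_right _ (by norm_num)
            exact mul_le_mul_of_nonneg_left hA2 (by linarith)
      _ ≤ R^(n-1) * wf n (R^2) k := by
          rw [hwf]
          have h1 : c * c * (1/2) ≤ c^2 := by nlinarith
          have : (c/(k.factorial : ℝ)) * (c * (R^(n-1) * (R^2)^k) * (1/2)) =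
              R^(n-1) * ((c * c * (1/2)) * ((R^2)^k / (k.factorial : ℝ))) := by ring
          rw [this]
          apply mul_le_mul_of_nonneg_left _ (by positivity)
          calc (c * c * (1/2)) * ((R^2)^k / (k.factorial : ℝ)) ≤ c^2 * ((R^2)^k / (k.factorial : ℝ)) :=
                mul_le_mul_of_nonneg_right h1 hpos1
            _ = c^2 * (R^2)^k / (k.factorial : ℝ) := by ring

lemma wf_nonneg (n : ℕ) {v : ℝ} (hv : 0 ≤ v) (k : ℕ) : 0 ≤ wf n v k := by
  unfold wf; positivity

lemma summable_wf (n : ℕ) (hn : 1 ≤ n) {v : ℝ} (hv : 0 ≤ v) : Summable (wf n v) := by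
  apply summable_of_ratio_norm_eventually_le (r := 1/2) (by norm_num)
  filter_upwards [Filter.eventually_ge_atTop (Nat.ceil (18 * v))] with k hk
  have hk' : 18 * v ≤ (k : ℝ) + 1 := by
    calc 18 * v ≤ (Nat.ceil (18*v) : ℝ) := Nat.le_ceil _
    _ ≤ (k : ℝ) := by exact_mod_cast hk
    _ ≤ (k : ℝ) + 1 := by linarith
  have h1 : (1:ℝ) ≤ ((n + 2*k : ℕ) : ℝ) := by
    have : 1 ≤ n + 2*k := le_trans hn (Nat.le_add_right _ _)
    exact_mod_cast this
  have h3 : ((n + 2*(k+1) : ℕ) : ℝ) ≤ 3 * ((n + 2*k : ℕ) : ℝ) := by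
    have := h1; push_cast at this ⊢; linarith
  have hfac : ((k+1).factorial : ℝ) = (k+1) * (k.factorial : ℝ) := by
    rw [Nat.factorial_succ]; push_cast; ring
  have hkf : (0:ℝ) < (k.factorial : ℝ) := by exact_mod_cast k.factorial_pos
  rw [Real.norm_eq_abs, Real.norm_eq_abs, abs_of_nonneg (wf_nonneg n hv _),
    abs_of_nonneg (wf_nonneg n hv _)]
  unfold wf
  rw [hfac, div_le_iff₀ (by positivity)]
  have hvk : (0:ℝ) ≤ v^k := by positivity
  have key : ((n + 2*(k+1) : ℕ) : ℝ)^2 * v ≤ (1/2) * ((n+2*k : ℕ):ℝ)^2 * (k+1) := by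
    calc ((n + 2*(k+1) : ℕ) : ℝ)^2 * v ≤ (3 * ((n + 2*k : ℕ) : ℝ))^2 * v := by
          apply mul_le_mul_of_nonneg_right _ hv
          apply pow_le_pow_left₀ (by positivity) h3
      _ = 9 * ((n+2*k:ℕ):ℝ)^2 * v := by ring
      _ ≤ 9 * ((n+2*k:ℕ):ℝ)^2 * (((k:ℝ)+1)/18) := by
          apply mul_le_mul_of_nonneg_left (by linarith) (by positivity)
      _ = (1/2) * ((n+2*k:ℕ):ℝ)^2 * (k+1) := by ring
  calc ((n + 2*(k+1) : ℕ) : ℝ)^2 * v^(k+1) = (((n + 2*(k+1):ℕ):ℝ)^2 * v) * v^k := by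
        rw [pow_succ]; ring
    _ ≤ ((1/2) * ((n+2*k:ℕ):ℝ)^2 * (k+1)) * v^k := mul_le_mul_of_nonneg_right key hvk
    _ = 1/2 * (((n+2*k:ℕ):ℝ)^2 * v^k / (k.factorial:ℝ)) * (((k:ℝ)+1) * (k.factorial:ℝ)) := by
        field_simp

lemma summable_absJt (n : ℕ) (hn : 1 ≤ n) (x : ℝ) : Summable (fun k => |Jt n k x|) :=
  Summable.of_nonneg_of_le (fun _ => abs_nonneg _)
    (fun k => (term_bounds n k hn (le_max_right |x| 1) (le_max_left |x| 1)).1)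
    (((summable_wf n hn (by positivity)).mul_left _))

lemma summable_absHt (n : ℕ) (hn : 1 ≤ n) (x : ℝ) : Summable (fun k => |Ht n k x|) :=
  Summable.of_nonneg_of_le (fun _ => abs_nonneg _)
    (fun k => (term_bounds n k hn (le_max_right |x| 1) (le_max_left |x| 1)).2.2.1)
    (((summable_wf n hn (by positivity)).mul_left _))

lemma summable_absHd (n : ℕ) (hn : 1 ≤ n) (x : ℝ) : Summable (fun k => |Hd n k x|) :=
  Summable.of_nonneg_of_le (fun _ => abs_nonneg _)
    (fun k => (term_bounds n k hn (le_max_right |x| 1) (le_max_left |x| 1)).2.2.2)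
    (((summable_wf n hn (by positivity)).mul_left _))

lemma summable_Jt (n : ℕ) (hn : 1 ≤ n) (x : ℝ) : Summable (fun k => Jt n k x) :=
  (summable_absJt n hn x).of_abs

lemma summable_Ht (n : ℕ) (hn : 1 ≤ n) (x : ℝ) : Summable (fun k => Ht n k x) :=
  (summable_absHt n hn x).of_abs

lemma summable_Hd (n : ℕ) (hn : 1 ≤ n) (x : ℝ) : Summable (fun k => Hd n k x) :=
  (summable_absHd n hn x).of_abs

lemma hasDerivAt_Jt (n k : ℕ) (x : ℝ) : HasDerivAt (fun y => Jt n k y) (Jd n k x) x := by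
  have h1 : HasDerivAt (fun y : ℝ => y/2) (1/2) x := (hasDerivAt_id x).div_const 2
  have h : HasDerivAt (fun y : ℝ => (y/2)^(n+2*k))
      (((n+2*k : ℕ) : ℝ) * (x/2)^(n+2*k-1) * (1/2)) x := by
    have := (hasDerivAt_pow (n+2*k) (x/2)).comp x h1
    simpa [Function.comp_def] using this
  exact h.const_mul _

lemma hasDerivAt_Ht (n k : ℕ) (x : ℝ) : HasDerivAt (fun y => Ht n k y) (Hd n k x) x := by
  have h1 : HasDerivAt (fun y : ℝ => y/2) (1/2) x := (hasDerivAt_id x).div_const 2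
  have h : HasDerivAt (fun y : ℝ => (y/2)^(n+2*k))
      (((n+2*k : ℕ) : ℝ) * (x/2)^(n+2*k-1) * (1/2)) x := by
    have := (hasDerivAt_pow (n+2*k) (x/2)).comp x h1
    simpa [Function.comp_def] using this
  exact h.const_mul _

lemma hasDerivAt_J (n : ℕ) (hn : 1 ≤ n) (x : ℝ) :
    HasDerivAt (besselJnat n) (gf n x) x := by
  set R : ℝ := |x| + 1 with hR
  have hR1 : 1 ≤ R := by rw [hR]; linarith [abs_nonneg x]
  have hmem : x ∈ Set.Ioo (-R) R := by
    constructor <;> [nlinarith [neg_abs_le x]; nlinarith [le_abs_self x]]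
  have := hasDerivAt_tsum_of_isPreconnected
    (u := fun k => R^(n-1) * wf n (R^2) k)
    (((summable_wf n hn (by positivity)).mul_left _))
    (isOpen_Ioo (a := -R) (b := R)) (convex_Ioo _ _).isPreconnected
    (fun k y _ => hasDerivAt_Jt n k y)
    (fun k y hy => by
      rw [Real.norm_eq_abs]
      exact (term_bounds n k hn hR1 (abs_le.2 ⟨hy.1.le, hy.2.le⟩)).2.1)
    hmem (summable_Jt n hn x) hmem
  exact this

lemma hasDerivAt_h (n : ℕ) (hn : 1 ≤ n) (x : ℝ) :
    HasDerivAt (hf n) (pf n x) x := by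
  set R : ℝ := |x| + 1 with hR
  have hR1 : 1 ≤ R := by rw [hR]; linarith [abs_nonneg x]
  have hmem : x ∈ Set.Ioo (-R) R := by
    constructor <;> [nlinarith [neg_abs_le x]; nlinarith [le_abs_self x]]
  have := hasDerivAt_tsum_of_isPreconnected
    (u := fun k => R^(n-1) * wf n (R^2) k)
    (((summable_wf n hn (by positivity)).mul_left _))
    (isOpen_Ioo (a := -R) (b := R)) (convex_Ioo _ _).isPreconnected
    (fun k y _ => hasDerivAt_Ht n k y)
    (fun k y hy => by
      rw [Real.norm_eq_abs]
      exact (term_bounds n k hn hR1 (abs_le.2 ⟨hy.1.le, hy.2.le⟩)).2.2.2)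
    hmem (summable_Ht n hn x) hmem
  exact this

lemma contJ (n : ℕ) (hn : 1 ≤ n) : Continuous (besselJnat n) :=
  continuous_iff_continuousAt.2 fun x => (hasDerivAt_J n hn x).differentiableAt.continuousAt

lemma contH (n : ℕ) (hn : 1 ≤ n) : Continuous (hf n) :=
  continuous_iff_continuousAt.2 fun x => (hasDerivAt_h n hn x).differentiableAt.continuousAt

lemma hf_eq (n : ℕ) (hn : 1 ≤ n) (x : ℝ) : hf n x = x * gf n x := by
  unfold hf gf
  rw [← tsum_mul_left]
  congr 1; funext k
  have hm : n + 2*k - 1 + 1 = n + 2*k := by omega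
  have hp : (x/2)^(n+2*k) = (x/2)^(n+2*k-1) * (x/2) := by rw [← pow_succ, hm]
  unfold Ht Jd
  rw [hp]; ring

lemma J_zero (n : ℕ) (hn : 1 ≤ n) : besselJnat n 0 = 0 := by
  rw [besselJnat_eq]
  have : ∀ k, Jt n k (0:ℝ) = 0 := by
    intro k
    unfold Jt
    rw [zero_div, zero_pow (by omega : n + 2*k ≠ 0), mul_zero]
  rw [tsum_congr this, tsum_zero]

lemma hf_zero (n : ℕ) (hn : 1 ≤ n) : hf n 0 = 0 := by
  unfold hf
  have : ∀ k, Ht n k (0:ℝ) = 0 := by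
    intro k
    unfold Ht
    rw [zero_div, zero_pow (by omega : n + 2*k ≠ 0), mul_zero]
  rw [tsum_congr this, tsum_zero]

lemma ode (n : ℕ) (hn : 1 ≤ n) (x : ℝ) :
    x * pf n x = (((n : ℕ) : ℝ)^2 - x^2) * besselJnat n x := by
  classical
  set D : ℕ → ℝ := fun k => x * Hd n k x - ((n:ℕ):ℝ)^2 * Jt n k x with hD
  have hsJ := summable_Jt n hn x
  have hsHd := summable_Hd n hn x
  have hsxHd : Summable (fun k => x * Hd n k x) := hsHd.mul_left x
  have hsD : Summable D := hsxHd.sub (hsJ.mul_left _)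
  have hD0 : D 0 = 0 := by
    have e5 : ((x:ℝ)/2)^(n+2*0) = (x/2)^(n+2*0-1) * (x/2) := by
      have h : n+2*0 = (n+2*0-1)+1 := by omega
      rw [h, pow_succ]
      norm_num
    simp only [hD, Hd, Jt, e5]
    push_cast
    ring
  have hDsucc : ∀ k, D (k+1) = -(x^2 * Jt n k x) := by
    intro k
    have e1 : (((k+1).factorial : ℕ) : ℝ) = ((k:ℝ)+1) * (k.factorial : ℝ) := by
      rw [Nat.factorial_succ]; push_cast; ring
    have e2 : (((n+(k+1)).factorial : ℕ) : ℝ) = ((n:ℝ)+(k:ℝ)+1) * ((n+k).factorial : ℝ) := by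
      have h : n + (k+1) = (n+k)+1 := by omega
      rw [h, Nat.factorial_succ]; push_cast; ring
    have e3 : (x/2)^(n+2*(k+1)) = (x/2)^(n+2*k) * (x/2)^2 := by
      have h : n+2*(k+1) = (n+2*k)+2 := by omega
      rw [h, pow_add]
    have e5 : ((x:ℝ)/2)^(n+2*(k+1)-1) = (x/2)^(n+2*k) * (x/2) := by
      have h : n+2*(k+1)-1 = (n+2*k)+1 := by omega
      rw [h, pow_succ]
    have hfk : ((k.factorial : ℕ) : ℝ) ≠ 0 := by exact_mod_cast k.factorial_ne_zero
    have hfnk : (((n+k).factorial : ℕ) : ℝ) ≠ 0 := by exact_mod_cast (n+k).factorial_ne_zero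
    have hk1 : ((k:ℝ)+1) ≠ 0 := by positivity
    have hnk1 : ((n:ℝ)+(k:ℝ)+1) ≠ 0 := by positivity
    have ecast : ((n + 2*(k+1) : ℕ) : ℝ) = (n:ℝ) + 2*(k:ℝ) + 2 := by push_cast; ring
    simp only [hD, Hd, Jt, e1, e2, ecast, e5, e3]
    field_simp
    ring
  have step1 : ∀ k, x * Hd n k x = ((n:ℕ):ℝ)^2 * Jt n k x + D k := by
    intro k; simp only [hD]; ring
  calc x * pf n x = ∑' k, x * Hd n k x := by rw [pf, tsum_mul_left]
    _ = ∑' k, (((n:ℕ):ℝ)^2 * Jt n k x + D k) := tsum_congr step1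
    _ = ((n:ℕ):ℝ)^2 * (∑' k, Jt n k x) + ∑' k, D k := by
        rw [Summable.tsum_add (hsJ.mul_left _) hsD, tsum_mul_left]
    _ = ((n:ℕ):ℝ)^2 * besselJnat n x + ∑' k, D k := by rw [besselJnat_eq]
    _ = (((n:ℕ):ℝ)^2 - x^2) * besselJnat n x := by
        have : ∑' k, D k = -(x^2 * besselJnat n x) := by
          rw [Summable.tsum_eq_zero_add hsD, hD0, zero_add]
          calc ∑' k, D (k+1) = ∑' k, -(x^2 * Jt n k x) := tsum_congr hDsucc
            _ = -(x^2 * ∑' k, Jt n k x) := by rw [tsum_neg, tsum_mul_left]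
            _ = -(x^2 * besselJnat n x) := by rw [besselJnat_eq]
        rw [this]; ring

lemma Jt_zero (n : ℕ) (x : ℝ) : Jt n 0 x = (x/2)^n / (n.factorial : ℝ) := by
  unfold Jt; norm_num; ring

lemma Ht_zero (n : ℕ) (x : ℝ) : Ht n 0 x = (n:ℝ) * (x/2)^n / (n.factorial : ℝ) := by
  unfold Ht; norm_num; ring

lemma tailJ (n : ℕ) (hn : 1 ≤ n) {x : ℝ} (hx : 0 ≤ x) (hx1 : x ≤ 1) (k : ℕ) :
    |Jt n (k+1) x| ≤ ((x/2)^(n+2) / (n.factorial : ℝ)) * (1/4)^k := by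
  have h2 : (0:ℝ) ≤ x/2 := by linarith
  have hq : (x/2)^2 ≤ 1/4 := by nlinarith
  have hF : (0:ℝ) < (n.factorial:ℝ) := by exact_mod_cast n.factorial_pos
  have hF1 : (0:ℝ) < ((k+1).factorial:ℝ) * ((n+(k+1)).factorial:ℝ) := by
    have a1 : (0:ℝ) < ((k+1).factorial:ℝ) := by exact_mod_cast (k+1).factorial_pos
    have a2 : (0:ℝ) < ((n+(k+1)).factorial:ℝ) := by exact_mod_cast (n+(k+1)).factorial_pos
    positivity
  have e : (x/2)^(n+2*(k+1)) = (x/2)^(n+2) * ((x/2)^2)^k := by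
    have h : n+2*(k+1) = (n+2)+2*k := by omega
    rw [h, pow_add, pow_mul]
  have habs : |Jt n (k+1) x| =
      (1/(((k+1).factorial:ℝ) * ((n+(k+1)).factorial:ℝ))) * (x/2)^(n+2*(k+1)) := by
    unfold Jt
    rw [abs_mul, abs_div, abs_pow, abs_neg, abs_one, one_pow, abs_pow,
      abs_of_nonneg h2, abs_of_nonneg hF1.le]
  have hcoef : (1:ℝ)/(((k+1).factorial:ℝ) * ((n+(k+1)).factorial:ℝ)) ≤ 1/(n.factorial:ℝ) := by
    apply div_le_div_of_nonneg_left (by norm_num) hF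
    have b1 : (n.factorial:ℝ) ≤ ((n+(k+1)).factorial:ℝ) := by
      exact_mod_cast Nat.factorial_le (by omega)
    have b2 : (1:ℝ) ≤ ((k+1).factorial:ℝ) := by exact_mod_cast (k+1).factorial_pos
    nlinarith
  have hpw : (x/2)^(n+2*(k+1)) ≤ (x/2)^(n+2) * (1/4)^k := by
    rw [e]
    apply mul_le_mul_of_nonneg_left _ (by positivity)
    exact pow_le_pow_left₀ (by positivity) hq k
  calc |Jt n (k+1) x| ≤ (1/(n.factorial:ℝ)) * ((x/2)^(n+2) * (1/4)^k) := by
        rw [habs]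
        exact mul_le_mul hcoef hpw (by positivity) (by positivity)
    _ = ((x/2)^(n+2) / (n.factorial : ℝ)) * (1/4)^k := by ring

lemma tailH (n : ℕ) (hn : 1 ≤ n) {x : ℝ} (hx : 0 ≤ x) (hx1 : x ≤ 1) (k : ℕ) :
    |Ht n (k+1) x| ≤ (2 * (x/2)^(n+2) / (n.factorial : ℝ)) * (1/4)^k := by
  have h2 : (0:ℝ) ≤ x/2 := by linarith
  have hq : (x/2)^2 ≤ 1/4 := by nlinarith
  have hF : (0:ℝ) < (n.factorial:ℝ) := by exact_mod_cast n.factorial_pos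
  have a1 : (1:ℝ) ≤ ((k+1).factorial:ℝ) := by exact_mod_cast (k+1).factorial_pos
  have a2 : (0:ℝ) < ((n+(k+1)).factorial:ℝ) := by exact_mod_cast (n+(k+1)).factorial_pos
  have hF1 : (0:ℝ) < ((k+1).factorial:ℝ) * ((n+(k+1)).factorial:ℝ) := by positivity
  have e : (x/2)^(n+2*(k+1)) = (x/2)^(n+2) * ((x/2)^2)^k := by
    have h : n+2*(k+1) = (n+2)+2*k := by omega
    rw [h, pow_add, pow_mul]
  have hc : (0:ℝ) < ((n + 2*(k+1) : ℕ):ℝ) := by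
    have : 0 < n + 2*(k+1) := by omega
    exact_mod_cast this
  have habs : |Ht n (k+1) x| =
      (((n + 2*(k+1) : ℕ):ℝ)/(((k+1).factorial:ℝ) * ((n+(k+1)).factorial:ℝ)))
        * (x/2)^(n+2*(k+1)) := by
    unfold Ht
    rw [abs_mul, abs_div, abs_mul, abs_pow, abs_neg, abs_one, one_pow, one_mul, abs_pow,
      abs_of_nonneg h2, abs_of_nonneg hF1.le, abs_of_nonneg hc.le]
  have hcoef : ((n + 2*(k+1) : ℕ):ℝ)/(((k+1).factorial:ℝ) * ((n+(k+1)).factorial:ℝ))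
      ≤ 2/(n.factorial:ℝ) := by
    rw [div_le_div_iff₀ hF1 hF]
    have b1 : (n.factorial:ℝ) ≤ ((n+k).factorial:ℝ) := by
      exact_mod_cast Nat.factorial_le (by omega)
    have b2 : ((n+(k+1)).factorial:ℝ) = ((n:ℝ)+(k:ℝ)+1) * ((n+k).factorial:ℝ) := by
      have h : n + (k+1) = (n+k)+1 := by omega
      rw [h, Nat.factorial_succ]; push_cast; ring
    have b3 : ((n + 2*(k+1) : ℕ):ℝ) = (n:ℝ) + 2*(k:ℝ) + 2 := by push_cast; ring
    have b4 : (0:ℝ) ≤ (n:ℝ) + (k:ℝ) + 1 := by positivity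
    have b5 : (0:ℝ) < ((n+k).factorial:ℝ) := by exact_mod_cast (n+k).factorial_pos
    rw [b2, b3]
    have key : ((n:ℝ) + 2*(k:ℝ) + 2) ≤ 2 * ((n:ℝ)+(k:ℝ)+1) := by linarith
    calc ((n:ℝ) + 2*(k:ℝ) + 2) * (n.factorial:ℝ)
        ≤ (2 * ((n:ℝ)+(k:ℝ)+1)) * ((n+k).factorial:ℝ) := by nlinarith
      _ ≤ 2 * (((k+1).factorial:ℝ) * (((n:ℝ)+(k:ℝ)+1) * ((n+k).factorial:ℝ))) := by nlinarith
  have hpw : (x/2)^(n+2*(k+1)) ≤ (x/2)^(n+2) * (1/4)^k := by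
    rw [e]
    apply mul_le_mul_of_nonneg_left _ (by positivity)
    exact pow_le_pow_left₀ (by positivity) hq k
  calc |Ht n (k+1) x| ≤ (2/(n.factorial:ℝ)) * ((x/2)^(n+2) * (1/4)^k) := by
        rw [habs]
        exact mul_le_mul hcoef hpw (by positivity) (by positivity)
    _ = (2 * (x/2)^(n+2) / (n.factorial : ℝ)) * (1/4)^k := by ring

lemma small_pos (n : ℕ) (hn : 1 ≤ n) {x : ℝ} (hx : 0 < x) (hx1 : x ≤ 1) :
    0 < besselJnat n x ∧ 0 < hf n x := by
  have hsJ := summable_Jt n hn x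
  have hsH := summable_Ht n hn x
  have hsaJ' : Summable (fun k => |Jt n (k+1) x|) :=
    (summable_nat_add_iff 1).2 (summable_absJt n hn x)
  have hsaH' : Summable (fun k => |Ht n (k+1) x|) :=
    (summable_nat_add_iff 1).2 (summable_absHt n hn x)
  have hgeoS : Summable (fun k:ℕ => ((1:ℝ)/4)^k) :=
    summable_geometric_of_lt_one (by norm_num) (by norm_num)
  have hgeo : ∑' k:ℕ, ((1:ℝ)/4)^k = 4/3 := by
    rw [tsum_geometric_of_lt_one (by norm_num) (by norm_num)]; norm_num
  have hP : (0:ℝ) < (x/2)^n := by positivity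
  have hF : (0:ℝ) < (n.factorial:ℝ) := by exact_mod_cast n.factorial_pos
  have hPF : (0:ℝ) < (x/2)^n/(n.factorial:ℝ) := by positivity
  have hq : (x/2)^2 ≤ 1/4 := by nlinarith
  have hpow : (x/2)^(n+2) = (x/2)^n * (x/2)^2 := pow_add _ _ _
  constructor
  · have hsplit : besselJnat n x = Jt n 0 x + ∑' k, Jt n (k+1) x := by
      rw [besselJnat_eq]; exact Summable.tsum_eq_zero_add hsJ
    have htail : |∑' k, Jt n (k+1) x| ≤ ((x/2)^(n+2)/(n.factorial:ℝ)) * (4/3) := by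
      calc |∑' k, Jt n (k+1) x| ≤ ∑' k, |Jt n (k+1) x| := by
            have := norm_tsum_le_tsum_norm (f := fun k => Jt n (k+1) x)
              (by simpa [Real.norm_eq_abs] using hsaJ')
            simpa [Real.norm_eq_abs] using this
        _ ≤ ∑' k, ((x/2)^(n+2)/(n.factorial:ℝ)) * (1/4)^k :=
            Summable.tsum_le_tsum (tailJ n hn hx.le hx1) hsaJ' (hgeoS.mul_left _)
        _ = ((x/2)^(n+2)/(n.factorial:ℝ)) * (4/3) := by rw [tsum_mul_left, hgeo]
    have hb : ((x/2)^(n+2)/(n.factorial:ℝ))*(4/3) ≤ ((x/2)^n/(n.factorial:ℝ))*(1/3) := by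
      rw [hpow, div_mul_eq_mul_div, div_mul_eq_mul_div, div_le_div_iff₀ hF hF]
      nlinarith [mul_pos hP hF]
    rw [hsplit, Jt_zero]
    linarith [(abs_le.1 htail).1]
  · have hsplit : hf n x = Ht n 0 x + ∑' k, Ht n (k+1) x := by
      rw [hf]; exact Summable.tsum_eq_zero_add hsH
    have htail : |∑' k, Ht n (k+1) x| ≤ (2*(x/2)^(n+2)/(n.factorial:ℝ)) * (4/3) := by
      calc |∑' k, Ht n (k+1) x| ≤ ∑' k, |Ht n (k+1) x| := by
            have := norm_tsum_le_tsum_norm (f := fun k => Ht n (k+1) x)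
              (by simpa [Real.norm_eq_abs] using hsaH')
            simpa [Real.norm_eq_abs] using this
        _ ≤ ∑' k, (2*(x/2)^(n+2)/(n.factorial:ℝ)) * (1/4)^k :=
            Summable.tsum_le_tsum (tailH n hn hx.le hx1) hsaH' (hgeoS.mul_left _)
        _ = (2*(x/2)^(n+2)/(n.factorial:ℝ)) * (4/3) := by rw [tsum_mul_left, hgeo]
    have hb : (2*(x/2)^(n+2)/(n.factorial:ℝ))*(4/3) ≤ ((x/2)^n/(n.factorial:ℝ))*(2/3) := by
      rw [hpow, div_mul_eq_mul_div, div_mul_eq_mul_div, div_le_div_iff₀ hF hF]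
      nlinarith [mul_pos hP hF]
    have hnPF : (x/2)^n/(n.factorial:ℝ) ≤ (n:ℝ)*(x/2)^n/(n.factorial:ℝ) := by
      have hn1 : (1:ℝ) ≤ (n:ℝ) := by exact_mod_cast hn
      rw [div_le_div_iff₀ hF hF]
      nlinarith [mul_pos hP hF]
    rw [hsplit, Ht_zero]
    linarith [(abs_le.1 htail).1]

lemma pos_on (n : ℕ) (hn : 1 ≤ n) {c : ℝ} (hc : 0 < c) (hcn : c < (n:ℝ)) :
    ∀ x, 0 < x → x ≤ c → 0 < besselJnat n x ∧ 0 < hf n x := by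
  by_contra hcon
  push_neg at hcon
  obtain ⟨y, hy0, hyc, hbad⟩ := hcon
  have hor : besselJnat n y ≤ 0 ∨ hf n y ≤ 0 := by
    by_cases hJ : 0 < besselJnat n y
    · right; exact le_of_not_gt (fun hh => (hbad hJ).not_gt hh)
    · left; exact le_of_not_gt hJ
  set S := Set.Icc (1:ℝ) c ∩ (besselJnat n ⁻¹' Set.Iic 0 ∪ hf n ⁻¹' Set.Iic 0) with hS
  have hyS : y ∈ S := by
    have hy1 : 1 ≤ y := by
      by_contra hlt
      push_neg at hlt
      obtain ⟨hp1, hp2⟩ := small_pos n hn hy0 hlt.le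
      rcases hor with h | h <;> linarith
    exact ⟨⟨hy1, hyc⟩, by
      rcases hor with h | h
      · exact Or.inl h
      · exact Or.inr h⟩
  have hclosed : IsClosed S :=
    isClosed_Icc.inter ((isClosed_Iic.preimage (contJ n hn)).union
      (isClosed_Iic.preimage (contH n hn)))
  have hbdd : BddBelow S := ⟨1, fun z hz => hz.1.1⟩
  have hne : S.Nonempty := ⟨y, hyS⟩
  set x0 := sInf S with hx0def
  have hx0S : x0 ∈ S := hclosed.csInf_mem hne hbdd
  have hx01 : 1 ≤ x0 := hx0S.1.1
  have hx0c : x0 ≤ c := hx0S.1.2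
  have hgood : ∀ t, 0 < t → t < x0 → 0 < besselJnat n t ∧ 0 < hf n t := by
    intro t ht0 htx
    by_cases ht1 : t ≤ 1
    · exact small_pos n hn ht0 ht1
    · push_neg at ht1
      by_contra hbd
      have hort : besselJnat n t ≤ 0 ∨ hf n t ≤ 0 := by
        by_cases hJ : 0 < besselJnat n t
        · right
          by_contra hh
          push_neg at hh
          exact hbd ⟨hJ, hh⟩
        · left; exact le_of_not_gt hJ
      have htS : t ∈ S := ⟨⟨ht1.le, le_trans htx.le hx0c⟩, by
        rcases hort with h | h
        · exact Or.inl h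
        · exact Or.inr h⟩
      have := csInf_le hbdd htS
      rw [← hx0def] at this
      linarith
  have hder : ∀ t ∈ interior (Set.Icc (0:ℝ) x0), 0 < deriv (hf n) t := by
    intro t ht
    rw [interior_Icc] at ht
    rw [(hasDerivAt_h n hn t).deriv]
    obtain ⟨hJ, _⟩ := hgood t ht.1 ht.2
    have hode := ode n hn t
    have htn : t < ((n:ℕ):ℝ) := lt_of_lt_of_le ht.2 (le_trans hx0c hcn.le)
    have h1 : 0 < t * pf n t := by
      rw [hode]
      have hpos : 0 < ((n:ℕ):ℝ)^2 - t^2 := by nlinarith [ht.1]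
      exact mul_pos hpos hJ
    rcases mul_pos_iff.1 h1 with ⟨_, h⟩ | ⟨h, _⟩
    · exact h
    · linarith [ht.1]
  have hmonoH : StrictMonoOn (hf n) (Set.Icc 0 x0) :=
    strictMonoOn_of_deriv_pos (convex_Icc 0 x0) (contH n hn).continuousOn hder
  have hhx0 : 0 < hf n x0 := by
    have := hmonoH (Set.left_mem_Icc.2 (by linarith)) (Set.right_mem_Icc.2 (by linarith))
      (by linarith)
    rwa [hf_zero n hn] at this
  have hderJ : ∀ t ∈ interior (Set.Icc (0:ℝ) x0), 0 < deriv (besselJnat n) t := by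
    intro t ht
    rw [interior_Icc] at ht
    rw [(hasDerivAt_J n hn t).deriv]
    obtain ⟨_, hh⟩ := hgood t ht.1 ht.2
    have he := hf_eq n hn t
    have h1 : 0 < t * gf n t := by rw [← he]; exact hh
    rcases mul_pos_iff.1 h1 with ⟨_, h⟩ | ⟨h, _⟩
    · exact h
    · linarith [ht.1]
  have hmonoJ : StrictMonoOn (besselJnat n) (Set.Icc 0 x0) :=
    strictMonoOn_of_deriv_pos (convex_Icc 0 x0) (contJ n hn).continuousOn hderJ
  have hJx0 : 0 < besselJnat n x0 := by
    have := hmonoJ (Set.left_mem_Icc.2 (by linarith)) (Set.right_mem_Icc.2 (by linarith))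
      (by linarith)
    rwa [J_zero n hn] at this
  rcases hx0S.2 with h | h
  · simp only [Set.mem_preimage, Set.mem_Iic] at h; linarith
  · simp only [Set.mem_preimage, Set.mem_Iic] at h; linarith

lemma monJ (n : ℕ) (hn : 1 ≤ n) {c : ℝ} (hc : 0 < c) (hcn : c < (n:ℝ)) :
    MonotoneOn (besselJnat n) (Set.Icc 0 c) := by
  apply monotoneOn_of_deriv_nonneg (convex_Icc 0 c) (contJ n hn).continuousOn
  · intro t _
    exact (hasDerivAt_J n hn t).differentiableAt.differentiableWithinAt
  · intro t ht
    rw [interior_Icc] at ht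
    rw [(hasDerivAt_J n hn t).deriv]
    obtain ⟨_, hh⟩ := pos_on n hn hc hcn t ht.1 ht.2.le
    have he := hf_eq n hn t
    have h1 : 0 < t * gf n t := by rw [← he]; exact hh
    rcases mul_pos_iff.1 h1 with ⟨_, h⟩ | ⟨h, _⟩
    · exact h.le
    · linarith [ht.1]

end S8

/-- For an integer `j > λ`, the function `r ↦ J_j(λr)` is monotone increasing
on `[0,1]`; consequently `sup_{x ∈ Ω} |b_{λ,j}(x)| = J_j(λ)` on the closed unit disk. -/
theorem stmt_8 (lam : ℝ) (hlam : 0 < lam) (j : ℤ) (hj : lam < (j : ℝ)) :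
    MonotoneOn (fun r : ℝ => besselJ j (lam * r)) (Set.Icc 0 1) ∧
    (⨆ z : closedBall (0 : ℂ) 1, ‖fourierBessel lam j ↑z‖) = besselJ j lam := by
  have hjR : (0:ℝ) < (j:ℝ) := lt_trans hlam hj
  have hj0 : (0:ℤ) ≤ j := by exact_mod_cast hjR.le
  set n := j.toNat with hn_def
  have hcast : ((n:ℕ):ℝ) = (j:ℝ) := by
    rw [hn_def]
    exact_mod_cast Int.toNat_of_nonneg hj0
  have hn : 1 ≤ n := by
    have hj1 : 0 < j := by exact_mod_cast hjR
    omega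
  have hbJ : ∀ x, besselJ j x = besselJnat n x := fun x => by
    rw [besselJ, if_pos hj0]
  have hlamn : lam < ((n:ℕ):ℝ) := by rw [hcast]; exact hj
  have hmono : MonotoneOn (besselJnat n) (Set.Icc 0 lam) := S8.monJ n hn hlam hlamn
  have hJ0 : besselJnat n 0 = 0 := S8.J_zero n hn
  have hnonneg : ∀ t, 0 ≤ t → t ≤ lam → 0 ≤ besselJnat n t := by
    intro t ht0 htl
    have := hmono (Set.left_mem_Icc.2 hlam.le) ⟨ht0, htl⟩ ht0
    rwa [hJ0] at this
  have hle : ∀ t, 0 ≤ t → t ≤ lam → besselJnat n t ≤ besselJnat n lam := fun t ht0 htl =>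
    hmono ⟨ht0, htl⟩ (Set.right_mem_Icc.2 hlam.le) htl
  constructor
  · intro r hr r' hr' hrr
    simp only [hbJ]
    have h1 : lam * r ∈ Set.Icc 0 lam :=
      ⟨mul_nonneg hlam.le hr.1, by nlinarith [hr.2]⟩
    have h2 : lam * r' ∈ Set.Icc 0 lam :=
      ⟨mul_nonneg hlam.le hr'.1, by nlinarith [hr'.2]⟩
    exact hmono h1 h2 (by nlinarith)
  · have habs : ∀ z : ℂ,
        ‖fourierBessel lam j z‖ = |besselJnat n (lam * ‖z‖)| := by
      intro z
      rw [fourierBessel, norm_mul, Complex.norm_exp]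
      have hre : (Complex.I * (j:ℂ) * ((z.arg : ℝ):ℂ)).re = 0 := by simp
      rw [hre, Real.exp_zero, one_mul, hbJ, Complex.norm_real, Real.norm_eq_abs]
    haveI : Nonempty (closedBall (0:ℂ) 1) :=
      ⟨⟨0, mem_closedBall_self (by norm_num)⟩⟩
    have hb : ∀ z : closedBall (0:ℂ) 1,
        ‖fourierBessel lam j ↑z‖ ≤ besselJnat n lam := by
      intro z
      rw [habs]
      have hz : ‖(z:ℂ)‖ ≤ 1 := by
        have := z.2
        rwa [mem_closedBall, Complex.dist_eq, sub_zero] at this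
      have habz : 0 ≤ ‖(z:ℂ)‖ := norm_nonneg _
      have h0 : 0 ≤ lam * ‖(z:ℂ)‖ := mul_nonneg hlam.le habz
      have h1 : lam * ‖(z:ℂ)‖ ≤ lam := by nlinarith
      rw [abs_of_nonneg (hnonneg _ h0 h1)]
      exact hle _ h0 h1
    rw [hbJ]
    apply le_antisymm
    · exact ciSup_le hb
    · have hmem : (1:ℂ) ∈ closedBall (0:ℂ) 1 := by
        rw [mem_closedBall, Complex.dist_eq, sub_zero]
        simp
      have hval : ‖fourierBessel lam j ((1:ℂ))‖ = besselJnat n lam := by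
        rw [habs]
        simp only [norm_one, mul_one]
        exact abs_of_nonneg (hnonneg lam hlam.le le_rfl)
      calc besselJnat n lam
          = ‖fourierBessel lam j ((⟨1, hmem⟩ : closedBall (0:ℂ) 1) : ℂ)‖ := hval.symm
        _ ≤ ⨆ z : closedBall (0:ℂ) 1, ‖fourierBessel lam j ↑z‖ :=
            le_ciSup (f := fun z : closedBall (0:ℂ) 1 => ‖fourierBessel lam j ↑z‖)
              ⟨besselJnat n lam, by rintro v ⟨z, rfl⟩; exact hb z⟩ ⟨1, hmem⟩
end

section
/- Let Ω be the closed unit disk in ℝ², let λ > 0, and for 0 ≤ α ≤ 1 let ν_α := (1−α)·(dx/π restricted to Ω) + α·(dσ/(2π) on ∂Ω). Define K_b(m, ν_α) := sup_{x ∈ Ω} Σ_{j=−m}^{m} |b_{λ,j}(x)|² / ‖b_{λ,j}‖²_{L²(ν_α)}, which equals the quantity K for the (2m+1)-dimensional space V_m^b = span{b_{λ,j} : −m ≤ j ≤ m} since the b_{λ,j} are ν_α-orthogonal. Then for the uniform measure (α = 0): for every constant c₁ < 1/4 there exist a constant c₀ (depending on c₁ and λ) and an integer m₀ such that for all m ≥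 m₀, K_b(m, ν_0) ≥ c₀ + c₁ m². -/
open MeasureTheory Metric

noncomputable def besselTerm (n : ℕ) (x : ℝ) (k : ℕ) : ℝ :=
  ((-1 : ℝ) ^ k / ((Nat.factorial k : ℝ) * (Nat.factorial (n + k) : ℝ))) * (x / 2) ^ (n + 2 * k)

lemma besselJnat_eq (n : ℕ) (x : ℝ) : besselJnat n x = ∑' k, besselTerm n x k := rfl

lemma norm_besselTerm (n : ℕ) (x : ℝ) (k : ℕ) :
    ‖besselTerm n x k‖ = (|x| / 2) ^ (n + 2*k) / ((Nat.factorial k : ℝ) * (Nat.factorial (n + k))) := by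
  rw [besselTerm, Real.norm_eq_abs, abs_mul, abs_div, abs_pow, abs_neg, abs_one, one_pow,
    abs_of_nonneg (by positivity : (0:ℝ) ≤ (Nat.factorial k : ℝ) * (Nat.factorial (n+k))),
    abs_pow, abs_div, abs_two]
  ring

lemma fact_ge (n k : ℕ) : Nat.factorial n * (n+1)^k ≤ Nat.factorial (n+k) := by
  induction k with
  | zero => simp
  | succ k ih =>
      calc Nat.factorial n * (n+1)^(k+1) = (Nat.factorial n * (n+1)^k) * (n+1) := by ring
      _ ≤ Nat.factorial (n+k) * (n+1) := Nat.mul_le_mul_right _ ih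
      _ ≤ Nat.factorial (n+k) * (n+k+1) := Nat.mul_le_mul_left _ (by omega)
      _ = Nat.factorial (n+k+1) := by rw [Nat.factorial_succ]; ring

lemma besselTerm_summable (n : ℕ) (x : ℝ) : Summable (besselTerm n x) := by
  apply Summable.of_norm_bounded
    (g := fun k => ((|x|/2)^n / Nat.factorial n) * ((((|x|/2)^2)^k / Nat.factorial k)))
    ((Real.summable_pow_div_factorial ((|x|/2)^2)).mul_left _)
  intro k
  rw [norm_besselTerm]
  have h1 : (|x|/2) ^ (n + 2*k) = (|x|/2)^n * ((|x|/2)^2)^k := by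
    rw [← pow_mul, ← pow_add]
  rw [h1]
  have h2 : (Nat.factorial n : ℝ) * Nat.factorial k ≤ (Nat.factorial k : ℝ) * Nat.factorial (n+k) := by
    rw [mul_comm]
    have := Nat.factorial_le (Nat.le_add_right n k)
    exact_mod_cast Nat.mul_le_mul_left _ this
  calc (|x|/2)^n * ((|x|/2)^2)^k / ((Nat.factorial k : ℝ) * Nat.factorial (n+k))
      ≤ (|x|/2)^n * ((|x|/2)^2)^k / ((Nat.factorial n : ℝ) * Nat.factorial k) := by
        apply div_le_div_of_nonneg_left (by positivity) (by positivity) h2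
      _ = ((|x|/2)^n / Nat.factorial n) * ((((|x|/2)^2)^k / Nat.factorial k)) := by ring

lemma besselJnat_est (n : ℕ) (x : ℝ) (hx : 0 ≤ x) (hq : x^2/(4*((n:ℝ)+1)) ≤ 1/2) :
    |besselJnat n x - (x/2)^n / Nat.factorial n| ≤
      (x^2/(2*((n:ℝ)+1))) * ((x/2)^n / Nat.factorial n) := by
  set q : ℝ := x^2/(4*((n:ℝ)+1)) with hqdef
  set a : ℝ := (x/2)^n / Nat.factorial n with hadef
  have hq0 : 0 ≤ q := by positivity
  have hq1 : q < 1 := lt_of_le_of_lt hq (by norm_num)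
  have ha0 : 0 ≤ a := by positivity
  have htail : besselJnat n x = besselTerm n x 0 + ∑' k, besselTerm n x (k+1) := by
    rw [besselJnat_eq]; exact (besselTerm_summable n x).tsum_eq_zero_add
  have h0 : besselTerm n x 0 = a := by
    simp [besselTerm, hadef, Nat.factorial]
    ring
  -- per-term bound
  have hterm : ∀ k : ℕ, ‖besselTerm n x (k+1)‖ ≤ a * q^(k+1) := by
    intro k
    rw [norm_besselTerm, abs_of_nonneg hx]
    have hfac : (Nat.factorial n : ℝ) * ((n:ℝ)+1)^(k+1) ≤
        (Nat.factorial (k+1) : ℝ) * Nat.factorial (n+(k+1)) := by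
      have h1 : Nat.factorial n * (n+1)^(k+1) ≤ Nat.factorial (n+(k+1)) := fact_ge n (k+1)
      have h2 : (Nat.factorial (n+(k+1)) : ℝ) ≤ (Nat.factorial (k+1) : ℝ) * Nat.factorial (n+(k+1)) := by
        nlinarith [(Nat.one_le_cast (α := ℝ)).2 (Nat.factorial_pos (k+1)),
          (Nat.cast_pos (α := ℝ)).2 (Nat.factorial_pos (n+(k+1)))]
      calc (Nat.factorial n : ℝ) * ((n:ℝ)+1)^(k+1) = ((Nat.factorial n * (n+1)^(k+1) : ℕ) : ℝ) := by
            push_cast; ring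
        _ ≤ ((Nat.factorial (n+(k+1)) : ℕ) : ℝ) := by exact_mod_cast h1
        _ ≤ _ := h2
    have hsplit : (x/2) ^ (n + 2*(k+1)) = (x/2)^n * ((x/2)^2)^(k+1) := by
      rw [← pow_mul, ← pow_add]
    rw [hsplit]
    have hne : ((n:ℝ)+1) ≠ 0 := by positivity
    have hq' : q = (x/2)^2 / ((n:ℝ)+1) := by rw [hqdef, div_pow, div_div]; norm_num
    have hrhs : a * q^(k+1) = (x/2)^n * ((x/2)^2)^(k+1) / ((Nat.factorial n : ℝ) * ((n:ℝ)+1)^(k+1)) := by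
      rw [hadef, hq', div_pow ((x/2)^2) (((n:ℝ)+1)) (k+1), div_mul_div_comm]
    rw [hrhs]
    exact div_le_div_of_nonneg_left (by positivity) (by positivity) hfac
  have hsum1 : Summable (fun k => besselTerm n x (k+1)) :=
    (summable_nat_add_iff 1).2 (besselTerm_summable n x)
  have hsumgeo : Summable (fun k : ℕ => a * q^(k+1)) := by
    have : Summable (fun k : ℕ => (a*q) * q^k) := (summable_geometric_of_lt_one hq0 hq1).mul_left _
    simpa [pow_succ, mul_comm, mul_assoc, mul_left_comm] using this
  have htsum : |∑' k, besselTerm n x (k+1)| ≤ a * (q * (1-q)⁻¹) := by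
    calc |∑' k, besselTerm n x (k+1)| ≤ ∑' k, ‖besselTerm n x (k+1)‖ := by
          simpa using norm_tsum_le_tsum_norm (hsum1.norm)
      _ ≤ ∑' k : ℕ, a * q^(k+1) := Summable.tsum_le_tsum hterm hsum1.norm hsumgeo
      _ = a * (q * (1-q)⁻¹) := by
          have : (fun k : ℕ => a * q^(k+1)) = fun k : ℕ => (a*q) * q^k := by
            funext k; rw [pow_succ]; ring
          rw [this, tsum_mul_left, tsum_geometric_of_lt_one hq0 hq1]
          ring
  have hfinal : a * (q * (1-q)⁻¹) ≤ (x^2/(2*((n:ℝ)+1))) * a := by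
    have hne : ((n:ℝ)+1) ≠ 0 := by positivity
    have h2q : x^2/(2*((n:ℝ)+1)) = 2*q := by rw [hqdef]; field_simp; ring
    rw [h2q]
    have hinv : (1-q)⁻¹ ≤ 2 := by
      rw [inv_le_comm₀ (by linarith) (by norm_num)]
      linarith
    have : q * (1-q)⁻¹ ≤ 2*q := by
      calc q * (1-q)⁻¹ ≤ q * 2 := by nlinarith
        _ = 2*q := by ring
    nlinarith
  calc |besselJnat n x - (x/2)^n / Nat.factorial n| = |∑' k, besselTerm n x (k+1)| := by
        rw [htail, h0, ← hadef]; congr 1; ring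
    _ ≤ a * (q * (1-q)⁻¹) := htsum
    _ ≤ _ := hfinal

-- corollaries
lemma besselJnat_lb (n : ℕ) (x : ℝ) (hx : 0 ≤ x) (h5 : x^2 ≤ ((n:ℝ)+1)/5) :
    (9/10) * ((x/2)^n / Nat.factorial n) ≤ besselJnat n x := by
  have hn1 : (0:ℝ) < (n:ℝ)+1 := by positivity
  have hq : x^2/(4*((n:ℝ)+1)) ≤ 1/2 := by
    rw [div_le_iff₀ (by positivity)]; nlinarith
  have h2q : x^2/(2*((n:ℝ)+1)) ≤ 1/10 := by
    rw [div_le_iff₀ (by positivity)]; nlinarith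
  have ha0 : (0:ℝ) ≤ (x/2)^n / Nat.factorial n := by positivity
  have := besselJnat_est n x hx hq
  have habs := abs_le.1 this
  nlinarith [habs.1, mul_le_mul_of_nonneg_right h2q ha0]

lemma besselJnat_ub (n : ℕ) (x : ℝ) (hx : 0 ≤ x) (h5 : x^2 ≤ ((n:ℝ)+1)/5) :
    |besselJnat n x| ≤ (11/10) * ((x/2)^n / Nat.factorial n) := by
  have hn1 : (0:ℝ) < (n:ℝ)+1 := by positivity
  have hq : x^2/(4*((n:ℝ)+1)) ≤ 1/2 := by
    rw [div_le_iff₀ (by positivity)]; nlinarith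
  have h2q : x^2/(2*((n:ℝ)+1)) ≤ 1/10 := by
    rw [div_le_iff₀ (by positivity)]; nlinarith
  have ha0 : (0:ℝ) ≤ (x/2)^n / Nat.factorial n := by positivity
  have := besselJnat_est n x hx hq
  have habs := abs_le.1 this
  rw [abs_le]; constructor <;> nlinarith [habs.1, habs.2, mul_le_mul_of_nonneg_right h2q ha0]

-- majorant
noncomputable def besselMaj (n : ℕ) (y : ℝ) : ℝ :=
  ∑' k : ℕ, (y/2) ^ (n + 2*k) / ((Nat.factorial k : ℝ) * (Nat.factorial (n + k)))

lemma besselMaj_summable (n : ℕ) (y : ℝ) (hy : 0 ≤ y) :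
    Summable (fun k : ℕ => (y/2) ^ (n + 2*k) / ((Nat.factorial k : ℝ) * (Nat.factorial (n + k)))) := by
  have := (besselTerm_summable n y).norm
  have heq : (fun k => ‖besselTerm n y k‖) =
      (fun k : ℕ => (y/2) ^ (n + 2*k) / ((Nat.factorial k : ℝ) * (Nat.factorial (n + k)))) := by
    funext k; rw [norm_besselTerm, abs_of_nonneg hy]
  rwa [heq] at this

lemma abs_besselJnat_le (n : ℕ) (x y : ℝ) (hx : |x| ≤ y) :
    |besselJnat n x| ≤ besselMaj n y := by
  have hy : 0 ≤ y := (abs_nonneg x).trans hx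
  have h1 : |besselJnat n x| ≤ ∑' k, ‖besselTerm n x k‖ := by
    rw [besselJnat_eq]
    simpa using norm_tsum_le_tsum_norm (besselTerm_summable n x).norm
  refine h1.trans (Summable.tsum_le_tsum ?_ (besselTerm_summable n x).norm (besselMaj_summable n y hy))
  intro k
  rw [norm_besselTerm]
  apply div_le_div_of_nonneg_right ?_ (by positivity)
  · exact pow_le_pow_left₀ (by positivity) (by linarith [abs_nonneg x]) _

lemma measurable_besselJnat (n : ℕ) : Measurable (besselJnat n) := by
  have hlim : Filter.Tendsto (fun N x => ∑ k ∈ Finset.range N, besselTerm n x k)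
      Filter.atTop (nhds (besselJnat n)) := by
    rw [tendsto_pi_nhds]
    intro x
    rw [besselJnat_eq]
    exact (besselTerm_summable n x).hasSum.tendsto_sum_nat
  refine measurable_of_tendsto_metrizable (fun N => ?_) hlim
  exact Finset.measurable_sum _ fun k _ =>
    ((measurable_id.div_const 2).pow_const _).const_mul _

lemma measurable_besselJ (j : ℤ) : Measurable (besselJ j) := by
  unfold besselJ
  split_ifs
  · exact measurable_besselJnat _
  · exact (measurable_besselJnat _).const_mul _

lemma abs_besselJ (j : ℤ) (x : ℝ) : |besselJ j x| = |besselJnat j.natAbs x| := by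
  unfold besselJ
  split_ifs with h
  · congr 2; omega
  · rw [abs_mul, abs_pow, abs_neg, abs_one, one_pow, one_mul]

lemma measurable_absFB_sq (lam : ℝ) (j : ℤ) :
    Measurable (fun z : ℂ => ‖fourierBessel lam j z‖ ^ 2) := by
  have : (fun z : ℂ => ‖fourierBessel lam j z‖ ^ 2) =
      (fun z : ℂ => |besselJ j (lam * ‖z‖)| ^ 2) := by
    funext z; rw [abs_fourierBessel]
  rw [this]
  exact (((measurable_besselJ j).comp
    (continuous_norm.measurable.const_mul lam)).abs).pow_const 2

instance : IsFiniteMeasure unifDisk := by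
  constructor
  rw [unifDisk]
  simp only [Measure.smul_apply, smul_eq_mul, Measure.restrict_apply MeasurableSet.univ,
    Set.univ_inter]
  exact ENNReal.mul_lt_top (ENNReal.inv_lt_top.2 (by simp [Real.pi_pos])) (by
    rw [Complex.volume_closedBall]; exact ENNReal.mul_lt_top (by simp) (by simp))

lemma integral_closedBall_norm_pow (p : ℕ) :
    (∫ z in closedBall (0:ℂ) 1, ‖z‖^p) = 2 * Real.pi / ((p:ℝ) + 2) := by
  have h1 : (∫ z in closedBall (0:ℂ) 1, ‖z‖^p) =
      ∫ z : ℂ, Set.indicator (Set.Icc (0:ℝ) 1) (fun r => r^p) ‖z‖ := by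
    rw [← integral_indicator (measurableSet_closedBall)]
    congr 1; funext z
    by_cases hz : z ∈ closedBall (0:ℂ) 1
    · rw [Set.indicator_of_mem hz, Set.indicator_of_mem
        (by simpa [Set.mem_Icc, norm_nonneg] using mem_closedBall_zero_iff.1 hz)]
    · rw [Set.indicator_of_notMem hz, Set.indicator_of_notMem (by
        intro hmem
        exact hz (mem_closedBall_zero_iff.2 hmem.2))]
  rw [h1, integral_fun_norm_addHaar volume (Set.indicator (Set.Icc (0:ℝ) 1) (fun r => r^p))]
  have hdim : Module.finrank ℝ ℂ = 2 := Complex.finrank_real_complex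
  rw [hdim]
  have hball : volume.real (ball (0:ℂ) 1) = Real.pi := by
    rw [measureReal_def, Complex.volume_ball]
    simp [ENNReal.toReal_mul]
  rw [hball]
  have h2 : (fun y : ℝ => y ^ (2-1) • Set.indicator (Set.Icc (0:ℝ) 1) (fun r => r^p) y) =
      fun y : ℝ => Set.indicator (Set.Icc (0:ℝ) 1) (fun r => r^(p+1)) y := by
    funext y
    by_cases hy : y ∈ Set.Icc (0:ℝ) 1
    · rw [Set.indicator_of_mem hy, Set.indicator_of_mem hy]
      simp [pow_succ]
      ring
    · rw [Set.indicator_of_notMem hy, Set.indicator_of_notMem hy, smul_zero]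
  rw [h2, integral_indicator measurableSet_Icc,
    Measure.restrict_restrict measurableSet_Icc]
  have h3 : Set.Icc (0:ℝ) 1 ∩ Set.Ioi 0 = Set.Ioc (0:ℝ) 1 := by
    ext x
    simp only [Set.mem_inter_iff, Set.mem_Icc, Set.mem_Ioi, Set.mem_Ioc]
    constructor
    · rintro ⟨⟨_, h1⟩, h2⟩; exact ⟨h2, h1⟩
    · rintro ⟨h1, h2⟩; exact ⟨⟨le_of_lt h1, h2⟩, h1⟩
  rw [h3, ← intervalIntegral.integral_of_le zero_le_one, integral_pow]
  simp only [one_pow, ne_eq]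
  rw [zero_pow (by omega)]
  push_cast
  simp only [nsmul_eq_mul, smul_eq_mul]
  ring

lemma integral_unifDisk_norm_pow (p : ℕ) :
    (∫ z, ‖z‖^p ∂unifDisk) = 2 / ((p:ℝ) + 2) := by
  rw [unifDisk, integral_smul_measure, ENNReal.toReal_inv,
    ENNReal.toReal_ofReal Real.pi_pos.le, integral_closedBall_norm_pow, smul_eq_mul]
  field_simp

lemma integrable_norm_pow_unifDisk (p : ℕ) (c : ℝ) :
    Integrable (fun z : ℂ => c * ‖z‖^p) unifDisk := by
  rw [unifDisk]
  apply Integrable.smul_measure _ (by simp [Real.pi_pos])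
  exact ContinuousOn.integrableOn_compact (isCompact_closedBall _ _)
    (Continuous.continuousOn (by continuity))

lemma ae_unifDisk_mem : ∀ᵐ z ∂unifDisk, z ∈ closedBall (0:ℂ) 1 := by
  rw [unifDisk]
  exact (Measure.ae_smul_measure (ae_restrict_mem measurableSet_closedBall) _)

lemma integrable_absFB_sq (lam : ℝ) (hlam : 0 < lam) (j : ℤ) :
    Integrable (fun z : ℂ => ‖fourierBessel lam j z‖ ^ 2) unifDisk := by
  apply Integrable.mono' (integrable_const ((besselMaj j.natAbs lam)^2))
    (measurable_absFB_sq lam j).aestronglyMeasurable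
  filter_upwards [ae_unifDisk_mem] with z hz
  rw [Real.norm_eq_abs, abs_of_nonneg (by positivity)]
  rw [abs_fourierBessel, abs_besselJ]
  apply pow_le_pow_left₀ (abs_nonneg _)
  apply abs_besselJnat_le
  rw [abs_of_nonneg (by positivity)]
  have hz1 : ‖z‖ ≤ 1 := by simpa using mem_closedBall_zero_iff.1 hz
  nlinarith [norm_nonneg z]

lemma Nj_ub (lam : ℝ) (hlam : 0 < lam) (n : ℕ) (h5 : lam^2 ≤ ((n:ℝ)+1)/5) :
    ((n:ℝ)+1) * l2normSq unifDisk (fourierBessel lam n) ≤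
      (121/100) * ((lam/2)^n / Nat.factorial n)^2 := by
  set A : ℝ := (lam/2)^n / Nat.factorial n with hA
  have hA0 : 0 ≤ A := by positivity
  have h1 : l2normSq unifDisk (fourierBessel lam n) ≤
      ∫ z, (121/100 * A^2) * ‖z‖^(2*n) ∂unifDisk := by
    rw [l2normSq]
    apply integral_mono_of_nonneg (ae_of_all _ fun z => by positivity)
      (integrable_norm_pow_unifDisk (2*n) _)
    filter_upwards [ae_unifDisk_mem] with z hz
    have hz1 : ‖z‖ ≤ 1 := by
      simpa using mem_closedBall_zero_iff.1 hz
    have hz0 : 0 ≤ ‖z‖ := norm_nonneg z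
    set x : ℝ := lam * ‖z‖ with hx
    have hx0 : 0 ≤ x := by positivity
    have hxle : x ≤ lam := by rw [hx]; nlinarith
    have hx5 : x^2 ≤ ((n:ℝ)+1)/5 := le_trans (pow_le_pow_left₀ hx0 hxle 2) h5
    have hub := besselJnat_ub n x hx0 hx5
    have hxpow : (x/2)^n = (lam/2)^n * (‖z‖)^n := by
      rw [hx, show lam * ‖z‖ / 2 = (lam/2) * ‖z‖ from by ring, mul_pow]
    rw [abs_fourierBessel, abs_besselJ]
    have hnatAbs : ((n:ℤ)).natAbs = n := Int.natAbs_natCast n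
    rw [hnatAbs]
    have h2 : |besselJnat n x| ≤ (11/10) * (A * (‖z‖)^n) := by
      calc |besselJnat n x| ≤ (11/10) * ((x/2)^n / Nat.factorial n) := hub
        _ = (11/10) * (A * (‖z‖)^n) := by rw [hxpow, hA]; ring
    have h3 : |besselJnat n x|^2 ≤ ((11/10) * (A * (‖z‖)^n))^2 :=
      pow_le_pow_left₀ (abs_nonneg _) h2 2
    calc |besselJnat n x|^2 ≤ ((11/10) * (A * (‖z‖)^n))^2 := h3
      _ = (121/100 * A^2) * ‖z‖^(2*n) := by
          rw [pow_mul, mul_pow, mul_pow, ← pow_mul]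
          ring_nf
  have hcast : ((2*n : ℕ):ℝ) = 2*(n:ℝ) := by push_cast; ring
  have h2 : (∫ z, (121/100 * A^2) * ‖z‖^(2*n) ∂unifDisk) =
      (121/100 * A^2) * (2/(2*(n:ℝ)+2)) := by
    rw [integral_const_mul, integral_unifDisk_norm_pow, hcast]
  have hne : (2*(n:ℝ)+2) ≠ 0 := by positivity
  calc ((n:ℝ)+1) * l2normSq unifDisk (fourierBessel lam n)
      ≤ ((n:ℝ)+1) * ((121/100 * A^2) * (2/(2*(n:ℝ)+2))) :=
        mul_le_mul_of_nonneg_left (h1.trans_eq h2) (by positivity)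
    _ = (121/100) * A^2 := by field_simp

lemma Nj_lb (lam : ℝ) (hlam : 0 < lam) (n : ℕ) (h5 : lam^2 ≤ ((n:ℝ)+1)/5) :
    (81/100) * ((lam/2)^n / Nat.factorial n)^2 ≤
      ((n:ℝ)+1) * l2normSq unifDisk (fourierBessel lam n) := by
  set A : ℝ := (lam/2)^n / Nat.factorial n with hA
  have hA0 : 0 ≤ A := by positivity
  have h1 : (∫ z, (81/100 * A^2) * ‖z‖^(2*n) ∂unifDisk) ≤
      l2normSq unifDisk (fourierBessel lam n) := by
    rw [l2normSq]
    apply integral_mono_of_nonneg (ae_of_all _ fun z => by positivity)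
      (integrable_absFB_sq lam hlam n)
    filter_upwards [ae_unifDisk_mem] with z hz
    have hz1 : ‖z‖ ≤ 1 := by
      simpa using mem_closedBall_zero_iff.1 hz
    have hz0 : 0 ≤ ‖z‖ := norm_nonneg z
    set x : ℝ := lam * ‖z‖ with hx
    have hx0 : 0 ≤ x := by positivity
    have hxle : x ≤ lam := by rw [hx]; nlinarith
    have hx5 : x^2 ≤ ((n:ℝ)+1)/5 := le_trans (pow_le_pow_left₀ hx0 hxle 2) h5
    have hlb := besselJnat_lb n x hx0 hx5
    have hxpow : (x/2)^n = (lam/2)^n * (‖z‖)^n := by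
      rw [hx, show lam * ‖z‖ / 2 = (lam/2) * ‖z‖ from by ring, mul_pow]
    rw [abs_fourierBessel, abs_besselJ]
    have hnatAbs : ((n:ℤ)).natAbs = n := Int.natAbs_natCast n
    rw [hnatAbs]
    have h2 : (9/10) * (A * (‖z‖)^n) ≤ |besselJnat n x| := by
      calc (9/10) * (A * (‖z‖)^n) = (9/10) * ((x/2)^n / Nat.factorial n) := by
            rw [hxpow, hA]; ring
        _ ≤ besselJnat n x := hlb
        _ ≤ |besselJnat n x| := le_abs_self _
    have h3 : ((9/10) * (A * (‖z‖)^n))^2 ≤ |besselJnat n x|^2 :=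
      pow_le_pow_left₀ (by positivity) h2 2
    calc (81/100 * A^2) * ‖z‖^(2*n) = ((9/10) * (A * (‖z‖)^n))^2 := by
          rw [pow_mul, mul_pow, mul_pow, ← pow_mul]
          ring_nf
      _ ≤ |besselJnat n x|^2 := h3
  have hcast : ((2*n : ℕ):ℝ) = 2*(n:ℝ) := by push_cast; ring
  have h2 : (∫ z, (81/100 * A^2) * ‖z‖^(2*n) ∂unifDisk) =
      (81/100 * A^2) * (2/(2*(n:ℝ)+2)) := by
    rw [integral_const_mul, integral_unifDisk_norm_pow, hcast]
  have hne : (2*(n:ℝ)+2) ≠ 0 := by positivity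
  calc (81/100) * A^2 = ((n:ℝ)+1) * ((81/100 * A^2) * (2/(2*(n:ℝ)+2))) := by
        field_simp
    _ ≤ ((n:ℝ)+1) * l2normSq unifDisk (fourierBessel lam n) :=
        mul_le_mul_of_nonneg_left (h2.symm.trans_le h1) (by positivity)

lemma ratio_lb (lam : ℝ) (hlam : 0 < lam) (n : ℕ) (h5 : lam^2 ≤ ((n:ℝ)+1)/5) :
    ((n:ℝ)+1)/2 ≤ ‖fourierBessel lam n 1‖^2 /
      l2normSq unifDisk (fourierBessel lam n) := by
  set A : ℝ := (lam/2)^n / Nat.factorial n with hA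
  have hA0 : 0 < A := by positivity
  set N : ℝ := l2normSq unifDisk (fourierBessel lam n) with hNdef
  have hub := Nj_ub lam hlam n h5
  have hlb := Nj_lb lam hlam n h5
  have hn1 : (0:ℝ) < (n:ℝ)+1 := by positivity
  have hN0 : 0 < N := by nlinarith
  have hnum : (81/100) * A^2 ≤ ‖fourierBessel lam n 1‖^2 := by
    rw [abs_fourierBessel, abs_besselJ, Int.natAbs_natCast]
    have h1 : ‖(1:ℂ)‖ = 1 := norm_one
    rw [h1, mul_one]
    have hlb2 := besselJnat_lb n lam hlam.le h5
    have h2 : (9/10) * A ≤ |besselJnat n lam| := by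
      rw [hA]
      exact hlb2.trans (le_abs_self _)
    nlinarith [abs_nonneg (besselJnat n lam)]
  rw [le_div_iff₀ hN0]
  nlinarith

lemma sum_lb (J₀ : ℕ) : ∀ m : ℕ, J₀ ≤ m →
    (m:ℝ)^2/4 - (J₀:ℝ)^2 ≤ ∑ j ∈ Finset.Icc (J₀:ℤ) (m:ℤ), (((j:ℤ):ℝ)+1)/2 := by
  refine Nat.le_induction ?_ ?_
  · rw [Finset.Icc_self, Finset.sum_singleton]
    push_cast
    nlinarith [sq_nonneg (J₀:ℝ), Nat.cast_nonneg (α := ℝ) J₀]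
  · intro m hm ih
    have hins : Finset.Icc (J₀:ℤ) ((m+1:ℕ):ℤ) = insert ((m:ℤ)+1) (Finset.Icc (J₀:ℤ) (m:ℤ)) := by
      ext j
      simp only [Finset.mem_Icc, Finset.mem_insert]
      push_cast
      omega
    rw [hins, Finset.sum_insert (by simp only [Finset.mem_Icc]; omega)]
    push_cast
    nlinarith [ih]

/-- For the Fourier-Bessel space `V_m^b` and the uniform measure `ν₀` on the
unit disk, for every `c₁ < 1/4` there exist `c₀` and `m₀` such that for all `m ≥ m₀`,
`K_b(m, ν₀) ≥ c₀ + c₁ m²`. -/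
theorem stmt_9 (lam : ℝ) (hlam : 0 < lam) :
    ∀ c₁ : ℝ, c₁ < 1 / 4 → ∃ c₀ : ℝ, ∃ m₀ : ℕ, ∀ m : ℕ, m₀ ≤ m →
      c₀ + c₁ * (m : ℝ) ^ 2 ≤ Kb lam unifDisk m := by
  intro c₁ hc₁
  set J₀ : ℕ := ⌈(5:ℝ)*lam^2⌉₊ with hJ₀
  refine ⟨-((J₀:ℝ)^2), J₀, fun m hm => ?_⟩
  have hN0 : ∀ j : ℤ, 0 ≤ l2normSq unifDisk (fourierBessel lam j) :=
    fun j => integral_nonneg fun w => by positivity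
  have hterm_nonneg : ∀ (j : ℤ) (z : ℂ),
      0 ≤ ‖fourierBessel lam j z‖^2 / l2normSq unifDisk (fourierBessel lam j) :=
    fun j z => div_nonneg (by positivity) (hN0 j)
  have hC : ∀ (j : ℤ) (z : ℂ), z ∈ closedBall (0:ℂ) 1 →
      ‖fourierBessel lam j z‖^2 ≤ (besselMaj j.natAbs lam)^2 := by
    intro j z hz
    rw [abs_fourierBessel, abs_besselJ]
    apply pow_le_pow_left₀ (abs_nonneg _)
    apply abs_besselJnat_le
    have hz1 : ‖z‖ ≤ 1 := by
      simpa using mem_closedBall_zero_iff.1 hz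
    rw [abs_of_nonneg (by positivity)]
    nlinarith [norm_nonneg z]
  have hBdd : BddAbove (Set.range fun z : closedBall (0:ℂ) 1 =>
      ∑ j ∈ Finset.Icc (-(m:ℤ)) (m:ℤ),
        ‖fourierBessel lam j ↑z‖^2 / l2normSq unifDisk (fourierBessel lam j)) := by
    refine ⟨∑ j ∈ Finset.Icc (-(m:ℤ)) (m:ℤ),
      (besselMaj j.natAbs lam)^2 / l2normSq unifDisk (fourierBessel lam j), ?_⟩
    rintro y ⟨z, rfl⟩
    apply Finset.sum_le_sum
    intro j _
    rw [div_eq_mul_inv, div_eq_mul_inv]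
    exact mul_le_mul_of_nonneg_right (hC j z z.2) (inv_nonneg.2 (hN0 j))
  have hmem : (1:ℂ) ∈ closedBall (0:ℂ) 1 := by
    rw [mem_closedBall_zero_iff]; norm_num
  have h1 : (∑ j ∈ Finset.Icc (-(m:ℤ)) (m:ℤ),
      ‖fourierBessel lam j (1:ℂ)‖^2 / l2normSq unifDisk (fourierBessel lam j))
      ≤ Kb lam unifDisk m := by
    unfold Kb
    exact le_ciSup hBdd ⟨(1:ℂ), hmem⟩
  have hsubset : Finset.Icc (J₀:ℤ) (m:ℤ) ⊆ Finset.Icc (-(m:ℤ)) (m:ℤ) := by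
    intro j hj
    simp only [Finset.mem_Icc] at *
    omega
  have h2 : (∑ j ∈ Finset.Icc (J₀:ℤ) (m:ℤ),
      ‖fourierBessel lam j (1:ℂ)‖^2 / l2normSq unifDisk (fourierBessel lam j))
      ≤ ∑ j ∈ Finset.Icc (-(m:ℤ)) (m:ℤ),
      ‖fourierBessel lam j (1:ℂ)‖^2 / l2normSq unifDisk (fourierBessel lam j) :=
    Finset.sum_le_sum_of_subset_of_nonneg hsubset (fun j _ _ => hterm_nonneg j 1)
  have h3 : ∀ j ∈ Finset.Icc (J₀:ℤ) (m:ℤ), (((j:ℤ):ℝ)+1)/2 ≤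
      ‖fourierBessel lam j (1:ℂ)‖^2 / l2normSq unifDisk (fourierBessel lam j) := by
    intro j hj
    simp only [Finset.mem_Icc] at hj
    obtain ⟨hj1, hj2⟩ := hj
    have hj0 : (0:ℤ) ≤ j := le_trans (Int.ofNat_nonneg J₀) hj1
    have hjn : ((j.toNat : ℤ)) = j := Int.toNat_of_nonneg hj0
    have hJle : (J₀:ℝ) ≤ ((j.toNat:ℕ):ℝ) := by
      have : (J₀:ℤ) ≤ (j.toNat:ℤ) := by omega
      exact_mod_cast this
    have h5 : lam^2 ≤ (((j.toNat:ℕ):ℝ)+1)/5 := by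
      have hceil : (5:ℝ)*lam^2 ≤ (J₀:ℝ) := Nat.le_ceil _
      linarith
    have := ratio_lb lam hlam j.toNat h5
    rw [← hjn]
    push_cast
    push_cast at this
    linarith
  have h4 := Finset.sum_le_sum h3
  have h5 := sum_lb J₀ m hm
  have h6 : -((J₀:ℝ)^2) + c₁ * (m:ℝ)^2 ≤ (m:ℝ)^2/4 - (J₀:ℝ)^2 := by
    nlinarith [sq_nonneg (m:ℝ)]
  linarith
end
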